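/- arXiv:2106.08666 — 4 statements merged into one kernel-verified Lean document; each statement's English description precedes it below -/
import Mathlib

section
/- Let Q be a quiver of type A_n and let L, E be indecomposable representations of Q over ℂ. Then dim Hom(L,E) · dim Ext¹(L,E) = 0, i.e., Hom(L,E) and Ext¹(L,E) cannot both be nonzero. -/
/-!  Representations of a quiver of type `A_{n+1}`:  vertices `Fin (n+1)`, edges `Fin n`,
where the edge `i` joins the vertices `i` and `i+1` and the orientation function
`o : Fin n → Bool` orients it from `i` to `i+1` (if `o i = true`) or from `i+1` to `i`
(if `o i = false`). -/

/-- Source of the `i`-th arrow. -/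
def ASrc {n : ℕ} (o : Fin n → Bool) (i : Fin n) : Fin (n + 1) :=
  if o i then i.castSucc else i.succ

/-- Target of the `i`-th arrow. -/
def ATgt {n : ℕ} (o : Fin n → Bool) (i : Fin n) : Fin (n + 1) :=
  if o i then i.succ else i.castSucc

/-- A finite-dimensional complex representation of the `A_{n+1}` quiver with orientation `o`. -/
structure ARep (n : ℕ) (o : Fin n → Bool) where
  M : Fin (n + 1) → Type
  [addCommGroup : ∀ v, AddCommGroup (M v)]
  [module : ∀ v, Module ℂ (M v)]
  [finite : ∀ v, FiniteDimensional ℂ (M v)]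
  f : ∀ i : Fin n, M (ASrc o i) →ₗ[ℂ] M (ATgt o i)

attribute [instance] ARep.addCommGroup ARep.module ARep.finite

namespace ARep

variable {n : ℕ} {o : Fin n → Bool}

/-- The space of morphisms `X → Y` of representations, as a submodule of
`∀ v, X.M v →ₗ Y.M v`. -/
def HomSub (X Y : ARep n o) : Submodule ℂ (∀ v, X.M v →ₗ[ℂ] Y.M v) where
  carrier := {h | ∀ i : Fin n, (h (ATgt o i)).comp (X.f i) = (Y.f i).comp (h (ASrc o i))}
  add_mem' := by
    intro a b ha hb i
    simp only [Pi.add_apply, LinearMap.add_comp, LinearMap.comp_add, ha i, hb i]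
  zero_mem' := by
    intro i
    simp
  smul_mem' := by
    intro c a ha i
    simp only [Pi.smul_apply, LinearMap.smul_comp, LinearMap.comp_smul, ha i]

/-- The differential of the standard 2-term complex computing `Hom` (kernel) and `Ext¹`
(cokernel) over the hereditary path algebra. -/
noncomputable def extMap (X Y : ARep n o) :
    (∀ v, X.M v →ₗ[ℂ] Y.M v) →ₗ[ℂ] (∀ i : Fin n, X.M (ASrc o i) →ₗ[ℂ] Y.M (ATgt o i)) where
  toFun h := fun i => (Y.f i).comp (h (ASrc o i)) - (h (ATgt o i)).comp (X.f i)
  map_add' a b := by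
    funext i
    simp only [Pi.add_apply, LinearMap.comp_add, LinearMap.add_comp]
    abel
  map_smul' c a := by
    funext i
    simp only [Pi.smul_apply, LinearMap.comp_smul, LinearMap.smul_comp, smul_sub,
      RingHom.id_apply]

/-- `dim Hom(X,Y)`. -/
noncomputable def dimHom (X Y : ARep n o) : ℕ :=
  Module.finrank ℂ (HomSub X Y)

/-- `dim Ext¹(X,Y)`. -/
noncomputable def dimExt (X Y : ARep n o) : ℕ :=
  Module.finrank ℂ
    ((∀ i : Fin n, X.M (ASrc o i) →ₗ[ℂ] Y.M (ATgt o i)) ⧸ LinearMap.range (extMap X Y))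

/-- A representation is indecomposable iff it is nonzero and its only idempotent
endomorphisms are `0` and the identity. -/
def Indecomposable (X : ARep n o) : Prop :=
  (∃ v, ∃ x : X.M v, x ≠ 0) ∧
  ∀ e : ∀ v, X.M v →ₗ[ℂ] X.M v, e ∈ HomSub X X → (∀ v, (e v).comp (e v) = e v) →
    e = 0 ∨ e = fun _ => LinearMap.id

end ARep



section LA
variable {M M₁ M₂ : Type} [AddCommGroup M] [Module ℂ M]
  [AddCommGroup M₁] [Module ℂ M₁] [AddCommGroup M₂] [Module ℂ M₂]

/-- complement within a subspace -/
lemma exists_compl_within (N W : Submodule ℂ M) (h : N ≤ W) :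
    ∃ C : Submodule ℂ M, C ≤ W ∧ N ⊓ C = ⊥ ∧ N ⊔ C = W := by
  obtain ⟨C', hC'⟩ := Submodule.exists_isCompl (N.comap W.subtype)
  refine ⟨C'.map W.subtype, ?_, ?_, ?_⟩
  · rintro x ⟨y, hy, rfl⟩; exact y.2
  · rw [eq_bot_iff]; rintro x ⟨hxN, ⟨y, hy, rfl⟩⟩
    have : y ∈ N.comap W.subtype ⊓ C' := ⟨hxN, hy⟩
    rw [hC'.inf_eq_bot] at this
    have : y = 0 := (Submodule.mem_bot ℂ).mp this
    simp [this]
  · apply le_antisymm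
    · exact sup_le h (by rintro x ⟨y, hy, rfl⟩; exact y.2)
    · intro x hx
      have : (⟨x, hx⟩ : W) ∈ N.comap W.subtype ⊔ C' := by rw [hC'.sup_eq_top]; trivial
      obtain ⟨y, hy, z, hz, hyz⟩ := Submodule.mem_sup.mp this
      have : x = (y : M) + (z : M) := by
        simpa using (congrArg Subtype.val hyz).symm
      rw [this]
      exact Submodule.add_mem_sup hy ⟨z, hz, rfl⟩

lemma exists_isCompl_ge (W₁ W₂ : Submodule ℂ M) (h : W₁ ⊓ W₂ = ⊥) :
    ∃ C, IsCompl W₁ C ∧ W₂ ≤ C := by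
  obtain ⟨D, hD⟩ := Submodule.exists_isCompl (W₁ ⊔ W₂)
  refine ⟨W₂ ⊔ D, ⟨?_, ?_⟩, le_sup_left⟩
  · rw [disjoint_iff, eq_bot_iff]
    rintro x ⟨hx1, hx2⟩
    obtain ⟨y, hy, z, hz, rfl⟩ := Submodule.mem_sup.mp hx2
    have hzmem : z ∈ (W₁ ⊔ W₂) ⊓ D := by
      constructor
      · have : (y + z) - y ∈ W₁ ⊔ W₂ :=
          Submodule.sub_mem _ (le_sup_left (a := W₁) hx1) (le_sup_right (a := W₁) hy)
        simpa using this
      · exact hz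
    rw [hD.inf_eq_bot] at hzmem
    simp only [Submodule.mem_bot] at hzmem
    subst hzmem
    have : y + 0 ∈ W₁ ⊓ W₂ := ⟨hx1, by simpa using hy⟩
    rw [h] at this; simpa using this
  · rw [codisjoint_iff, ← sup_assoc, hD.sup_eq_top]

lemma exists_isCompl_le (U W : Submodule ℂ M) (h : U ⊔ W = ⊤) :
    ∃ V, IsCompl U V ∧ V ≤ W := by
  obtain ⟨C, hCW, hCi, hCs⟩ := exists_compl_within (U ⊓ W) W inf_le_right
  refine ⟨C, ⟨?_, ?_⟩, hCW⟩
  · rw [disjoint_iff, eq_bot_iff]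
    rintro x ⟨hx1, hx2⟩
    have : x ∈ (U ⊓ W) ⊓ C := ⟨⟨hx1, hCW hx2⟩, hx2⟩
    rw [hCi] at this; exact this
  · rw [codisjoint_iff, eq_top_iff, ← h]
    calc U ⊔ W = U ⊔ ((U ⊓ W) ⊔ C) := by rw [hCs]
    _ ≤ U ⊔ C := by
        apply sup_le (le_sup_left)
        exact sup_le (le_trans inf_le_left le_sup_left) le_sup_right

lemma stepA (g : M₁ →ₗ[ℂ] M₂) (Q P : Submodule ℂ M₂) (hQP : Q ≤ P)
    (U' V' : Submodule ℂ M₁) (hc : IsCompl U' V')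
    (hQ' : Q.comap g ≤ U') (hP' : U' ≤ P.comap g) :
    ∃ U V : Submodule ℂ M₂, IsCompl U V ∧ Q ≤ U ∧ U ≤ P ∧
      U'.map g ≤ U ∧ V'.map g ≤ V := by
  have hdisj : (Q ⊔ U'.map g) ⊓ V'.map g = ⊥ := by
    rw [eq_bot_iff]
    rintro x ⟨hx1, ⟨v', hv', rfl⟩⟩
    obtain ⟨q, hq, gu, ⟨u', hu', rfl⟩, hsum⟩ := Submodule.mem_sup.mp hx1
    have hq' : q = g (v' - u') := by rw [map_sub]; rw [← hsum]; abel
    have : v' - u' ∈ Q.comap g := by rw [Submodule.mem_comap, ← hq']; exact hq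
    have hvU : v' ∈ U' := by
      have := hQ' this
      have : u' + (v' - u') ∈ U' := Submodule.add_mem _ hu' this
      simpa using this
    have : v' ∈ U' ⊓ V' := ⟨hvU, hv'⟩
    rw [hc.inf_eq_bot] at this
    simp only [Submodule.mem_bot] at this
    simp [this]
  obtain ⟨V, hV, hVge⟩ := exists_isCompl_ge (Q ⊔ U'.map g) (V'.map g) hdisj
  refine ⟨Q ⊔ U'.map g, V, hV, le_sup_left, ?_, le_sup_right, hVge⟩
  refine sup_le hQP ?_
  intro x hx
  obtain ⟨u', hu', rfl⟩ := hx
  exact hP' hu'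

lemma stepB (g : M₂ →ₗ[ℂ] M₁) (Q P : Submodule ℂ M₂) (hQP : Q ≤ P)
    (U' V' : Submodule ℂ M₁) (hc : IsCompl U' V')
    (hQ' : Q.map g ≤ U') (hP' : U' ≤ P.map g) :
    ∃ U V : Submodule ℂ M₂, IsCompl U V ∧ Q ≤ U ∧ U ≤ P ∧
      U.map g ≤ U' ∧ V.map g ≤ V' := by
  set U := Q ⊔ (P ⊓ U'.comap g) with hU
  have hcod : U ⊔ V'.comap g = ⊤ := by
    rw [eq_top_iff]
    intro x _
    have : g x ∈ U' ⊔ V' := by rw [hc.sup_eq_top]; trivial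
    obtain ⟨u, hu, v, hv, hsum⟩ := Submodule.mem_sup.mp this
    obtain ⟨p, hp, rfl⟩ := hP' hu
    have hxp : x - p ∈ V'.comap g := by
      rw [Submodule.mem_comap, map_sub]
      have : g x - g p = v := by rw [← hsum]; abel
      rw [this]; exact hv
    have hpU : p ∈ U := by
      apply Submodule.mem_sup_right
      exact ⟨hp, hu⟩
    have : p + (x - p) ∈ U ⊔ V'.comap g :=
      Submodule.add_mem_sup hpU hxp
    simpa using this
  obtain ⟨V, hV, hVle⟩ := exists_isCompl_le U (V'.comap g) hcod
  refine ⟨U, V, hV, le_sup_left, ?_, ?_, ?_⟩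
  · exact sup_le hQP inf_le_left
  · rw [hU, Submodule.map_sup]
    refine sup_le hQ' ?_
    refine le_trans (Submodule.map_mono inf_le_right) ?_
    exact Submodule.map_comap_le g U'
  · exact le_trans (Submodule.map_mono hVle) (Submodule.map_comap_le g V')

lemma comp_eq_zero_of_surj {ψ : M₂ →ₗ[ℂ] M} {φ : M₁ →ₗ[ℂ] M₂}
    (h : ψ.comp φ = 0) (hs : Function.Surjective φ) : ψ = 0 := by
  ext y
  obtain ⟨x, rfl⟩ := hs y
  exact congrFun (congrArg DFunLike.coe h) x

lemma comp_eq_zero_of_inj {ψ : M₁ →ₗ[ℂ] M₂} {φ : M₂ →ₗ[ℂ] M}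
    (h : φ.comp ψ = 0) (hi : Function.Injective φ) : ψ = 0 := by
  ext x
  apply hi
  simpa using congrFun (congrArg DFunLike.coe h) x

end LA

namespace ARep
variable {n : ℕ} {o : Fin n → Bool}

def Supp (X : ARep n o) (v : Fin (n+1)) : Prop := ∃ x : X.M v, x ≠ 0

lemma eq_zero_of_not_supp {X : ARep n o} {v} (h : ¬ X.Supp v) (x : X.M v) : x = 0 := by
  by_contra hx; exact h ⟨x, hx⟩

lemma ASrc_ATgt_val (o : Fin n → Bool) (i : Fin n) :
    ((ASrc o i : ℕ) = i ∧ (ATgt o i : ℕ) = i + 1) ∨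
    ((ASrc o i : ℕ) = i + 1 ∧ (ATgt o i : ℕ) = i) := by
  by_cases h : o i
  · left; simp [ASrc, ATgt, h]
  · right; simp [ASrc, ATgt, h]

lemma indec_no_decomp (X : ARep n o) (hX : X.Indecomposable)
    (U V : ∀ v, Submodule ℂ (X.M v))
    (hc : ∀ v, IsCompl (U v) (V v))
    (hU : ∀ i : Fin n, (U (ASrc o i)).map (X.f i) ≤ U (ATgt o i))
    (hV : ∀ i : Fin n, (V (ASrc o i)).map (X.f i) ≤ V (ATgt o i))
    (hUne : ∃ v, ∃ x ∈ U v, x ≠ 0) (hVne : ∃ v, ∃ x ∈ V v, x ≠ 0) : False := by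
  classical
  set e : ∀ v, X.M v →ₗ[ℂ] X.M v :=
    fun v => (U v).subtype.comp ((U v).projectionOnto (V v) (hc v)) with he
  have heU : ∀ v x, x ∈ U v → e v x = x := by
    intro v x hx
    simp [he, Submodule.projectionOnto_apply_left (hc v) ⟨x, hx⟩]
  have heV : ∀ v x, x ∈ V v → e v x = 0 := by
    intro v x hx
    simp [he, Submodule.projectionOnto_apply_right (hc v) ⟨x, hx⟩]
  have hmem : e ∈ HomSub X X := by
    intro i
    ext x
    have hx : x ∈ U (ASrc o i) ⊔ V (ASrc o i) := by rw [(hc _).sup_eq_top]; trivial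
    obtain ⟨u, hu, v, hv, rfl⟩ := Submodule.mem_sup.mp hx
    have h1 : X.f i u ∈ U (ATgt o i) := hU i ⟨u, hu, rfl⟩
    have h2 : X.f i v ∈ V (ATgt o i) := hV i ⟨v, hv, rfl⟩
    simp only [LinearMap.comp_apply, map_add]
    rw [heU _ _ hu, heV _ _ hv, heU _ _ h1, heV _ _ h2]
    simp
  have hid : ∀ v, (e v).comp (e v) = e v := by
    intro v; ext x
    simp only [LinearMap.comp_apply]
    have hmem2 : e v x ∈ U v := by
      simp only [he, LinearMap.comp_apply, Submodule.subtype_apply]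
      exact Submodule.coe_mem _
    rw [heU _ _ hmem2]
  rcases hX.2 e hmem hid with h0 | h1
  · obtain ⟨v, x, hx, hxne⟩ := hUne
    have hex := heU v x hx
    rw [h0] at hex
    exact hxne (by simpa using hex.symm)
  · obtain ⟨v, x, hx, hxne⟩ := hVne
    have hex := heV v x hx
    rw [h1] at hex
    simp only [LinearMap.id_coe, id_eq] at hex
    exact hxne hex

lemma supp_convex (X : ARep n o) (hX : X.Indecomposable) :
    ∀ a b c : Fin (n+1), (a:ℕ) ≤ (b:ℕ) → (b:ℕ) ≤ (c:ℕ) → X.Supp a → X.Supp c → X.Supp b := by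
  classical
  intro a b c hab hbc ha hc
  by_contra hb
  have hab' : (a:ℕ) < (b:ℕ) := by
    rcases lt_or_eq_of_le hab with h | h
    · exact h
    · exact absurd (show X.Supp b from (Fin.ext h : a = b) ▸ ha) hb
  have hbc' : (b:ℕ) < (c:ℕ) := by
    rcases lt_or_eq_of_le hbc with h | h
    · exact h
    · exact absurd (show X.Supp b from (Fin.ext h : b = c).symm ▸ hc) hb
  apply indec_no_decomp X hX
    (fun v => if (v:ℕ) < (b:ℕ) then ⊤ else ⊥)
    (fun v => if (v:ℕ) < (b:ℕ) then ⊥ else ⊤)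
  · intro v
    by_cases h1 : ((v:ℕ) < (b:ℕ))
    · rw [if_pos h1, if_pos h1]; exact isCompl_top_bot
    · rw [if_neg h1, if_neg h1]; exact isCompl_bot_top
  · intro i
    by_cases h1 : ((ASrc o i : ℕ) < (b:ℕ)) <;> by_cases h2 : ((ATgt o i : ℕ) < (b:ℕ))
    · rw [if_pos h1, if_pos h2]; exact le_top
    · rw [if_pos h1, if_neg h2]
      rcases ASrc_ATgt_val o i with ⟨hs, ht⟩ | ⟨hs, ht⟩
      · rintro x ⟨y, hy, rfl⟩
        have hnt : ¬ X.Supp (ATgt o i) := by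
          have he : ATgt o i = b := Fin.ext (by omega)
          rw [he]; exact hb
        simp [eq_zero_of_not_supp hnt (X.f i y)]
      · exfalso; omega
    · rw [if_neg h1, if_pos h2]; exact le_top
    · rw [if_neg h1, if_neg h2, Submodule.map_bot]
  · intro i
    by_cases h1 : ((ASrc o i : ℕ) < (b:ℕ)) <;> by_cases h2 : ((ATgt o i : ℕ) < (b:ℕ))
    · rw [if_pos h1, if_pos h2, Submodule.map_bot]
    · rw [if_pos h1, if_neg h2, Submodule.map_bot]; exact bot_le
    · rw [if_neg h1, if_pos h2]
      rcases ASrc_ATgt_val o i with ⟨hs, ht⟩ | ⟨hs, ht⟩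
      · exfalso; omega
      · rintro x ⟨y, hy, rfl⟩
        have hns : ¬ X.Supp (ASrc o i) := by
          have he : ASrc o i = b := Fin.ext (by omega)
          rw [he]; exact hb
        rw [eq_zero_of_not_supp hns y]
        simp
    · rw [if_neg h1, if_neg h2]; exact le_top
  · obtain ⟨x, hx⟩ := ha
    exact ⟨a, x, by simp [hab'], hx⟩
  · obtain ⟨x, hx⟩ := hc
    exact ⟨c, x, by simp [not_lt_of_gt hbc', Nat.not_lt.mpr (le_of_lt hbc')], hx⟩

end ARep

namespace ARep
variable {n : ℕ} {o : Fin n → Bool}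

lemma splitR_step (X : ARep n o) (m : ℕ) (hm : m + 1 ≤ n)
    (s t : Fin (n+1)) (g : X.M s →ₗ[ℂ] X.M t)
    (hst : ((s:ℕ) = m ∧ (t:ℕ) = m + 1) ∨ ((s:ℕ) = m + 1 ∧ (t:ℕ) = m))
    (IH : ∀ P Q : Submodule ℂ (X.M ⟨m, by omega⟩), Q ≤ P →
      ∃ U V : ∀ v, Submodule ℂ (X.M v),
        (∀ v : Fin (n+1), (v:ℕ) ≤ m → IsCompl (U v) (V v)) ∧
        Q ≤ U ⟨m, by omega⟩ ∧ U ⟨m, by omega⟩ ≤ P ∧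
        (∀ v : Fin (n+1), m < (v:ℕ) → U v = ⊥ ∧ V v = ⊤) ∧
        (∀ i : Fin n, (i:ℕ) < m →
          (U (ASrc o i)).map (X.f i) ≤ U (ATgt o i) ∧ (V (ASrc o i)).map (X.f i) ≤ V (ATgt o i)))
    (P Q : Submodule ℂ (X.M ⟨m+1, by omega⟩)) (hQP : Q ≤ P) :
    ∃ U V : ∀ v, Submodule ℂ (X.M v),
      (∀ v : Fin (n+1), (v:ℕ) ≤ m + 1 → IsCompl (U v) (V v)) ∧
      Q ≤ U ⟨m+1, by omega⟩ ∧ U ⟨m+1, by omega⟩ ≤ P ∧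
      (∀ v : Fin (n+1), m + 1 < (v:ℕ) → U v = ⊥ ∧ V v = ⊤) ∧
      (∀ i : Fin n, (i:ℕ) < m →
        (U (ASrc o i)).map (X.f i) ≤ U (ATgt o i) ∧ (V (ASrc o i)).map (X.f i) ≤ V (ATgt o i)) ∧
      ((U s).map g ≤ U t ∧ (V s).map g ≤ V t) := by
  classical
  have hmm : m < n + 1 := by omega
  have hmm1 : m + 1 < n + 1 := by omega
  rcases hst with ⟨hs, ht⟩ | ⟨hs, ht⟩
  · -- arrow from m to m+1
    have hseq : s = (⟨m, hmm⟩ : Fin (n+1)) := Fin.ext hs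
    have hteq : t = (⟨m+1, hmm1⟩ : Fin (n+1)) := Fin.ext ht
    subst hseq; subst hteq
    obtain ⟨U', V', hc', hQ', hP', hdef', hinv'⟩ :=
      IH (P.comap g) (Q.comap g) (Submodule.comap_mono hQP)
    obtain ⟨Unew, Vnew, hcN, hQN, hPN, hmapU, hmapV⟩ :=
      stepA g Q P hQP (U' ⟨m, hmm⟩) (V' ⟨m, hmm⟩) (hc' ⟨m, hmm⟩ (by simp)) hQ' hP'
    refine ⟨Function.update U' ⟨m+1, hmm1⟩ Unew, Function.update V' ⟨m+1, hmm1⟩ Vnew,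
      ?_, ?_, ?_, ?_, ?_, ?_, ?_⟩
    · intro v hv
      rcases Nat.lt_succ_iff_lt_or_eq.mp (Nat.lt_succ_of_le hv) with h | h
      · have hne : v ≠ ⟨m+1, hmm1⟩ := by intro he; subst he; simp at h <;> omega
        rw [Function.update_of_ne hne, Function.update_of_ne hne]
        exact hc' v (by omega)
      · have he : v = ⟨m+1, hmm1⟩ := Fin.ext h
        subst he
        rw [Function.update_self, Function.update_self]
        exact hcN
    · rw [Function.update_self]; exact hQN
    · rw [Function.update_self]; exact hPN
    · intro v hv
      have hne : v ≠ ⟨m+1, hmm1⟩ := by intro he; subst he; simp at hv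
      rw [Function.update_of_ne hne, Function.update_of_ne hne]
      exact hdef' v (by omega)
    · intro i hi
      rcases ASrc_ATgt_val o i with ⟨h1, h2⟩ | ⟨h1, h2⟩ <;>
      · have hne1 : ASrc o i ≠ ⟨m+1, hmm1⟩ := by
          intro he; rw [he] at h1; simp at h1 <;> omega
        have hne2 : ATgt o i ≠ ⟨m+1, hmm1⟩ := by
          intro he; rw [he] at h2; simp at h2 <;> omega
        rw [Function.update_of_ne hne1, Function.update_of_ne hne2,
          Function.update_of_ne hne1, Function.update_of_ne hne2]
        exact hinv' i hi
    · have hne : (⟨m, hmm⟩ : Fin (n+1)) ≠ ⟨m+1, hmm1⟩ := by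
        intro he; simp at he
      rw [Function.update_of_ne hne, Function.update_self]
      exact hmapU
    · have hne : (⟨m, hmm⟩ : Fin (n+1)) ≠ ⟨m+1, hmm1⟩ := by
        intro he; simp at he
      rw [Function.update_of_ne hne, Function.update_self]
      exact hmapV
  · -- arrow from m+1 to m
    have hseq : s = (⟨m+1, hmm1⟩ : Fin (n+1)) := Fin.ext hs
    have hteq : t = (⟨m, hmm⟩ : Fin (n+1)) := Fin.ext ht
    subst hseq; subst hteq
    obtain ⟨U', V', hc', hQ', hP', hdef', hinv'⟩ :=
      IH (P.map g) (Q.map g) (Submodule.map_mono hQP)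
    obtain ⟨Unew, Vnew, hcN, hQN, hPN, hmapU, hmapV⟩ :=
      stepB g Q P hQP (U' ⟨m, hmm⟩) (V' ⟨m, hmm⟩) (hc' ⟨m, hmm⟩ (by simp)) hQ' hP'
    refine ⟨Function.update U' ⟨m+1, hmm1⟩ Unew, Function.update V' ⟨m+1, hmm1⟩ Vnew,
      ?_, ?_, ?_, ?_, ?_, ?_, ?_⟩
    · intro v hv
      rcases Nat.lt_succ_iff_lt_or_eq.mp (Nat.lt_succ_of_le hv) with h | h
      · have hne : v ≠ ⟨m+1, hmm1⟩ := by intro he; subst he; simp at h <;> omega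
        rw [Function.update_of_ne hne, Function.update_of_ne hne]
        exact hc' v (by omega)
      · have he : v = ⟨m+1, hmm1⟩ := Fin.ext h
        subst he
        rw [Function.update_self, Function.update_self]
        exact hcN
    · rw [Function.update_self]; exact hQN
    · rw [Function.update_self]; exact hPN
    · intro v hv
      have hne : v ≠ ⟨m+1, hmm1⟩ := by intro he; subst he; simp at hv
      rw [Function.update_of_ne hne, Function.update_of_ne hne]
      exact hdef' v (by omega)
    · intro i hi
      rcases ASrc_ATgt_val o i with ⟨h1, h2⟩ | ⟨h1, h2⟩ <;>
      · have hne1 : ASrc o i ≠ ⟨m+1, hmm1⟩ := by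
          intro he; rw [he] at h1; simp at h1 <;> omega
        have hne2 : ATgt o i ≠ ⟨m+1, hmm1⟩ := by
          intro he; rw [he] at h2; simp at h2 <;> omega
        rw [Function.update_of_ne hne1, Function.update_of_ne hne2,
          Function.update_of_ne hne1, Function.update_of_ne hne2]
        exact hinv' i hi
    · have hne : (⟨m, hmm⟩ : Fin (n+1)) ≠ ⟨m+1, hmm1⟩ := by
        intro he; simp at he
      rw [Function.update_self, Function.update_of_ne hne]
      exact hmapU
    · have hne : (⟨m, hmm⟩ : Fin (n+1)) ≠ ⟨m+1, hmm1⟩ := by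
        intro he; simp at he
      rw [Function.update_self, Function.update_of_ne hne]
      exact hmapV

lemma splitR (X : ARep n o) :
    ∀ m : ℕ, ∀ hm : m ≤ n, ∀ P Q : Submodule ℂ (X.M ⟨m, by omega⟩), Q ≤ P →
    ∃ U V : ∀ v, Submodule ℂ (X.M v),
      (∀ v : Fin (n+1), (v:ℕ) ≤ m → IsCompl (U v) (V v)) ∧
      Q ≤ U ⟨m, by omega⟩ ∧ U ⟨m, by omega⟩ ≤ P ∧
      (∀ v : Fin (n+1), m < (v:ℕ) → U v = ⊥ ∧ V v = ⊤) ∧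
      (∀ i : Fin n, (i:ℕ) < m →
        (U (ASrc o i)).map (X.f i) ≤ U (ATgt o i) ∧ (V (ASrc o i)).map (X.f i) ≤ V (ATgt o i)) := by
  classical
  intro m
  induction m with
  | zero =>
    intro hm P Q hQP
    have h0 : 0 < n + 1 := by omega
    obtain ⟨Pc, hPc⟩ := Submodule.exists_isCompl P
    refine ⟨Function.update (fun v => ⊥) ⟨0, h0⟩ P,
      Function.update (fun v => ⊤) ⟨0, h0⟩ Pc, ?_, ?_, ?_, ?_, ?_⟩
    · intro v hv
      have he : v = ⟨0, h0⟩ := Fin.ext (show (v:ℕ) = 0 by omega)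
      subst he
      rw [Function.update_self, Function.update_self]
      exact hPc
    · rw [Function.update_self]; exact hQP
    · rw [Function.update_self]
    · intro v hv
      have hne : v ≠ ⟨0, h0⟩ := by intro he; subst he; simp at hv
      rw [Function.update_of_ne hne, Function.update_of_ne hne]
      exact ⟨rfl, rfl⟩
    · intro i hi; omega
  | succ m ih =>
    intro hm P Q hQP
    have hmn : m < n := by omega
    obtain ⟨U, V, h1, h2, h3, h4, h5, h6⟩ :=
      splitR_step X m (by omega) (ASrc o ⟨m, hmn⟩) (ATgt o ⟨m, hmn⟩) (X.f ⟨m, hmn⟩)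
        (by simpa using ASrc_ATgt_val o ⟨m, hmn⟩)
        (fun P' Q' h' => ih (by omega) P' Q' h') P Q hQP
    refine ⟨U, V, h1, h2, h3, h4, ?_⟩
    intro i hi
    rcases Nat.lt_succ_iff_lt_or_eq.mp hi with h | h
    · exact h5 i h
    · have he : i = ⟨m, hmn⟩ := Fin.ext h
      subst he
      exact h6

lemma splitL_step (X : ARep n o) (m : ℕ) (hm : m + 1 ≤ n)
    (s t : Fin (n+1)) (g : X.M s →ₗ[ℂ] X.M t)
    (hst : ((s:ℕ) = m ∧ (t:ℕ) = m + 1) ∨ ((s:ℕ) = m + 1 ∧ (t:ℕ) = m))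
    (IH : ∀ P Q : Submodule ℂ (X.M ⟨m+1, by omega⟩), Q ≤ P →
      ∃ U V : ∀ v, Submodule ℂ (X.M v),
        (∀ v : Fin (n+1), m+1 ≤ (v:ℕ) → IsCompl (U v) (V v)) ∧
        Q ≤ U ⟨m+1, by omega⟩ ∧ U ⟨m+1, by omega⟩ ≤ P ∧
        (∀ v : Fin (n+1), (v:ℕ) < m+1 → U v = ⊥ ∧ V v = ⊤) ∧
        (∀ i : Fin n, m+1 ≤ (i:ℕ) →
          (U (ASrc o i)).map (X.f i) ≤ U (ATgt o i) ∧ (V (ASrc o i)).map (X.f i) ≤ V (ATgt o i)))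
    (P Q : Submodule ℂ (X.M ⟨m, by omega⟩)) (hQP : Q ≤ P) :
    ∃ U V : ∀ v, Submodule ℂ (X.M v),
      (∀ v : Fin (n+1), m ≤ (v:ℕ) → IsCompl (U v) (V v)) ∧
      Q ≤ U ⟨m, by omega⟩ ∧ U ⟨m, by omega⟩ ≤ P ∧
      (∀ v : Fin (n+1), (v:ℕ) < m → U v = ⊥ ∧ V v = ⊤) ∧
      (∀ i : Fin n, m+1 ≤ (i:ℕ) →
        (U (ASrc o i)).map (X.f i) ≤ U (ATgt o i) ∧ (V (ASrc o i)).map (X.f i) ≤ V (ATgt o i)) ∧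
      ((U s).map g ≤ U t ∧ (V s).map g ≤ V t) := by
  classical
  have hmm : m < n + 1 := by omega
  have hmm1 : m + 1 < n + 1 := by omega
  rcases hst with ⟨hs, ht⟩ | ⟨hs, ht⟩
  · -- arrow from m (new vertex) to m+1 (old region) : stepB shape
    have hseq : s = (⟨m, hmm⟩ : Fin (n+1)) := Fin.ext hs
    have hteq : t = (⟨m+1, hmm1⟩ : Fin (n+1)) := Fin.ext ht
    subst hseq; subst hteq
    obtain ⟨U', V', hc', hQ', hP', hdef', hinv'⟩ :=
      IH (P.map g) (Q.map g) (Submodule.map_mono hQP)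
    obtain ⟨Unew, Vnew, hcN, hQN, hPN, hmapU, hmapV⟩ :=
      stepB g Q P hQP (U' ⟨m+1, hmm1⟩) (V' ⟨m+1, hmm1⟩) (hc' ⟨m+1, hmm1⟩ (by simp)) hQ' hP'
    refine ⟨Function.update U' ⟨m, hmm⟩ Unew, Function.update V' ⟨m, hmm⟩ Vnew,
      ?_, ?_, ?_, ?_, ?_, ?_, ?_⟩
    · intro v hv
      rcases eq_or_lt_of_le hv with h | h
      · have he : v = ⟨m, hmm⟩ := Fin.ext h.symm
        subst he
        rw [Function.update_self, Function.update_self]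
        exact hcN
      · have hne : v ≠ ⟨m, hmm⟩ := by intro he; subst he; simp at h
        rw [Function.update_of_ne hne, Function.update_of_ne hne]
        exact hc' v (by omega)
    · rw [Function.update_self]; exact hQN
    · rw [Function.update_self]; exact hPN
    · intro v hv
      have hne : v ≠ ⟨m, hmm⟩ := by intro he; subst he; simp at hv <;> omega
      rw [Function.update_of_ne hne, Function.update_of_ne hne]
      exact hdef' v (by omega)
    · intro i hi
      rcases ASrc_ATgt_val o i with ⟨h1, h2⟩ | ⟨h1, h2⟩ <;>
      · have hne1 : ASrc o i ≠ ⟨m, hmm⟩ := by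
          intro he; rw [he] at h1; simp at h1 <;> omega
        have hne2 : ATgt o i ≠ ⟨m, hmm⟩ := by
          intro he; rw [he] at h2; simp at h2 <;> omega
        rw [Function.update_of_ne hne1, Function.update_of_ne hne2,
          Function.update_of_ne hne1, Function.update_of_ne hne2]
        exact hinv' i hi
    · have hne : (⟨m+1, hmm1⟩ : Fin (n+1)) ≠ ⟨m, hmm⟩ := by
        intro he; simp at he
      rw [Function.update_self, Function.update_of_ne hne]
      exact hmapU
    · have hne : (⟨m+1, hmm1⟩ : Fin (n+1)) ≠ ⟨m, hmm⟩ := by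
        intro he; simp at he
      rw [Function.update_self, Function.update_of_ne hne]
      exact hmapV
  · -- arrow from m+1 (old region) to m (new vertex) : stepA shape
    have hseq : s = (⟨m+1, hmm1⟩ : Fin (n+1)) := Fin.ext hs
    have hteq : t = (⟨m, hmm⟩ : Fin (n+1)) := Fin.ext ht
    subst hseq; subst hteq
    obtain ⟨U', V', hc', hQ', hP', hdef', hinv'⟩ :=
      IH (P.comap g) (Q.comap g) (Submodule.comap_mono hQP)
    obtain ⟨Unew, Vnew, hcN, hQN, hPN, hmapU, hmapV⟩ :=
      stepA g Q P hQP (U' ⟨m+1, hmm1⟩) (V' ⟨m+1, hmm1⟩) (hc' ⟨m+1, hmm1⟩ (by simp)) hQ' hP'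
    refine ⟨Function.update U' ⟨m, hmm⟩ Unew, Function.update V' ⟨m, hmm⟩ Vnew,
      ?_, ?_, ?_, ?_, ?_, ?_, ?_⟩
    · intro v hv
      rcases eq_or_lt_of_le hv with h | h
      · have he : v = ⟨m, hmm⟩ := Fin.ext h.symm
        subst he
        rw [Function.update_self, Function.update_self]
        exact hcN
      · have hne : v ≠ ⟨m, hmm⟩ := by intro he; subst he; simp at h
        rw [Function.update_of_ne hne, Function.update_of_ne hne]
        exact hc' v (by omega)
    · rw [Function.update_self]; exact hQN
    · rw [Function.update_self]; exact hPN
    · intro v hv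
      have hne : v ≠ ⟨m, hmm⟩ := by intro he; subst he; simp at hv <;> omega
      rw [Function.update_of_ne hne, Function.update_of_ne hne]
      exact hdef' v (by omega)
    · intro i hi
      rcases ASrc_ATgt_val o i with ⟨h1, h2⟩ | ⟨h1, h2⟩ <;>
      · have hne1 : ASrc o i ≠ ⟨m, hmm⟩ := by
          intro he; rw [he] at h1; simp at h1 <;> omega
        have hne2 : ATgt o i ≠ ⟨m, hmm⟩ := by
          intro he; rw [he] at h2; simp at h2 <;> omega
        rw [Function.update_of_ne hne1, Function.update_of_ne hne2,
          Function.update_of_ne hne1, Function.update_of_ne hne2]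
        exact hinv' i hi
    · have hne : (⟨m+1, hmm1⟩ : Fin (n+1)) ≠ ⟨m, hmm⟩ := by
        intro he; simp at he
      rw [Function.update_of_ne hne, Function.update_self]
      exact hmapU
    · have hne : (⟨m+1, hmm1⟩ : Fin (n+1)) ≠ ⟨m, hmm⟩ := by
        intro he; simp at he
      rw [Function.update_of_ne hne, Function.update_self]
      exact hmapV

lemma splitL (X : ARep n o) :
    ∀ d m : ℕ, ∀ hd : m + d = n, ∀ P Q : Submodule ℂ (X.M ⟨m, by omega⟩), Q ≤ P →
    ∃ U V : ∀ v, Submodule ℂ (X.M v),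
      (∀ v : Fin (n+1), m ≤ (v:ℕ) → IsCompl (U v) (V v)) ∧
      Q ≤ U ⟨m, by omega⟩ ∧ U ⟨m, by omega⟩ ≤ P ∧
      (∀ v : Fin (n+1), (v:ℕ) < m → U v = ⊥ ∧ V v = ⊤) ∧
      (∀ i : Fin n, m ≤ (i:ℕ) →
        (U (ASrc o i)).map (X.f i) ≤ U (ATgt o i) ∧ (V (ASrc o i)).map (X.f i) ≤ V (ATgt o i)) := by
  classical
  intro d
  induction d with
  | zero =>
    intro m hd P Q hQP
    have h0 : m < n + 1 := by omega
    obtain ⟨Pc, hPc⟩ := Submodule.exists_isCompl P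
    refine ⟨Function.update (fun v => ⊥) ⟨m, h0⟩ P,
      Function.update (fun v => ⊤) ⟨m, h0⟩ Pc, ?_, ?_, ?_, ?_, ?_⟩
    · intro v hv
      have he : v = ⟨m, h0⟩ := Fin.ext (show (v:ℕ) = m by omega)
      subst he
      rw [Function.update_self, Function.update_self]
      exact hPc
    · rw [Function.update_self]; exact hQP
    · rw [Function.update_self]
    · intro v hv
      have hne : v ≠ ⟨m, h0⟩ := by intro he; subst he; simp at hv <;> omega
      rw [Function.update_of_ne hne, Function.update_of_ne hne]
      exact ⟨rfl, rfl⟩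
    · intro i hi
      exact absurd i.isLt (by omega)
  | succ d ih =>
    intro m hd P Q hQP
    have hmn : m < n := by omega
    obtain ⟨U, V, h1, h2, h3, h4, h5, h6⟩ :=
      splitL_step X m (by omega) (ASrc o ⟨m, hmn⟩) (ATgt o ⟨m, hmn⟩) (X.f ⟨m, hmn⟩)
        (by simpa using ASrc_ATgt_val o ⟨m, hmn⟩)
        (fun P' Q' h' => ih (m+1) (by omega) P' Q' h') P Q hQP
    refine ⟨U, V, h1, h2, h3, h4, ?_⟩
    intro i hi
    rcases eq_or_lt_of_le hi with h | h
    · have he : i = ⟨m, hmn⟩ := Fin.ext h.symm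
      subst he
      exact h6
    · exact h5 i (by omega)

end ARep

namespace ARep
variable {n : ℕ} {o : Fin n → Bool}

lemma decomp_of_bad_edge (X : ARep n o) (i : Fin n)
    (s t : Fin (n+1)) (g : X.M s →ₗ[ℂ] X.M t)
    (hst : ((s:ℕ) = (i:ℕ) ∧ (t:ℕ) = (i:ℕ) + 1) ∨ ((s:ℕ) = (i:ℕ) + 1 ∧ (t:ℕ) = (i:ℕ)))
    (hsupps : X.Supp s) (hsuppt : X.Supp t) (hbij : ¬ Function.Bijective g) :
    ∃ U V : ∀ v, Submodule ℂ (X.M v),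
      (∀ v, IsCompl (U v) (V v)) ∧
      (∀ i' : Fin n, (i':ℕ) ≠ (i:ℕ) →
        (U (ASrc o i')).map (X.f i') ≤ U (ATgt o i') ∧
        (V (ASrc o i')).map (X.f i') ≤ V (ATgt o i')) ∧
      ((U s).map g ≤ U t ∧ (V s).map g ≤ V t) ∧
      (∃ v, ∃ x ∈ U v, x ≠ 0) ∧ (∃ v, ∃ x ∈ V v, x ≠ 0) := by
  classical
  have hii : (i:ℕ) < n + 1 := by omega
  have hii1 : (i:ℕ) + 1 < n + 1 := by have := i.isLt; omega
  have hin : (i:ℕ) < n := i.isLt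
  rcases hst with ⟨hs, ht⟩ | ⟨hs, ht⟩
  · -- g : M i → M (i+1)
    have hseq : s = (⟨(i:ℕ), hii⟩ : Fin (n+1)) := Fin.ext hs
    have hteq : t = (⟨(i:ℕ)+1, hii1⟩ : Fin (n+1)) := Fin.ext ht
    subst hseq; subst hteq
    by_cases hinj : Function.Injective g
    · -- injective, not surjective : splitL at i+1 with range g
      have hsurj : ¬ Function.Surjective g := fun h => hbij ⟨hinj, h⟩
      obtain ⟨U, V, hc, hQ, hP, hdef, hinv⟩ :=
        splitL X (n - ((i:ℕ)+1)) ((i:ℕ)+1) (by omega)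
          (LinearMap.range g) (LinearMap.range g) le_rfl
      refine ⟨fun v => if (v:ℕ) ≤ (i:ℕ) then ⊤ else U v,
              fun v => if (v:ℕ) ≤ (i:ℕ) then ⊥ else V v, ?_, ?_, ?_, ?_, ?_⟩
      · intro v
        by_cases hv : (v:ℕ) ≤ (i:ℕ)
        · beta_reduce; rw [if_pos hv, if_pos hv]; exact isCompl_top_bot
        · beta_reduce; rw [if_neg hv, if_neg hv]; exact hc v (by omega)
      · intro i' hne
        rcases ASrc_ATgt_val o i' with ⟨h1, h2⟩ | ⟨h1, h2⟩ <;>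
        · by_cases hlt : (i':ℕ) < (i:ℕ)
          · constructor
            · beta_reduce; rw [if_pos (by omega), if_pos (by omega)]; exact le_top
            · beta_reduce; rw [if_pos (by omega), if_pos (by omega), Submodule.map_bot]
          · have hgt : (i:ℕ) < (i':ℕ) := by omega
            constructor
            · beta_reduce; rw [if_neg (by omega), if_neg (by omega)]
              exact (hinv i' (by omega)).1
            · beta_reduce; rw [if_neg (by omega), if_neg (by omega)]
              exact (hinv i' (by omega)).2
      · have hv1 : ((⟨(i:ℕ), hii⟩ : Fin (n+1)) : ℕ) = (i:ℕ) := rfl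
        have hv2 : ((⟨(i:ℕ)+1, hii1⟩ : Fin (n+1)) : ℕ) = (i:ℕ)+1 := rfl
        constructor
        · beta_reduce; rw [if_pos (by omega), if_neg (by omega), Submodule.map_top]
          exact hQ
        · beta_reduce; rw [if_pos (by omega), Submodule.map_bot]; exact bot_le
      · obtain ⟨x, hx⟩ := hsupps
        exact ⟨⟨(i:ℕ), hii⟩, x, by beta_reduce; rw [if_pos (le_refl _)]; trivial, hx⟩
      · have hVne : V ⟨(i:ℕ)+1, hii1⟩ ≠ ⊥ := by
          intro hbot
          have hcod := (hc ⟨(i:ℕ)+1, hii1⟩ (le_refl _)).codisjoint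
          rw [hbot, codisjoint_iff, sup_bot_eq] at hcod
          rw [hcod] at hP
          have : LinearMap.range g = ⊤ := top_le_iff.mp hP
          exact hsurj (LinearMap.range_eq_top.mp this)
        obtain ⟨x, hx, hxne⟩ := (Submodule.ne_bot_iff _).mp hVne
        exact ⟨⟨(i:ℕ)+1, hii1⟩, x, by beta_reduce; rw [if_neg (by omega)]; exact hx, hxne⟩
    · -- not injective : splitR at i with ker g
      obtain ⟨U, V, hc, hQ, hP, hdef, hinv⟩ :=
        splitR X (i:ℕ) (le_of_lt hin) (LinearMap.ker g) (LinearMap.ker g) le_rfl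
      refine ⟨U, V, ?_, ?_, ?_, ?_, ?_⟩
      · intro v
        by_cases hv : (v:ℕ) ≤ (i:ℕ)
        · exact hc v hv
        · rw [(hdef v (by omega)).1, (hdef v (by omega)).2]; exact isCompl_bot_top
      · intro i' hne
        rcases ASrc_ATgt_val o i' with ⟨h1, h2⟩ | ⟨h1, h2⟩ <;>
        · by_cases hlt : (i':ℕ) < (i:ℕ)
          · exact hinv i' hlt
          · have hgt : (i:ℕ) < (i':ℕ) := by omega
            constructor
            · rw [(hdef (ASrc o i') (by omega)).1, Submodule.map_bot]
              exact bot_le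
            · rw [(hdef (ATgt o i') (by omega)).2]; exact le_top
      · constructor
        · rw [(hdef ⟨(i:ℕ)+1, hii1⟩ (by simp)).1]
          rintro x ⟨y, hy, rfl⟩
          have : y ∈ LinearMap.ker g := hP hy
          simpa using this
        · rw [(hdef ⟨(i:ℕ)+1, hii1⟩ (by simp)).2]; exact le_top
      · have hker : LinearMap.ker g ≠ ⊥ := by rwa [Ne, LinearMap.ker_eq_bot]
        obtain ⟨x, hx, hxne⟩ := (Submodule.ne_bot_iff _).mp hker
        exact ⟨⟨(i:ℕ), hii⟩, x, hQ hx, hxne⟩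
      · obtain ⟨x, hx⟩ := hsuppt
        exact ⟨⟨(i:ℕ)+1, hii1⟩, x, by rw [(hdef _ (by simp)).2]; trivial, hx⟩
  · -- g : M (i+1) → M i
    have hseq : s = (⟨(i:ℕ)+1, hii1⟩ : Fin (n+1)) := Fin.ext hs
    have hteq : t = (⟨(i:ℕ), hii⟩ : Fin (n+1)) := Fin.ext ht
    subst hseq; subst hteq
    by_cases hinj : Function.Injective g
    · -- injective, not surjective : splitR at i with range g
      have hsurj : ¬ Function.Surjective g := fun h => hbij ⟨hinj, h⟩
      obtain ⟨U, V, hc, hQ, hP, hdef, hinv⟩ :=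
        splitR X (i:ℕ) (le_of_lt hin) (LinearMap.range g) (LinearMap.range g) le_rfl
      refine ⟨fun v => if (v:ℕ) ≤ (i:ℕ) then U v else ⊤,
              fun v => if (v:ℕ) ≤ (i:ℕ) then V v else ⊥, ?_, ?_, ?_, ?_, ?_⟩
      · intro v
        by_cases hv : (v:ℕ) ≤ (i:ℕ)
        · beta_reduce; rw [if_pos hv, if_pos hv]; exact hc v hv
        · beta_reduce; rw [if_neg hv, if_neg hv]; exact isCompl_top_bot
      · intro i' hne
        rcases ASrc_ATgt_val o i' with ⟨h1, h2⟩ | ⟨h1, h2⟩ <;>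
        · by_cases hlt : (i':ℕ) < (i:ℕ)
          · constructor
            · beta_reduce; rw [if_pos (by omega), if_pos (by omega)]
              exact (hinv i' (by omega)).1
            · beta_reduce; rw [if_pos (by omega), if_pos (by omega)]
              exact (hinv i' (by omega)).2
          · have hgt : (i:ℕ) < (i':ℕ) := by omega
            constructor
            · beta_reduce; rw [if_neg (by omega), if_neg (by omega)]; exact le_top
            · beta_reduce; rw [if_neg (by omega), if_neg (by omega), Submodule.map_bot]
      · have hv1 : ((⟨(i:ℕ), hii⟩ : Fin (n+1)) : ℕ) = (i:ℕ) := rfl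
        have hv2 : ((⟨(i:ℕ)+1, hii1⟩ : Fin (n+1)) : ℕ) = (i:ℕ)+1 := rfl
        constructor
        · beta_reduce; rw [if_neg (by omega), if_pos (by omega), Submodule.map_top]
          exact hQ
        · beta_reduce; rw [if_neg (by omega), Submodule.map_bot]; exact bot_le
      · obtain ⟨x, hx⟩ := hsupps
        exact ⟨⟨(i:ℕ)+1, hii1⟩, x, by beta_reduce; rw [if_neg (by omega)]; trivial, hx⟩
      · have hVne : V ⟨(i:ℕ), hii⟩ ≠ ⊥ := by
          intro hbot
          have hcod := (hc ⟨(i:ℕ), hii⟩ (le_refl _)).codisjoint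
          rw [hbot, codisjoint_iff, sup_bot_eq] at hcod
          rw [hcod] at hP
          have : LinearMap.range g = ⊤ := top_le_iff.mp hP
          exact hsurj (LinearMap.range_eq_top.mp this)
        obtain ⟨x, hx, hxne⟩ := (Submodule.ne_bot_iff _).mp hVne
        exact ⟨⟨(i:ℕ), hii⟩, x, by beta_reduce; rw [if_pos (le_refl _)]; exact hx, hxne⟩
    · -- not injective : splitL at i+1 with ker g
      obtain ⟨U, V, hc, hQ, hP, hdef, hinv⟩ :=
        splitL X (n - ((i:ℕ)+1)) ((i:ℕ)+1) (by omega)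
          (LinearMap.ker g) (LinearMap.ker g) le_rfl
      refine ⟨U, V, ?_, ?_, ?_, ?_, ?_⟩
      · intro v
        by_cases hv : (i:ℕ)+1 ≤ (v:ℕ)
        · exact hc v hv
        · rw [(hdef v (by omega)).1, (hdef v (by omega)).2]; exact isCompl_bot_top
      · intro i' hne
        rcases ASrc_ATgt_val o i' with ⟨h1, h2⟩ | ⟨h1, h2⟩ <;>
        · by_cases hlt : (i':ℕ) < (i:ℕ)
          · constructor
            · rw [(hdef (ASrc o i') (by omega)).1, Submodule.map_bot]
              exact bot_le
            · rw [(hdef (ATgt o i') (by omega)).2]; exact le_top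
          · have hgt : (i:ℕ) < (i':ℕ) := by omega
            exact hinv i' (by omega)
      · constructor
        · rw [(hdef ⟨(i:ℕ), hii⟩ (by simp)).1]
          rintro x ⟨y, hy, rfl⟩
          have : y ∈ LinearMap.ker g := hP hy
          simpa using this
        · rw [(hdef ⟨(i:ℕ), hii⟩ (by simp)).2]; exact le_top
      · have hker : LinearMap.ker g ≠ ⊥ := by rwa [Ne, LinearMap.ker_eq_bot]
        obtain ⟨x, hx, hxne⟩ := (Submodule.ne_bot_iff _).mp hker
        exact ⟨⟨(i:ℕ)+1, hii1⟩, x, hQ hx, hxne⟩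
      · obtain ⟨x, hx⟩ := hsuppt
        exact ⟨⟨(i:ℕ), hii⟩, x, by rw [(hdef _ (by simp)).2]; trivial, hx⟩

lemma interior_bij (X : ARep n o) (hX : X.Indecomposable) (i : Fin n)
    (hs : X.Supp (ASrc o i)) (ht : X.Supp (ATgt o i)) :
    Function.Bijective (X.f i) := by
  by_contra hbij
  obtain ⟨U, V, hc, hinv, hedge, hUne, hVne⟩ :=
    decomp_of_bad_edge X i (ASrc o i) (ATgt o i) (X.f i) (ASrc_ATgt_val o i) hs ht hbij
  refine indec_no_decomp X hX U V hc ?_ ?_ hUne hVne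
  · intro i'
    by_cases h : (i':ℕ) = (i:ℕ)
    · have he : i' = i := Fin.ext h
      subst he
      exact hedge.1
    · exact (hinv i' h).1
  · intro i'
    by_cases h : (i':ℕ) = (i:ℕ)
    · have he : i' = i := Fin.ext h
      subst he
      exact hedge.2
    · exact (hinv i' h).2

end ARep

namespace ARep
variable {n : ℕ} {o : Fin n → Bool}

lemma hom_zero_left {L E : ARep n o} (h : ∀ v, L.M v →ₗ[ℂ] E.M v) {v}
    (hv : ¬ L.Supp v) : h v = 0 := by
  ext x
  have hx := eq_zero_of_not_supp hv x
  rw [hx]; simp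

lemma hom_zero_right {L E : ARep n o} (h : ∀ v, L.M v →ₗ[ℂ] E.M v) {v}
    (hv : ¬ E.Supp v) : h v = 0 := by
  ext x
  exact eq_zero_of_not_supp hv _

lemma prop_edge {L E : ARep n o} (h : ∀ v, L.M v →ₗ[ℂ] E.M v) (i : Fin n)
    (heq : (h (ATgt o i)).comp (L.f i) = (E.f i).comp (h (ASrc o i)))
    (hfL : Function.Bijective (L.f i)) (hfE : Function.Bijective (E.f i)) :
    (h (ASrc o i) = 0 ↔ h (ATgt o i) = 0) := by
  constructor
  · intro h0
    rw [h0] at heq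
    have hz : (h (ATgt o i)).comp (L.f i) = 0 := by rw [heq]; simp
    exact comp_eq_zero_of_surj hz hfL.2
  · intro h0
    rw [h0] at heq
    have hz : (E.f i).comp (h (ASrc o i)) = 0 := by rw [← heq]; simp
    exact comp_eq_zero_of_inj hz hfE.1

lemma prop_up {L E : ARep n o} (h : ∀ v, L.M v →ₗ[ℂ] E.M v)
    (heq : ∀ i : Fin n, (h (ATgt o i)).comp (L.f i) = (E.f i).comp (h (ASrc o i)))
    (hbL : ∀ i : Fin n, L.Supp (ASrc o i) → L.Supp (ATgt o i) → Function.Bijective (L.f i))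
    (hbE : ∀ i : Fin n, E.Supp (ASrc o i) → E.Supp (ATgt o i) → Function.Bijective (E.f i)) :
    ∀ d a : ℕ, (∀ x : Fin (n+1), a ≤ (x:ℕ) → (x:ℕ) ≤ a + d → L.Supp x ∧ E.Supp x) →
    (∀ u : Fin (n+1), (u:ℕ) = a → h u = 0) →
    ∀ w : Fin (n+1), (w:ℕ) = a + d → h w = 0 := by
  intro d
  induction d with
  | zero => intro a hbet h0 w hw; exact h0 w (by omega)
  | succ d ih =>
    intro a hbet h0 w hw
    have hadn : a + d < n := by have := w.isLt; omega
    set j : Fin n := ⟨a + d, hadn⟩ with hj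
    have hjv : (j:ℕ) = a + d := rfl
    have hs0 : ∀ u : Fin (n+1), (u:ℕ) = a + d → h u = 0 :=
      ih a (fun x hx1 hx2 => hbet x hx1 (by omega)) h0
    rcases ASrc_ATgt_val o j with ⟨h1, h2⟩ | ⟨h1, h2⟩
    · have hSs := hbet (ASrc o j) (by omega) (by omega)
      have hSt := hbet (ATgt o j) (by omega) (by omega)
      have hfL := hbL j hSs.1 hSt.1
      have hfE := hbE j hSs.2 hSt.2
      have hsz : h (ASrc o j) = 0 := hs0 _ (by omega)
      have htz := (prop_edge h j (heq j) hfL hfE).mp hsz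
      rw [show w = ATgt o j from Fin.ext (by omega)]
      exact htz
    · have hSs := hbet (ASrc o j) (by omega) (by omega)
      have hSt := hbet (ATgt o j) (by omega) (by omega)
      have hfL := hbL j hSs.1 hSt.1
      have hfE := hbE j hSs.2 hSt.2
      have htz : h (ATgt o j) = 0 := hs0 _ (by omega)
      have hsz := (prop_edge h j (heq j) hfL hfE).mpr htz
      rw [show w = ASrc o j from Fin.ext (by omega)]
      exact hsz

lemma prop_down {L E : ARep n o} (h : ∀ v, L.M v →ₗ[ℂ] E.M v)
    (heq : ∀ i : Fin n, (h (ATgt o i)).comp (L.f i) = (E.f i).comp (h (ASrc o i)))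
    (hbL : ∀ i : Fin n, L.Supp (ASrc o i) → L.Supp (ATgt o i) → Function.Bijective (L.f i))
    (hbE : ∀ i : Fin n, E.Supp (ASrc o i) → E.Supp (ATgt o i) → Function.Bijective (E.f i)) :
    ∀ d a : ℕ, a + d ≤ n → (∀ x : Fin (n+1), a ≤ (x:ℕ) → (x:ℕ) ≤ a + d → L.Supp x ∧ E.Supp x) →
    (∀ u : Fin (n+1), (u:ℕ) = a + d → h u = 0) →
    ∀ w : Fin (n+1), (w:ℕ) = a → h w = 0 := by
  intro d
  induction d with
  | zero => intro a _ hbet h0 w hw; exact h0 w (by omega)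
  | succ d ih =>
    intro a hdn hbet h0 w hw
    have hadn : a + d < n := by omega
    set j : Fin n := ⟨a + d, hadn⟩ with hj
    have hjv : (j:ℕ) = a + d := rfl
    have hs0 : ∀ u : Fin (n+1), (u:ℕ) = a + d → h u = 0 := by
      intro u hu
      rcases ASrc_ATgt_val o j with ⟨h1, h2⟩ | ⟨h1, h2⟩
      · have hSs := hbet (ASrc o j) (by omega) (by omega)
        have hSt := hbet (ATgt o j) (by omega) (by omega)
        have hfL := hbL j hSs.1 hSt.1
        have hfE := hbE j hSs.2 hSt.2
        have htz : h (ATgt o j) = 0 := h0 _ (by omega)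
        have hsz := (prop_edge h j (heq j) hfL hfE).mpr htz
        rw [show u = ASrc o j from Fin.ext (by omega)]
        exact hsz
      · have hSs := hbet (ASrc o j) (by omega) (by omega)
        have hSt := hbet (ATgt o j) (by omega) (by omega)
        have hfL := hbL j hSs.1 hSt.1
        have hfE := hbE j hSs.2 hSt.2
        have hsz : h (ASrc o j) = 0 := h0 _ (by omega)
        have htz := (prop_edge h j (heq j) hfL hfE).mp hsz
        rw [show u = ATgt o j from Fin.ext (by omega)]
        exact htz
    exact ih a (by omega) (fun x hx1 hx2 => hbet x hx1 (by omega)) hs0 w hw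

lemma prop_between {L E : ARep n o} (h : ∀ v, L.M v →ₗ[ℂ] E.M v)
    (heq : ∀ i : Fin n, (h (ATgt o i)).comp (L.f i) = (E.f i).comp (h (ASrc o i)))
    (hbL : ∀ i : Fin n, L.Supp (ASrc o i) → L.Supp (ATgt o i) → Function.Bijective (L.f i))
    (hbE : ∀ i : Fin n, E.Supp (ASrc o i) → E.Supp (ATgt o i) → Function.Bijective (E.f i))
    (u w : Fin (n+1))
    (hbet : ∀ x : Fin (n+1), min (u:ℕ) (w:ℕ) ≤ (x:ℕ) → (x:ℕ) ≤ max (u:ℕ) (w:ℕ) →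
      L.Supp x ∧ E.Supp x)
    (hu : h u = 0) : h w = 0 := by
  rcases le_total (u:ℕ) (w:ℕ) with hle | hle
  · exact prop_up h heq hbL hbE ((w:ℕ) - (u:ℕ)) (u:ℕ)
      (fun x hx1 hx2 => hbet x (by omega) (by omega))
      (fun u' hu' => by rw [show u' = u from Fin.ext (by omega)]; exact hu)
      w (by omega)
  · exact prop_down h heq hbL hbE ((u:ℕ) - (w:ℕ)) (w:ℕ) (by have := u.isLt; omega)
      (fun x hx1 hx2 => hbet x (by omega) (by omega))
      (fun u' hu' => by rw [show u' = u from Fin.ext (by omega)]; exact hu)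
      w (by omega)

lemma claimC {L E : ARep n o} (h : ∀ v, L.M v →ₗ[ℂ] E.M v)
    (heq : ∀ i : Fin n, (h (ATgt o i)).comp (L.f i) = (E.f i).comp (h (ASrc o i)))
    (hconvL : ∀ a b c : Fin (n+1), (a:ℕ) ≤ (b:ℕ) → (b:ℕ) ≤ (c:ℕ) →
      L.Supp a → L.Supp c → L.Supp b)
    (hconvE : ∀ a b c : Fin (n+1), (a:ℕ) ≤ (b:ℕ) → (b:ℕ) ≤ (c:ℕ) →
      E.Supp a → E.Supp c → E.Supp b)
    (hbL : ∀ i : Fin n, L.Supp (ASrc o i) → L.Supp (ATgt o i) → Function.Bijective (L.f i))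
    (hbE : ∀ i : Fin n, E.Supp (ASrc o i) → E.Supp (ATgt o i) → Function.Bijective (E.f i))
    (v₀ : Fin (n+1)) (hv0 : h v₀ ≠ 0)
    (i : Fin n) (hsl : L.Supp (ASrc o i)) (hte : E.Supp (ATgt o i)) :
    L.Supp (ATgt o i) ∧ E.Supp (ASrc o i) := by
  have hv0L : L.Supp v₀ := by
    by_contra hns; exact hv0 (hom_zero_left h hns)
  have hv0E : E.Supp v₀ := by
    by_contra hns; exact hv0 (hom_zero_right h hns)
  have hES : E.Supp (ASrc o i) := by
    by_contra hEs
    have hsz : h (ASrc o i) = 0 := hom_zero_right h hEs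
    rcases ASrc_ATgt_val o i with ⟨h1, h2⟩ | ⟨h1, h2⟩
    · -- s = i, t = i+1
      have hvpos : (i:ℕ) < (v₀:ℕ) := by
        by_contra hcon
        exact hEs (hconvE v₀ (ASrc o i) (ATgt o i) (by omega) (by omega) hv0E hte)
      have hLt : L.Supp (ATgt o i) :=
        hconvL (ASrc o i) (ATgt o i) v₀ (by omega) (by omega) hsl hv0L
      have hfL := hbL i hsl hLt
      have htz : h (ATgt o i) = 0 := by
        have hz : (h (ATgt o i)).comp (L.f i) = 0 := by rw [heq i, hsz]; simp
        exact comp_eq_zero_of_surj hz hfL.2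
      refine hv0 (prop_between h heq hbL hbE (ATgt o i) v₀ ?_ htz)
      intro x hx1 hx2
      constructor
      · exact hconvL (ATgt o i) x v₀ (by omega) (by omega) hLt hv0L
      · exact hconvE (ATgt o i) x v₀ (by omega) (by omega) hte hv0E
    · -- s = i+1, t = i
      have hvpos : (v₀:ℕ) < (i:ℕ) + 1 := by
        by_contra hcon
        exact hEs (hconvE (ATgt o i) (ASrc o i) v₀ (by omega) (by omega) hte hv0E)
      have hLt : L.Supp (ATgt o i) :=
        hconvL v₀ (ATgt o i) (ASrc o i) (by omega) (by omega) hv0L hsl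
      have hfL := hbL i hsl hLt
      have htz : h (ATgt o i) = 0 := by
        have hz : (h (ATgt o i)).comp (L.f i) = 0 := by rw [heq i, hsz]; simp
        exact comp_eq_zero_of_surj hz hfL.2
      refine hv0 (prop_between h heq hbL hbE (ATgt o i) v₀ ?_ htz)
      intro x hx1 hx2
      constructor
      · exact hconvL v₀ x (ATgt o i) (by omega) (by omega) hv0L hLt
      · exact hconvE v₀ x (ATgt o i) (by omega) (by omega) hv0E hte
  refine ⟨?_, hES⟩
  by_contra hLt
  have htz : h (ATgt o i) = 0 := hom_zero_left h hLt
  have hfE := hbE i hES hte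
  have hsz : h (ASrc o i) = 0 := by
    have hz : (E.f i).comp (h (ASrc o i)) = 0 := by rw [← heq i, htz]; simp
    exact comp_eq_zero_of_inj hz hfE.1
  rcases ASrc_ATgt_val o i with ⟨h1, h2⟩ | ⟨h1, h2⟩
  · -- s = i, t = i+1 ; ¬ L.Supp t forces v₀ ≤ i
    have hvle : (v₀:ℕ) ≤ (i:ℕ) := by
      by_contra hcon
      exact hLt (hconvL (ASrc o i) (ATgt o i) v₀ (by omega) (by omega) hsl hv0L)
    refine hv0 (prop_between h heq hbL hbE (ASrc o i) v₀ ?_ hsz)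
    intro x hx1 hx2
    constructor
    · exact hconvL v₀ x (ASrc o i) (by omega) (by omega) hv0L hsl
    · exact hconvE v₀ x (ASrc o i) (by omega) (by omega) hv0E hES
  · -- s = i+1, t = i ; ¬ L.Supp t forces v₀ ≥ i+1
    have hvge : (i:ℕ) + 1 ≤ (v₀:ℕ) := by
      by_contra hcon
      exact hLt (hconvL v₀ (ATgt o i) (ASrc o i) (by omega) (by omega) hv0L hsl)
    refine hv0 (prop_between h heq hbL hbE (ASrc o i) v₀ ?_ hsz)
    intro x hx1 hx2
    constructor
    · exact hconvL (ASrc o i) x v₀ (by omega) (by omega) hsl hv0L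
    · exact hconvE (ASrc o i) x v₀ (by omega) (by omega) hES hv0E

end ARep

namespace ARep
variable {n : ℕ} {o : Fin n → Bool}

lemma solve_edge (L E : ARep n o) (m : ℕ) (hm : m < n)
    (s t : Fin (n+1)) (gL : L.M s →ₗ[ℂ] L.M t) (gE : E.M s →ₗ[ℂ] E.M t)
    (μe : L.M s →ₗ[ℂ] E.M t)
    (hst : ((s:ℕ) = m ∧ (t:ℕ) = m + 1) ∨ ((s:ℕ) = m + 1 ∧ (t:ℕ) = m))
    (hbL : Function.Bijective gL) (hbE : Function.Bijective gE)
    (k : ∀ v, L.M v →ₗ[ℂ] E.M v) :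
    ∃ k' : ∀ v, L.M v →ₗ[ℂ] E.M v,
      (∀ v : Fin (n+1), (v:ℕ) ≤ m → k' v = k v) ∧
      gE.comp (k' s) - (k' t).comp gL = μe := by
  classical
  have hmm : m < n + 1 := by omega
  have hmm1 : m + 1 < n + 1 := by omega
  rcases hst with ⟨hs, ht⟩ | ⟨hs, ht⟩
  · -- t = m+1 is new
    have hseq : s = (⟨m, hmm⟩ : Fin (n+1)) := Fin.ext hs
    have hteq : t = (⟨m+1, hmm1⟩ : Fin (n+1)) := Fin.ext ht
    subst hseq; subst hteq
    set eL := LinearEquiv.ofBijective gL hbL with heL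
    refine ⟨Function.update k ⟨m+1, hmm1⟩
      ((gE.comp (k ⟨m, hmm⟩) - μe).comp (eL.symm.toLinearMap)), ?_, ?_⟩
    · intro v hv
      rw [Function.update_of_ne (by intro he; subst he; simp at hv <;> omega)]
    · rw [Function.update_of_ne
        (show (⟨m, hmm⟩ : Fin (n+1)) ≠ ⟨m+1, hmm1⟩ by intro he; simp at he),
        Function.update_self]
      ext x
      have hsymm : eL.symm (gL x) = x := by
        rw [show gL x = eL x from rfl]
        exact eL.symm_apply_apply x
      simp only [LinearMap.sub_apply, LinearMap.comp_apply, LinearEquiv.coe_coe, hsymm]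
      abel
  · -- s = m+1 is new
    have hseq : s = (⟨m+1, hmm1⟩ : Fin (n+1)) := Fin.ext hs
    have hteq : t = (⟨m, hmm⟩ : Fin (n+1)) := Fin.ext ht
    subst hseq; subst hteq
    set eE := LinearEquiv.ofBijective gE hbE with heE
    refine ⟨Function.update k ⟨m+1, hmm1⟩
      (eE.symm.toLinearMap.comp (μe + (k ⟨m, hmm⟩).comp gL)), ?_, ?_⟩
    · intro v hv
      rw [Function.update_of_ne (by intro he; subst he; simp at hv <;> omega)]
    · rw [Function.update_of_ne
        (show (⟨m, hmm⟩ : Fin (n+1)) ≠ ⟨m+1, hmm1⟩ by intro he; simp at he),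
        Function.update_self]
      ext x
      have hsymm : ∀ y, gE (eE.symm y) = y := by
        intro y
        have := eE.apply_symm_apply y
        rwa [show eE (eE.symm y) = gE (eE.symm y) from rfl] at this
      simp only [LinearMap.sub_apply, LinearMap.comp_apply, LinearMap.add_apply,
        LinearEquiv.coe_coe, hsymm]
      abel

lemma ext_surj (L E : ARep n o)
    (hgood : ∀ i : Fin n, (¬ L.Supp (ASrc o i) ∨ ¬ E.Supp (ATgt o i)) ∨
      (Function.Bijective (L.f i) ∧ Function.Bijective (E.f i))) :
    Function.Surjective (extMap L E) := by
  classical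
  intro μ
  suffices hs : ∀ m : ℕ, m ≤ n → ∃ k : ∀ v, L.M v →ₗ[ℂ] E.M v,
      ∀ i : Fin n, (i:ℕ) < m →
        (E.f i).comp (k (ASrc o i)) - (k (ATgt o i)).comp (L.f i) = μ i by
    obtain ⟨k, hk⟩ := hs n le_rfl
    exact ⟨k, funext fun i => hk i i.isLt⟩
  intro m
  induction m with
  | zero => exact fun _ => ⟨fun v => 0, fun i hi => absurd hi (by omega)⟩
  | succ m ih =>
    intro hm1
    obtain ⟨k, hk⟩ := ih (by omega)
    have hmn : m < n := by omega
    set j : Fin n := ⟨m, hmn⟩ with hj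
    have hjv : (j:ℕ) = m := rfl
    rcases hgood j with hbad | ⟨hfL, hfE⟩
    · refine ⟨k, fun i hi => ?_⟩
      rcases Nat.lt_succ_iff_lt_or_eq.mp hi with hlt | heqm
      · exact hk i hlt
      · have he : i = j := Fin.ext (by omega)
        subst he
        rcases hbad with hns | hnt
        · ext x
          have hx := eq_zero_of_not_supp hns x
          rw [hx]; simp
        · apply LinearMap.ext; intro x
          exact (eq_zero_of_not_supp hnt _).trans (eq_zero_of_not_supp hnt _).symm
    · obtain ⟨k', hold, hsolve⟩ :=
        solve_edge L E m hmn (ASrc o j) (ATgt o j) (L.f j) (E.f j) (μ j)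
          (by simpa using ASrc_ATgt_val o j) hfL hfE k
      refine ⟨k', fun i hi => ?_⟩
      rcases Nat.lt_succ_iff_lt_or_eq.mp hi with hlt | heqm
      · rcases ASrc_ATgt_val o i with ⟨h1, h2⟩ | ⟨h1, h2⟩ <;>
        · rw [hold (ASrc o i) (by omega), hold (ATgt o i) (by omega)]
          exact hk i hlt
      · have he : i = j := Fin.ext (by omega)
        subst he
        exact hsolve

end ARep

open ARep in
/-- For indecomposable representations `L`, `E` of a quiver of type `A`,
`Hom(L,E)` and `Ext¹(L,E)` cannot both be nonzero:  `dim Hom(L,E) * dim Ext¹(L,E) = 0`. -/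
theorem ARep.dimHom_mul_dimExt_eq_zero
    {n : ℕ} {o : Fin n → Bool} (L E : ARep n o)
    (hL : L.Indecomposable) (hE : E.Indecomposable) :
    dimHom L E * dimExt L E = 0 := by
  classical
  by_cases hbot : HomSub L E = ⊥
  · have hz : dimHom L E = 0 := by
      rw [dimHom, hbot]; exact finrank_bot ℂ _
    rw [hz, zero_mul]
  · obtain ⟨h, hmem, hne⟩ := (Submodule.ne_bot_iff _).mp hbot
    have hv0ex : ∃ v, h v ≠ 0 := by
      by_contra hcon; push_neg at hcon
      exact hne (funext hcon)
    obtain ⟨v₀, hv0⟩ := hv0ex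
    have heq : ∀ i : Fin n, (h (ATgt o i)).comp (L.f i) = (E.f i).comp (h (ASrc o i)) := hmem
    have hconvL := supp_convex L hL
    have hconvE := supp_convex E hE
    have hbL := fun i => interior_bij L hL i
    have hbE := fun i => interior_bij E hE i
    have hgood : ∀ i : Fin n, (¬ L.Supp (ASrc o i) ∨ ¬ E.Supp (ATgt o i)) ∨
        (Function.Bijective (L.f i) ∧ Function.Bijective (E.f i)) := by
      intro i
      by_cases h1 : L.Supp (ASrc o i)
      · by_cases h2 : E.Supp (ATgt o i)
        · obtain ⟨hLt, hEs⟩ := claimC h heq hconvL hconvE hbL hbE v₀ hv0 i h1 h2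
          exact Or.inr ⟨hbL i h1 hLt, hbE i hEs h2⟩
        · exact Or.inl (Or.inr h2)
      · exact Or.inl (Or.inl h1)
    have hrange : LinearMap.range (extMap L E) = ⊤ :=
      LinearMap.range_eq_top.mpr (ext_surj L E hgood)
    have hz : dimExt L E = 0 := by
      rw [dimExt]
      have hsub : Subsingleton
          ((∀ i : Fin n, L.M (ASrc o i) →ₗ[ℂ] E.M (ATgt o i)) ⧸
            LinearMap.range (extMap L E)) := by
        rw [Submodule.Quotient.subsingleton_iff]; exact hrange
      exact Module.finrank_zero_of_subsingleton
    rw [hz, mul_zero]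
end

section
/- Let Q be a quiver of type A_n, let L, E be indecomposable representations of Q over ℂ, and let f : L → E be a nonzero homomorphism. Then the image of f is an indecomposable representation. -/
namespace ARep

/-- The image of a morphism of representations `h : X → Y`, as a representation: its vertex
spaces are the images `range (h v)` and its arrow maps are the restrictions of those of `Y`. -/
noncomputable def imRep {n : ℕ} {o : Fin n → Bool} (X Y : ARep n o)
    (h : ∀ v, X.M v →ₗ[ℂ] Y.M v) (hh : h ∈ HomSub X Y) : ARep n o where
  M v := LinearMap.range (h v)
  f i := (Y.f i).restrict (p := LinearMap.range (h (ASrc o i)))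
    (q := LinearMap.range (h (ATgt o i)))
    (by
      rintro x ⟨y, rfl⟩
      refine ⟨X.f i y, ?_⟩
      have := congrArg (fun g => g y) (hh i)
      simpa using this)

open Module LinearMap

section Helpers
variable {V W : Type} [AddCommGroup V] [Module ℂ V] [AddCommGroup W] [Module ℂ W]

/-- A nonzero map between 1-dimensional spaces is injective and surjective. -/
theorem bij1 [FiniteDimensional ℂ V] [FiniteDimensional ℂ W]
    (hV : finrank ℂ V = 1) (hW : finrank ℂ W = 1) (f : V →ₗ[ℂ] W)
    (hf : ∃ x, f x ≠ 0) : Function.Injective f ∧ Function.Surjective f := by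
  obtain ⟨x, hx⟩ := hf
  obtain ⟨v, hv, hgen⟩ := finrank_eq_one_iff'.mp hV
  have hfv : f v ≠ 0 := by
    intro h0
    obtain ⟨c, hc⟩ := hgen x
    apply hx
    rw [← hc, map_smul, h0, smul_zero]
  constructor
  · rw [← LinearMap.ker_eq_bot]
    rw [eq_bot_iff]
    intro y hy
    obtain ⟨c, hc⟩ := hgen y
    have : c • f v = 0 := by rw [← map_smul, hc]; exact hy
    rcases smul_eq_zero.mp this with h | h
    · simp [← hc, h]
    · exact absurd h hfv
  · rw [← LinearMap.range_eq_top]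
    have hle : Submodule.span ℂ {f v} ≤ range f := by
      rw [Submodule.span_le, Set.singleton_subset_iff]; exact ⟨v, rfl⟩
    have h1 : finrank ℂ (Submodule.span ℂ {f v}) = 1 := finrank_span_singleton hfv
    have := Submodule.eq_of_le_of_finrank_le (le_top : range f ≤ ⊤) ?_
    · rw [this]
    · rw [finrank_top, hW]
      calc 1 = finrank ℂ (Submodule.span ℂ {f v}) := h1.symm
        _ ≤ finrank ℂ (range f) := Submodule.finrank_mono hle

/-- An idempotent endomorphism of a 1-dimensional space is 0 or id. -/
theorem END1 [FiniteDimensional ℂ V] (hV : finrank ℂ V = 1) (u : V →ₗ[ℂ] V)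
    (hu : u ∘ₗ u = u) : u = 0 ∨ u = LinearMap.id := by
  obtain ⟨v, hv, hgen⟩ := finrank_eq_one_iff'.mp hV
  obtain ⟨c, hc⟩ := hgen (u v)
  have hiter : (c * c) • v = c • v := by
    calc (c*c) • v = c • (c • v) := by rw [mul_smul]
    _ = c • u v := by rw [hc]
    _ = u (c • v) := by rw [map_smul]
    _ = u (u v) := by rw [hc]
    _ = u v := by rw [← LinearMap.comp_apply, hu]
    _ = c • v := hc.symm
  have hcc : c = 0 ∨ c = 1 := by
    have : (c * c - c) • v = 0 := by rw [sub_smul, hiter, sub_self]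
    rcases smul_eq_zero.mp this with h | h
    · have : c * (c - 1) = 0 := by ring_nf; linear_combination h
      rcases mul_eq_zero.mp this with h | h
      · exact Or.inl h
      · exact Or.inr (by linear_combination h)
    · exact absurd h hv
  have key : ∀ y, u y = c • y := by
    intro y
    obtain ⟨d, hd⟩ := hgen y
    rw [← hd, map_smul, ← hc, smul_comm]
  rcases hcc with h | h
  · left; ext y; simp [key y, h]
  · right; ext y; simp [key y, h]

theorem span_of_dim1 [FiniteDimensional ℂ V] (S : Submodule ℂ V) (hS : finrank ℂ S = 1)
    {w : V} (hw : w ∈ S) (hw0 : w ≠ 0) : S = Submodule.span ℂ {w} := by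
  have hle : Submodule.span ℂ {w} ≤ S := by
    rw [Submodule.span_le, Set.singleton_subset_iff]; exact hw
  exact (Submodule.eq_of_le_of_finrank_le hle (by rw [hS, finrank_span_singleton hw0])).symm

theorem exists_nonzero_of_finrank_one [FiniteDimensional ℂ V] (hV : finrank ℂ V = 1) :
    ∃ x : V, x ≠ 0 := by
  obtain ⟨v, hv, -⟩ := finrank_eq_one_iff'.mp hV
  exact ⟨v, hv⟩

/-- Coordinates along a line containing the range. -/
theorem line_coord (T : V →ₗ[ℂ] W) (w : W) (hw : w ≠ 0)
    (hT : ∀ y, T y ∈ Submodule.span ℂ {w}) :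
    ∃ φ : V →ₗ[ℂ] ℂ, ∀ y, T y = φ y • w := by
  let e := LinearEquiv.toSpanNonzeroSingleton ℂ W w hw
  refine ⟨e.symm.toLinearMap ∘ₗ T.codRestrict (Submodule.span ℂ {w}) hT, fun y => ?_⟩
  have : T y = ((T.codRestrict (Submodule.span ℂ {w}) hT) y : W) := rfl
  rw [this, ← e.apply_symm_apply ((T.codRestrict (Submodule.span ℂ {w}) hT) y)]
  rfl

end Helpers

section Proj
variable {V : Type} [AddCommGroup V] [Module ℂ V]

/-- complement of a line containing a given subspace avoiding the line -/
theorem compl_cont (T : Submodule ℂ V) (x : V) (hx : x ∉ T) :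
    ∃ C : Submodule ℂ V, T ≤ C ∧ IsCompl (Submodule.span ℂ {x}) C := by
  obtain ⟨D, hD⟩ := Submodule.exists_isCompl (Submodule.span ℂ {x} ⊔ T)
  refine ⟨T ⊔ D, le_sup_left, ?_, ?_⟩
  · -- disjoint
    rw [disjoint_iff]
    rw [eq_bot_iff]
    intro y ⟨hy1, hy2⟩
    obtain ⟨c, hc⟩ := Submodule.mem_span_singleton.mp hy1
    by_cases hc0 : c = 0
    · rw [← hc, hc0, zero_smul]; exact Submodule.zero_mem ⊥
    · exfalso
      have hxmem : x ∈ T ⊔ D := by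
        have : y ∈ T ⊔ D := hy2
        have := Submodule.smul_mem (T ⊔ D) c⁻¹ this
        rwa [← hc, smul_smul, inv_mul_cancel₀ hc0, one_smul] at this
      obtain ⟨t, ht, d, hd, hsum⟩ := Submodule.mem_sup.mp hxmem
      have hdmem : d ∈ Submodule.span ℂ {x} ⊔ T := by
        have : d = x - t := by rw [← hsum]; abel
        rw [this]
        exact Submodule.sub_mem _ (Submodule.mem_sup_left (Submodule.mem_span_singleton_self x))
          (Submodule.mem_sup_right ht)
      have : d = 0 := by
        have := hD.disjoint
        rw [disjoint_iff, eq_bot_iff] at this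
        exact (Submodule.mem_bot ℂ).mp (this ⟨hdmem, hd⟩)
      apply hx
      rw [← hsum, this, add_zero] at *
      exact ht
  · -- codisjoint
    rw [codisjoint_iff, eq_top_iff]
    have := hD.codisjoint
    rw [codisjoint_iff] at this
    rw [← this]
    intro y hy
    rcases Submodule.mem_sup.mp hy with ⟨a, ha, d, hd, hsum⟩
    rcases Submodule.mem_sup.mp ha with ⟨s, hs, t, ht, hsum2⟩
    rw [← hsum, ← hsum2]
    exact Submodule.add_mem _
      (Submodule.add_mem _ (Submodule.mem_sup_left hs)
        (Submodule.mem_sup_right (Submodule.mem_sup_left ht)))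
      (Submodule.mem_sup_right (Submodule.mem_sup_right hd))

theorem listsup_mem (l : List (Submodule ℂ V)) (hl : l.Pairwise (· ≤ ·)) :
    l.foldr (· ⊔ ·) ⊥ = ⊥ ∨ l.foldr (· ⊔ ·) ⊥ ∈ l := by
  induction l with
  | nil => exact Or.inl rfl
  | cons U t ih =>
    have hts : t.Pairwise (· ≤ ·) := hl.of_cons
    rcases ih hts with h | h
    · right; simp [List.foldr, h]
    · right
      have hU : U ≤ t.foldr (· ⊔ ·) ⊥ := (List.rel_of_pairwise_cons hl h)
      simp only [List.foldr]
      rw [sup_eq_right.mpr hU]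
      exact List.mem_cons_of_mem _ h

theorem le_listsup {l : List (Submodule ℂ V)} {U : Submodule ℂ V} (h : U ∈ l) :
    U ≤ l.foldr (· ⊔ ·) ⊥ := by
  induction l with
  | nil => simp at h
  | cons W t ih =>
    rcases List.mem_cons.mp h with rfl | h
    · exact le_sup_left
    · exact le_trans (ih h) le_sup_right

theorem first_viol {l : List (Submodule ℂ V)} (hl : l.Pairwise (· ≤ ·))
    (P : Submodule ℂ V → Prop) (h : ∃ U ∈ l, P U) :
    ∃ U₀ ∈ l, P U₀ ∧ ∀ U ∈ l, P U → U₀ ≤ U := by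
  induction l with
  | nil => simp at h
  | cons W t ih =>
    by_cases hW : P W
    · refine ⟨W, List.mem_cons_self, hW, fun U hU _ => ?_⟩
      rcases List.mem_cons.mp hU with rfl | hU
      · exact le_refl _
      · exact List.rel_of_pairwise_cons hl hU
    · have h' : ∃ U ∈ t, P U := by
        obtain ⟨U, hU, hPU⟩ := h
        rcases List.mem_cons.mp hU with rfl | hU
        · exact absurd hPU hW
        · exact ⟨U, hU, hPU⟩
      obtain ⟨U₀, hU₀, hP₀, hmin⟩ := ih hl.of_cons h'
      refine ⟨U₀, List.mem_cons_of_mem _ hU₀, hP₀, fun U hU hPU => ?_⟩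
      rcases List.mem_cons.mp hU with rfl | hU
      · exact absurd hPU hW
      · exact hmin U hU hPU

open Classical in
/-- The key projection existence lemma. -/
theorem exists_proj (K W : Submodule ℂ V) (hWK : W ≤ K) (hKW : ¬ K ≤ W)
    (l : List (Submodule ℂ V)) (hl : l.Pairwise (· ≤ ·)) :
    ∃ u : V →ₗ[ℂ] V, u ∘ₗ u = u ∧ finrank ℂ (range u) = 1 ∧ range u ≤ K ∧ W ≤ ker u ∧
      ∀ U ∈ l, (∀ x ∈ U, u x = 0) ∨ range u ≤ U := by
  classical
  -- sup of "nonviolators"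
  set lf := l.filter (fun U => decide (K ⊓ U ≤ W)) with hlf
  have hlfsorted : lf.Pairwise (· ≤ ·) := hl.filter _
  set S := lf.foldr (· ⊔ ·) ⊥ with hS
  have hSW : K ⊓ S ≤ W := by
    rcases listsup_mem lf hlfsorted with h | h
    · rw [← hS] at h; rw [h]; simp
    · rw [← hS] at h
      have := List.of_mem_filter h
      simpa using of_decide_eq_true this
  have hnv_le_S : ∀ U ∈ l, K ⊓ U ≤ W → U ≤ S := by
    intro U hU hKU
    apply le_listsup
    rw [hlf]
    exact List.mem_filter.mpr ⟨hU, decide_eq_true hKU⟩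
  -- choose x
  have key : ∃ x, x ∈ K ∧ x ∉ W ∧ ∀ U ∈ l, ¬ (K ⊓ U ≤ W) → x ∈ U := by
    by_cases hviol : ∃ U ∈ l, ¬ (K ⊓ U ≤ W)
    · obtain ⟨U₀, hU₀, hP₀, hmin⟩ := first_viol hl _ hviol
      obtain ⟨x, hx1, hx2⟩ := SetLike.not_le_iff_exists.mp hP₀
      exact ⟨x, hx1.1, hx2, fun U hU hP => hmin U hU hP hx1.2⟩
    · push_neg at hviol
      obtain ⟨x, hx1, hx2⟩ := SetLike.not_le_iff_exists.mp hKW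
      exact ⟨x, hx1, hx2, fun U hU hP => absurd (hviol U hU) hP⟩
  obtain ⟨x, hxK, hxW, hxviol⟩ := key
  -- x ∉ W ⊔ S
  have hxT : x ∉ W ⊔ S := by
    intro hmem
    apply hxW
    have : x ∈ (W ⊔ S) ⊓ K := ⟨hmem, hxK⟩
    rw [sup_inf_assoc_of_le S hWK] at this
    rcases Submodule.mem_sup.mp this with ⟨a, ha, b, hb, hsum⟩
    have hbW : b ∈ W := hSW ⟨(Submodule.mem_inf.mp hb).2, (Submodule.mem_inf.mp hb).1⟩
    -- b ∈ S ⊓ K; careful order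
    rw [← hsum]
    exact Submodule.add_mem _ ha hbW
  obtain ⟨C, hTC, hcompl⟩ := compl_cont (W ⊔ S) x hxT
  set u : V →ₗ[ℂ] V := (Submodule.span ℂ {x}).subtype ∘ₗ
    Submodule.projectionOnto _ _ hcompl with hu
  have hux : ∀ y ∈ Submodule.span ℂ {x}, u y = y := by
    intro y hy
    simp [hu, Submodule.projectionOnto_apply_left hcompl ⟨y, hy⟩]
  have huC : ∀ y ∈ C, u y = 0 := by
    intro y hy
    simp [hu, Submodule.projectionOnto_apply_right hcompl ⟨y, hy⟩]
  have hrange : range u = Submodule.span ℂ {x} := by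
    apply le_antisymm
    · rintro _ ⟨y, rfl⟩
      exact Submodule.coe_mem _
    · intro y hy
      exact ⟨y, hux y hy⟩
  have hx0 : x ≠ 0 := fun h => hxW (h ▸ W.zero_mem)
  refine ⟨u, ?_, ?_, ?_, ?_, ?_⟩
  · ext y
    have : u y ∈ Submodule.span ℂ {x} := by rw [← hrange]; exact ⟨y, rfl⟩
    simp only [LinearMap.comp_apply]
    exact hux _ this
  · rw [hrange]; exact finrank_span_singleton hx0
  · rw [hrange, Submodule.span_le, Set.singleton_subset_iff]; exact hxK
  · intro y hy
    simp only [LinearMap.mem_ker]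
    exact huC y (hTC (Submodule.mem_sup_left hy))
  · intro U hU
    by_cases hKU : K ⊓ U ≤ W
    · left
      intro y hy
      exact huC y (hTC (Submodule.mem_sup_right (hnv_le_S U hU hKU hy)))
    · right
      rw [hrange, Submodule.span_le, Set.singleton_subset_iff]
      exact hxviol U hU hKU

end Proj

section MiniHelpers
variable {V : Type} [AddCommGroup V] [Module ℂ V]

theorem idem_on_range {u : V →ₗ[ℂ] V} (hu : u ∘ₗ u = u) {x : V} (hx : x ∈ range u) :
    u x = x := by
  obtain ⟨y, rfl⟩ := hx
  calc u (u y) = (u ∘ₗ u) y := rfl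
  _ = u y := by rw [hu]
end MiniHelpers


variable {n : ℕ} {o : Fin n → Bool}

theorem srctgt_val (i : Fin n) :
    (((ASrc o i : Fin (n+1)) : ℕ) = (i : ℕ) ∧ ((ATgt o i : Fin (n+1)) : ℕ) = (i : ℕ) + 1) ∨
    (((ASrc o i : Fin (n+1)) : ℕ) = (i : ℕ) + 1 ∧ ((ATgt o i : Fin (n+1)) : ℕ) = (i : ℕ)) := by
  cases h : o i <;> simp [ASrc, ATgt, h]

/-- The conclusion predicate of the key splitting lemma. -/
def KLC (X : ARep n o) (vp : Fin (n+1)) (l : List (Submodule ℂ (X.M vp)))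
    (e : ∀ v, X.M v →ₗ[ℂ] X.M v) (a b : Fin (n+1)) : Prop :=
  vp ≤ a ∧ a ≤ b ∧
  (∀ v, v < vp → e v = 0) ∧
  (∀ v, e v ∘ₗ e v = e v) ∧
  (∀ i : Fin n, (vp : ℕ) ≤ (i : ℕ) → e (ATgt o i) ∘ₗ X.f i = X.f i ∘ₗ e (ASrc o i)) ∧
  (∀ v, a ≤ v → v ≤ b → finrank ℂ (range (e v)) = 1) ∧
  (∀ v, ¬(a ≤ v ∧ v ≤ b) → e v = 0) ∧
  (∀ i : Fin n, a ≤ i.castSucc → i.succ ≤ b → ∃ x ∈ range (e (ASrc o i)), X.f i x ≠ 0) ∧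
  (∀ U ∈ l, (∀ x ∈ U, e vp x = 0) ∨ range (e vp) ≤ U)

/-- Assembly: no-extension case. -/
theorem KL_noext (X : ARep n o) (vp vq : Fin (n+1)) (hpq : (vp:ℕ)+1 = (vq:ℕ))
    (l : List (Submodule ℂ (X.M vp)))
    (e' : ∀ v, X.M v →ₗ[ℂ] X.M v) (a' b' : Fin (n+1))
    (l' : List (Submodule ℂ (X.M vq)))
    (H : KLC X vq l' e' a' b')
    (hcomm : ∀ i : Fin n, (i:ℕ) = (vp:ℕ) →
      e' (ATgt o i) ∘ₗ X.f i = X.f i ∘ₗ e' (ASrc o i)) :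
    KLC X vp l e' a' b' := by
  obtain ⟨C1, C2, C3, C4, C5, C6, C7, C8, C9⟩ := H
  have hvpq : vp < vq := by rw [Fin.lt_def]; omega
  have hevp : e' vp = 0 := C3 vp hvpq
  refine ⟨le_trans (le_of_lt hvpq) C1, C2, ?_, C4, ?_, C6, C7, C8, ?_⟩
  · intro v hv; exact C3 v (lt_trans hv hvpq)
  · intro i hi
    rcases Nat.eq_or_lt_of_le hi with heq | hlt
    · exact hcomm i heq.symm
    · exact C5 i (by omega)
  · intro U hU
    left; intro x hx; rw [hevp]; rfl

/-- Assembly: extension case. -/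
theorem KL_ext (X : ARep n o) (vp vq : Fin (n+1)) (hpq : (vp:ℕ)+1 = (vq:ℕ))
    (l : List (Submodule ℂ (X.M vp)))
    (e' : ∀ v, X.M v →ₗ[ℂ] X.M v) (b' : Fin (n+1))
    (l' : List (Submodule ℂ (X.M vq)))
    (H : KLC X vq l' e' vq b')
    (ep : X.M vp →ₗ[ℂ] X.M vp)
    (hidem : ep ∘ₗ ep = ep)
    (hrank : finrank ℂ (range ep) = 1)
    (hcomm : ∀ i : Fin n, (i:ℕ) = (vp:ℕ) →
      (Function.update e' vp ep) (ATgt o i) ∘ₗ X.f i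
        = X.f i ∘ₗ (Function.update e' vp ep) (ASrc o i))
    (hedge : ∀ i : Fin n, (i:ℕ) = (vp:ℕ) →
      ∃ x ∈ range ((Function.update e' vp ep) (ASrc o i)), X.f i x ≠ 0)
    (hflag : ∀ U ∈ l, (∀ x ∈ U, ep x = 0) ∨ range ep ≤ U) :
    KLC X vp l (Function.update e' vp ep) vp b' := by
  obtain ⟨C1, C2, C3, C4, C5, C6, C7, C8, C9⟩ := H
  have hvpq : vp < vq := by rw [Fin.lt_def]; omega
  have hne : ∀ v : Fin (n+1), (vp:ℕ) < (v:ℕ) → v ≠ vp := by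
    intro v hv h; rw [h] at hv; omega
  have hupd : ∀ v : Fin (n+1), (vp:ℕ) < (v:ℕ) → Function.update e' vp ep v = e' v := by
    intro v hv; exact Function.update_of_ne (hne v hv) _ _
  refine ⟨le_refl _, le_trans (le_of_lt hvpq) C2, ?_, ?_, ?_, ?_, ?_, ?_, ?_⟩
  · intro v hv
    rw [Function.update_of_ne (by intro h; rw [h] at hv; exact lt_irrefl _ hv) _ _]
    exact C3 v (lt_trans hv hvpq)
  · intro v
    by_cases hv : v = vp
    · subst hv; rw [Function.update_self]; exact hidem
    · rw [Function.update_of_ne hv]; exact C4 v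
  · intro i hi
    rcases Nat.eq_or_lt_of_le hi with heq | hlt
    · exact hcomm i heq.symm
    · have h1 : Function.update e' vp ep (ATgt o i) = e' (ATgt o i) := by
        apply hupd; rcases srctgt_val (o := o) i with ⟨_, h⟩ | ⟨_, h⟩ <;> omega
      have h2 : Function.update e' vp ep (ASrc o i) = e' (ASrc o i) := by
        apply hupd; rcases srctgt_val (o := o) i with ⟨h, _⟩ | ⟨h, _⟩ <;> omega
      rw [h1, h2]; exact C5 i (by omega)
  · intro v hav hvb
    by_cases hv : v = vp
    · subst hv; rw [Function.update_self]; exact hrank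
    · have hvgt : (vp:ℕ) < (v:ℕ) := by
        rw [Fin.le_def] at hav
        rcases Nat.eq_or_lt_of_le hav with heq | h
        · exact absurd (Fin.ext heq.symm) hv
        · exact h
      rw [hupd v hvgt]
      exact C6 v (by rw [Fin.le_def]; omega) hvb
  · intro v hv
    have hvne : v ≠ vp := by
      intro h; subst h; exact hv ⟨le_refl _, le_trans (le_of_lt hvpq) C2⟩
    have : ¬((vp:ℕ) ≤ (v:ℕ) ∧ v ≤ b') := by
      intro ⟨h1, h2⟩; exact hv ⟨by rw [Fin.le_def]; omega, h2⟩
    rw [Function.update_of_ne hvne]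
    apply C7
    intro ⟨h1, h2⟩
    rw [Fin.le_def] at h1
    exact this ⟨by omega, h2⟩
  · intro i hai hib
    rw [Fin.le_def, Fin.coe_castSucc] at hai
    rcases Nat.eq_or_lt_of_le hai with heq | hlt
    · exact hedge i heq.symm
    · have h2 : Function.update e' vp ep (ASrc o i) = e' (ASrc o i) := by
        apply hupd; rcases srctgt_val (o := o) i with ⟨h, _⟩ | ⟨h, _⟩ <;> omega
      rw [h2]
      exact C8 i (by rw [Fin.le_def, Fin.coe_castSucc]; omega) hib
  · intro U hU
    rw [Function.update_self]
    exact hflag U hU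


theorem KL (X : ARep n o) (d : ℕ) : ∀ (vp : Fin (n+1)), n + 1 ≤ (vp:ℕ) + d →
    ∀ l : List (Submodule ℂ (X.M vp)), l.Pairwise (· ≤ ·) →
    (∃ v : Fin (n+1), vp ≤ v ∧ ∃ x : X.M v, x ≠ 0) →
    ∃ e a b, KLC X vp l e a b := by
  induction d with
  | zero =>
    intro vp hd l _ hsupp
    exfalso
    obtain ⟨v, hv, -⟩ := hsupp
    rw [Fin.le_def] at hv
    have := v.isLt
    omega
  | succ d ih =>
    intro vp hd l hl hsupp
    by_cases hzero : ∀ x : X.M vp, x = 0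
    · -- the space at `vp` is zero: recurse
      have hpn : (vp:ℕ) < n := by
        by_contra hc
        obtain ⟨v, hv, x, hx⟩ := hsupp
        have hvn : v = vp := by
          apply Fin.ext
          rw [Fin.le_def] at hv
          have := v.isLt
          have := vp.isLt
          omega
        subst hvn
        exact hx (hzero x)
      obtain ⟨ep, hep⟩ : ∃ i : Fin n, (i:ℕ) = (vp:ℕ) := ⟨⟨(vp:ℕ), hpn⟩, rfl⟩
      have hsupp' : ∃ v, ep.succ ≤ v ∧ ∃ x : X.M v, x ≠ 0 := by
        obtain ⟨v, hv, x, hx⟩ := hsupp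
        refine ⟨v, ?_, x, hx⟩
        rcases eq_or_ne v vp with rfl | hne
        · exact absurd (hzero x) hx
        · have : (v:ℕ) ≠ (vp:ℕ) := fun hc => hne (Fin.ext hc)
          rw [Fin.le_def] at hv ⊢
          rw [Fin.val_succ]
          omega
      obtain ⟨e', a', b', H⟩ := ih ep.succ (by rw [Fin.val_succ]; omega) []
        List.Pairwise.nil hsupp'
      refine ⟨e', a', b', KL_noext X vp ep.succ (by rw [Fin.val_succ, hep]) l e' a' b' [] H ?_⟩
      intro i hi
      rcases srctgt_val (o := o) i with ⟨hs, ht⟩ | ⟨hs, ht⟩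
      · have hsv : ASrc o i = vp := Fin.ext (by omega)
        have hz' : ∀ x : X.M (ASrc o i), x = 0 := by rw [hsv]; exact hzero
        ext y
        simp only [LinearMap.comp_apply]
        rw [hz' y]
        simp
      · have htv : ATgt o i = vp := Fin.ext (by omega)
        have hz' : ∀ x : X.M (ATgt o i), x = 0 := by rw [htv]; exact hzero
        ext y
        exact (hz' _).trans (hz' _).symm
    · push_neg at hzero
      obtain ⟨x0, hx0⟩ := hzero
      by_cases hpn : (vp:ℕ) = n
      · -- base: vp is the last vertex
        have h1 : ¬ (⊤ : Submodule ℂ (X.M vp)) ≤ ⊥ := by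
          intro hc
          exact hx0 ((Submodule.mem_bot ℂ).mp (hc Submodule.mem_top))
        obtain ⟨u, hu1, hu2, hu3, hu4, hu5⟩ := exists_proj ⊤ ⊥ bot_le h1 l hl
        refine ⟨Function.update (fun v => (0 : X.M v →ₗ[ℂ] X.M v)) vp u, vp, vp,
          le_refl _, le_refl _, ?_, ?_, ?_, ?_, ?_, ?_, ?_⟩
        · intro v hv
          rw [Function.update_of_ne (ne_of_lt hv)]
        · intro v
          by_cases hv : v = vp
          · subst hv; rw [Function.update_self]; exact hu1
          · rw [Function.update_of_ne hv]; exact LinearMap.comp_zero 0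
        · intro i hi
          have := i.isLt
          omega
        · intro v hav hvb
          have hv : v = vp := le_antisymm hvb hav
          subst hv; rw [Function.update_self]; exact hu2
        · intro v hv
          have hvne : v ≠ vp := by
            intro hc; subst hc; exact hv ⟨le_refl _, le_refl _⟩
          rw [Function.update_of_ne hvne]
        · intro i hai hib
          rw [Fin.le_def] at hai hib
          rw [Fin.coe_castSucc] at hai
          rw [Fin.val_succ] at hib
          omega
        · intro U hU
          rw [Function.update_self]
          exact hu5 U hU
      · have hplt : (vp:ℕ) < n := by have := vp.isLt; omega
        obtain ⟨ep, hep⟩ : ∃ i : Fin n, (i:ℕ) = (vp:ℕ) := ⟨⟨(vp:ℕ), hplt⟩, rfl⟩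
        cases hor : o ep with
        | false =>
          -- leftward arrow `g : M (vp+1) → M vp`
          have htv : ATgt o ep = vp := by
            apply Fin.ext
            simp only [ATgt, hor, if_neg Bool.false_ne_true, Fin.coe_castSucc]
            exact hep
          subst htv
          have hsval : ((ASrc o ep : Fin (n+1)) : ℕ) = (ep:ℕ) + 1 := by
            simp [ASrc, hor]
          by_cases hsurj : range (X.f ep) = ⊤
          · -- D2: g surjective
            obtain ⟨s, hs⟩ := (X.f ep).exists_rightInverse_of_surjective hsurj
            have hsapp : ∀ z, X.f ep (s z) = z := by
              intro z
              have := congrArg (fun (m : X.M (ATgt o ep) →ₗ[ℂ] X.M (ATgt o ep)) => m z) hs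
              simpa using this
            obtain ⟨y0, hy0⟩ : ∃ y, X.f ep y = x0 := by
              have : x0 ∈ range (X.f ep) := by rw [hsurj]; trivial
              exact this
            have hsupp' : ∃ v, ASrc o ep ≤ v ∧ ∃ x : X.M v, x ≠ 0 :=
              ⟨ASrc o ep, le_refl _, y0, fun hc => hx0 (by rw [← hy0, hc, map_zero])⟩
            set l' := (Submodule.comap (X.f ep) ⊥) :: l.map (Submodule.comap (X.f ep)) with hl'def
            have hl' : l'.Pairwise (· ≤ ·) := by
              rw [hl'def, List.pairwise_cons]
              constructor
              · intro b hb
                obtain ⟨U, hU, rfl⟩ := List.mem_map.mp hb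
                exact Submodule.comap_mono bot_le
              · exact List.Pairwise.map _ (fun a b hab => Submodule.comap_mono hab) hl
            obtain ⟨e', a', b', H⟩ := ih (ASrc o ep) (by omega) l' hl' hsupp'
            obtain ⟨C1, C2, C3, C4, C5, C6, C7, C8, C9⟩ := id H
            have hker := C9 (Submodule.comap (X.f ep) ⊥) (List.mem_cons_self)
            by_cases hcase : X.f ep ∘ₗ e' (ASrc o ep) = 0
            · -- no extension
              refine ⟨e', a', b', KL_noext X (ATgt o ep) (ASrc o ep) (by omega) l e' a' b' l' H ?_⟩
              intro i hi
              rw [show i = ep from Fin.ext (by omega)]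
              have hz : e' (ATgt o ep) = 0 := C3 _ (by rw [Fin.lt_def]; omega)
              rw [hz, hcase, LinearMap.zero_comp]
            · -- extension
              have hkA : ∀ x ∈ Submodule.comap (X.f ep) ⊥, e' (ASrc o ep) x = 0 := by
                rcases hker with hh | hh
                · exact hh
                · exfalso
                  apply hcase
                  ext y
                  simp only [LinearMap.comp_apply, LinearMap.zero_apply]
                  have : e' (ASrc o ep) y ∈ Submodule.comap (X.f ep) ⊥ := hh ⟨y, rfl⟩
                  simpa using this
              have hzq : e' (ASrc o ep) ≠ 0 := by
                intro hc
                apply hcase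
                rw [hc, LinearMap.comp_zero]
              have hin : a' ≤ ASrc o ep ∧ ASrc o ep ≤ b' := by
                by_contra hcon
                exact hzq (C7 _ hcon)
              have ha' : a' = ASrc o ep := le_antisymm hin.1 C1
              have hdim : finrank ℂ (range (e' (ASrc o ep))) = 1 := C6 _ hin.1 hin.2
              obtain ⟨w0, hw0⟩ := exists_nonzero_of_finrank_one hdim
              have hwmem : (w0 : X.M (ASrc o ep)) ∈ range (e' (ASrc o ep)) := w0.2
              have hwne : (w0 : X.M (ASrc o ep)) ≠ 0 := fun hc => hw0 (Subtype.ext hc)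
              set w := (w0 : X.M (ASrc o ep)) with hwdef
              have hweq : e' (ASrc o ep) w = w := idem_on_range (C4 _) hwmem
              have hsp : range (e' (ASrc o ep)) = Submodule.span ℂ {w} :=
                span_of_dim1 _ hdim hwmem hwne
              have hwker : X.f ep w ≠ 0 := by
                intro hc
                have hmem : w ∈ Submodule.comap (X.f ep) ⊥ := by simpa using hc
                have := hkA w hmem
                rw [hweq] at this
                exact hwne this
              have keyD : ∀ y, e' (ASrc o ep) (s (X.f ep y)) = e' (ASrc o ep) y := by
                intro y
                have hk : s (X.f ep y) - y ∈ Submodule.comap (X.f ep) ⊥ := by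
                  simp only [Submodule.mem_comap, map_sub, Submodule.mem_bot]
                  rw [hsapp]
                  exact sub_self _
                have := hkA _ hk
                rw [map_sub, sub_eq_zero] at this
                exact this
              set epm : X.M (ATgt o ep) →ₗ[ℂ] X.M (ATgt o ep) :=
                X.f ep ∘ₗ e' (ASrc o ep) ∘ₗ s with hepmdef
              have hepg : ∀ y, epm (X.f ep y) = X.f ep (e' (ASrc o ep) y) := by
                intro y
                simp only [hepmdef, LinearMap.comp_apply]
                rw [keyD]
              have hidem : epm ∘ₗ epm = epm := by
                ext z
                simp only [LinearMap.comp_apply]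
                have h1 : epm (X.f ep (e' (ASrc o ep) (s z))) =
                    X.f ep (e' (ASrc o ep) (e' (ASrc o ep) (s z))) := hepg _
                have h2 : e' (ASrc o ep) (e' (ASrc o ep) (s z)) = e' (ASrc o ep) (s z) := by
                  have := congrArg (fun (m : X.M (ASrc o ep) →ₗ[ℂ] X.M (ASrc o ep)) =>
                    m (s z)) (C4 (ASrc o ep))
                  simpa using this
                calc epm (epm z) = epm (X.f ep (e' (ASrc o ep) (s z))) := rfl
                  _ = X.f ep (e' (ASrc o ep) (e' (ASrc o ep) (s z))) := h1
                  _ = X.f ep (e' (ASrc o ep) (s z)) := by rw [h2]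
                  _ = epm z := rfl
              have hepw : epm (X.f ep w) = X.f ep w := by rw [hepg, hweq]
              have hrange : range epm = Submodule.span ℂ {X.f ep w} := by
                apply le_antisymm
                · rintro _ ⟨z, rfl⟩
                  have hmem : e' (ASrc o ep) (s z) ∈ Submodule.span ℂ {w} :=
                    hsp ▸ ⟨s z, rfl⟩
                  obtain ⟨c, hc⟩ := Submodule.mem_span_singleton.mp hmem
                  have : epm z = c • X.f ep w := by
                    simp only [hepmdef, LinearMap.comp_apply]
                    rw [← hc, map_smul]
                  rw [this]
                  exact Submodule.smul_mem _ _ (Submodule.mem_span_singleton_self _)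
                · rw [Submodule.span_le, Set.singleton_subset_iff]
                  exact ⟨X.f ep w, hepw⟩
              have H2 : KLC X (ASrc o ep) l' e' (ASrc o ep) b' := ha' ▸ H
              refine ⟨Function.update e' (ATgt o ep) epm, ATgt o ep, b',
                KL_ext X (ATgt o ep) (ASrc o ep) (by omega) l e' b' l' H2 epm hidem
                  (by rw [hrange]; exact finrank_span_singleton hwker) ?_ ?_ ?_⟩
              · intro i hi
                have hiep : i = ep := Fin.ext (by omega)
                subst hiep
                rw [Function.update_self, Function.update_of_ne
                  (by intro hc; have := congrArg Fin.val hc; omega)]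
                ext y
                simp only [LinearMap.comp_apply]
                exact hepg y
              · intro i hi
                have hiep : i = ep := Fin.ext (by omega)
                subst hiep
                rw [Function.update_of_ne (by intro hc; have := congrArg Fin.val hc; omega)]
                exact ⟨w, hwmem, hwker⟩
              · intro U hU
                have := C9 (Submodule.comap (X.f ep) U)
                  (List.mem_cons_of_mem _ (List.mem_map_of_mem hU))
                rcases this with hA | hB
                · left
                  intro x hx
                  have hsx : s x ∈ Submodule.comap (X.f ep) U := by
                    simp only [Submodule.mem_comap]
                    rw [hsapp]
                    exact hx
                  simp only [hepmdef, LinearMap.comp_apply]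
                  rw [hA _ hsx, map_zero]
                · right
                  rintro _ ⟨z, rfl⟩
                  have : e' (ASrc o ep) (s z) ∈ Submodule.comap (X.f ep) U := hB ⟨s z, rfl⟩
                  simpa [hepmdef] using this
          · -- D1: g not surjective, split off a simple at vp
            have hKW : ¬ (⊤ : Submodule ℂ (X.M (ATgt o ep))) ≤ range (X.f ep) := by
              intro hc
              exact hsurj (top_le_iff.mp hc)
            obtain ⟨u, hu1, hu2, hu3, hu4, hu5⟩ :=
              exists_proj ⊤ (range (X.f ep)) le_top hKW l hl
            refine ⟨Function.update (fun v => (0 : X.M v →ₗ[ℂ] X.M v)) (ATgt o ep) u,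
              ATgt o ep, ATgt o ep, le_refl _, le_refl _, ?_, ?_, ?_, ?_, ?_, ?_, ?_⟩
            · intro v hv
              rw [Function.update_of_ne (ne_of_lt hv)]
            · intro v
              by_cases hv : v = ATgt o ep
              · subst hv; rw [Function.update_self]; exact hu1
              · rw [Function.update_of_ne hv]; exact LinearMap.comp_zero 0
            · intro i hi
              rcases Nat.eq_or_lt_of_le hi with heq | hlt
              · rw [show i = ep from Fin.ext (by omega)]
                rw [Function.update_self,
                  Function.update_of_ne (by intro hc; have := congrArg Fin.val hc; omega)]
                ext y
                simp only [LinearMap.comp_apply, LinearMap.zero_apply, map_zero]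
                exact hu4 ⟨y, rfl⟩
              · have h1 : Function.update (fun v => (0 : X.M v →ₗ[ℂ] X.M v)) (ATgt o ep) u
                    (ATgt o i) = 0 := by
                  apply Function.update_of_ne
                  intro hc
                  have := congrArg Fin.val hc
                  rcases srctgt_val (o := o) i with ⟨_, hh⟩ | ⟨_, hh⟩ <;> omega
                have h2 : Function.update (fun v => (0 : X.M v →ₗ[ℂ] X.M v)) (ATgt o ep) u
                    (ASrc o i) = 0 := by
                  apply Function.update_of_ne
                  intro hc
                  have := congrArg Fin.val hc
                  rcases srctgt_val (o := o) i with ⟨hh, _⟩ | ⟨hh, _⟩ <;> omega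
                rw [h1, h2, LinearMap.zero_comp, LinearMap.comp_zero]
            · intro v hav hvb
              have hv : v = ATgt o ep := le_antisymm hvb hav
              subst hv; rw [Function.update_self]; exact hu2
            · intro v hv
              have hvne : v ≠ ATgt o ep := by
                intro hc; subst hc; exact hv ⟨le_refl _, le_refl _⟩
              rw [Function.update_of_ne hvne]
            · intro i hai hib
              rw [Fin.le_def] at hai hib
              rw [Fin.coe_castSucc] at hai
              rw [Fin.val_succ] at hib
              omega
            · intro U hU
              rw [Function.update_self]
              exact hu5 U hU
        | true =>
          -- rightward arrow `g : M vp → M (vp+1)`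
          have hsv : ASrc o ep = vp := by
            apply Fin.ext
            simp only [ASrc, hor, if_pos, Fin.coe_castSucc]
            exact hep
          subst hsv
          have htval : ((ATgt o ep : Fin (n+1)) : ℕ) = (ep:ℕ) + 1 := by
            simp [ATgt, hor]
          by_cases hinj : ker (X.f ep) = ⊥
          · -- C2: g injective
            have hginj : ∀ y z, X.f ep y = X.f ep z → y = z := by
              intro y z hyz
              have : y - z ∈ ker (X.f ep) := by
                simp only [LinearMap.mem_ker, map_sub]
                rw [hyz]; exact sub_self _
              rw [hinj] at this
              exact sub_eq_zero.mp ((Submodule.mem_bot ℂ).mp this)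
            have hsupp' : ∃ v, ATgt o ep ≤ v ∧ ∃ x : X.M v, x ≠ 0 := by
              refine ⟨ATgt o ep, le_refl _, X.f ep x0, fun hc => hx0 ?_⟩
              have : x0 ∈ ker (X.f ep) := LinearMap.mem_ker.mpr hc
              rw [hinj] at this
              exact (Submodule.mem_bot ℂ).mp this
            set l' := l.map (Submodule.map (X.f ep)) ++ [range (X.f ep)] with hl'def
            have hl' : l'.Pairwise (· ≤ ·) := by
              rw [hl'def, List.pairwise_append]
              refine ⟨List.Pairwise.map _ (fun a b hab => Submodule.map_mono hab) hl,
                List.pairwise_singleton _ _, ?_⟩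
              intro x hx y hy
              obtain ⟨U, hU, rfl⟩ := List.mem_map.mp hx
              rw [List.mem_singleton.mp hy]
              exact LinearMap.map_le_range
            obtain ⟨e', a', b', H⟩ := ih (ATgt o ep) (by omega) l' hl' hsupp'
            obtain ⟨C1, C2, C3, C4, C5, C6, C7, C8, C9⟩ := id H
            have hrg := C9 (range (X.f ep))
              (List.mem_append_right _ (List.mem_singleton_self _))
            by_cases hcase : e' (ATgt o ep) ∘ₗ X.f ep = 0
            · -- no extension
              refine ⟨e', a', b', KL_noext X (ASrc o ep) (ATgt o ep) (by omega) l e' a' b' l' H ?_⟩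
              intro i hi
              rw [show i = ep from Fin.ext (by omega)]
              have hz : e' (ASrc o ep) = 0 := C3 _ (by rw [Fin.lt_def]; omega)
              rw [hz, hcase, LinearMap.comp_zero]
            · -- extension
              have hB : range (e' (ATgt o ep)) ≤ range (X.f ep) := by
                rcases hrg with hA | hB
                · exfalso
                  apply hcase
                  ext y
                  exact hA _ ⟨y, rfl⟩
                · exact hB
              have hzq : e' (ATgt o ep) ≠ 0 := by
                intro hc
                apply hcase
                rw [hc, LinearMap.zero_comp]
              have hin : a' ≤ ATgt o ep ∧ ATgt o ep ≤ b' := by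
                by_contra hcon
                exact hzq (C7 _ hcon)
              have ha' : a' = ATgt o ep := le_antisymm hin.1 C1
              have hdim : finrank ℂ (range (e' (ATgt o ep))) = 1 := C6 _ hin.1 hin.2
              obtain ⟨w0, hw0⟩ := exists_nonzero_of_finrank_one hdim
              have hwmem : (w0 : X.M (ATgt o ep)) ∈ range (e' (ATgt o ep)) := w0.2
              have hwne : (w0 : X.M (ATgt o ep)) ≠ 0 := fun hc => hw0 (Subtype.ext hc)
              set w := (w0 : X.M (ATgt o ep)) with hwdef
              have hweq : e' (ATgt o ep) w = w := idem_on_range (C4 _) hwmem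
              have hsp : range (e' (ATgt o ep)) = Submodule.span ℂ {w} :=
                span_of_dim1 _ hdim hwmem hwne
              obtain ⟨x1, hx1⟩ : w ∈ range (X.f ep) := hB hwmem
              have hx1ne : x1 ≠ 0 := by
                intro hc
                apply hwne
                rw [← hx1, hc, map_zero]
              have hT : ∀ y, (e' (ATgt o ep) ∘ₗ X.f ep) y ∈ Submodule.span ℂ {w} := by
                intro y
                rw [← hsp]
                exact ⟨X.f ep y, rfl⟩
              obtain ⟨φ, hφ⟩ := line_coord (e' (ATgt o ep) ∘ₗ X.f ep) w hwne hT
              have hφ' : ∀ y, e' (ATgt o ep) (X.f ep y) = φ y • w := hφ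
              have hφx1 : φ x1 = 1 := by
                have h1 := hφ' x1
                rw [hx1, hweq] at h1
                have h2 : (φ x1 - 1) • w = 0 := by
                  rw [sub_smul, one_smul, ← h1, sub_self]
                rcases smul_eq_zero.mp h2 with hh | hh
                · exact sub_eq_zero.mp hh
                · exact absurd hh hwne
              set epm : X.M (ASrc o ep) →ₗ[ℂ] X.M (ASrc o ep) :=
                LinearMap.smulRight φ x1 with hepmdef
              have hepapp : ∀ y, epm y = φ y • x1 := fun y => rfl
              have hidem : epm ∘ₗ epm = epm := by
                ext y
                simp only [LinearMap.comp_apply, hepapp, map_smul, smul_eq_mul, hφx1,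
                  mul_one, smul_smul]
              have hrange : range epm = Submodule.span ℂ {x1} := by
                apply le_antisymm
                · rintro _ ⟨z, rfl⟩
                  rw [hepapp]
                  exact Submodule.smul_mem _ _ (Submodule.mem_span_singleton_self _)
                · rw [Submodule.span_le, Set.singleton_subset_iff]
                  refine ⟨x1, ?_⟩
                  rw [hepapp, hφx1, one_smul]
              have H2 : KLC X (ATgt o ep) l' e' (ATgt o ep) b' := ha' ▸ H
              refine ⟨Function.update e' (ASrc o ep) epm, ASrc o ep, b',
                KL_ext X (ASrc o ep) (ATgt o ep) (by omega) l e' b' l' H2 epm hidem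
                  (by rw [hrange]; exact finrank_span_singleton hx1ne) ?_ ?_ ?_⟩
              · intro i hi
                rw [show i = ep from Fin.ext (by omega)]
                rw [Function.update_of_ne (by intro hc; have := congrArg Fin.val hc; omega),
                  Function.update_self]
                ext y
                simp only [LinearMap.comp_apply, hepapp, map_smul]
                rw [hφ' y, hx1]
              · intro i hi
                rw [show i = ep from Fin.ext (by omega)]
                rw [Function.update_self]
                refine ⟨x1, ?_, ?_⟩
                · rw [hrange]
                  exact Submodule.mem_span_singleton_self _
                · rw [hx1]
                  exact hwne
              · intro U hU
                have := C9 (Submodule.map (X.f ep) U)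
                  (List.mem_append_left _ (List.mem_map_of_mem hU))
                rcases this with hA | hBU
                · left
                  intro x hx
                  have h1 : e' (ATgt o ep) (X.f ep x) = 0 :=
                    hA _ (Submodule.mem_map_of_mem hx)
                  rw [hφ' x] at h1
                  rcases smul_eq_zero.mp h1 with hh | hh
                  · rw [hepapp, hh, zero_smul]
                  · exact absurd hh hwne
                · right
                  have : w ∈ Submodule.map (X.f ep) U := hBU hwmem
                  obtain ⟨u1, hu1U, hu1⟩ := this
                  have : u1 = x1 := hginj u1 x1 (by rw [hu1, hx1])
                  subst this
                  rw [hrange, Submodule.span_le, Set.singleton_subset_iff]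
                  exact hu1U
          · -- C1: g not injective, split off a simple at vp inside ker
            have hKW : ¬ ker (X.f ep) ≤ ⊥ := by
              intro hc
              exact hinj (le_bot_iff.mp hc)
            obtain ⟨u, hu1, hu2, hu3, hu4, hu5⟩ :=
              exists_proj (ker (X.f ep)) ⊥ bot_le hKW l hl
            refine ⟨Function.update (fun v => (0 : X.M v →ₗ[ℂ] X.M v)) (ASrc o ep) u,
              ASrc o ep, ASrc o ep, le_refl _, le_refl _, ?_, ?_, ?_, ?_, ?_, ?_, ?_⟩
            · intro v hv
              rw [Function.update_of_ne (ne_of_lt hv)]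
            · intro v
              by_cases hv : v = ASrc o ep
              · subst hv; rw [Function.update_self]; exact hu1
              · rw [Function.update_of_ne hv]; exact LinearMap.comp_zero 0
            · intro i hi
              rcases Nat.eq_or_lt_of_le hi with heq | hlt
              · rw [show i = ep from Fin.ext (by omega)]
                rw [Function.update_self,
                  Function.update_of_ne (by intro hc; have := congrArg Fin.val hc; omega)]
                ext y
                simp only [LinearMap.comp_apply, LinearMap.zero_apply, LinearMap.zero_comp]
                have : u y ∈ ker (X.f ep) := hu3 ⟨y, rfl⟩
                exact (LinearMap.mem_ker.mp this).symm
              · have h1 : Function.update (fun v => (0 : X.M v →ₗ[ℂ] X.M v)) (ASrc o ep) u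
                    (ATgt o i) = 0 := by
                  apply Function.update_of_ne
                  intro hc
                  have := congrArg Fin.val hc
                  rcases srctgt_val (o := o) i with ⟨_, hh⟩ | ⟨_, hh⟩ <;> omega
                have h2 : Function.update (fun v => (0 : X.M v →ₗ[ℂ] X.M v)) (ASrc o ep) u
                    (ASrc o i) = 0 := by
                  apply Function.update_of_ne
                  intro hc
                  have := congrArg Fin.val hc
                  rcases srctgt_val (o := o) i with ⟨hh, _⟩ | ⟨hh, _⟩ <;> omega
                rw [h1, h2, LinearMap.zero_comp, LinearMap.comp_zero]
            · intro v hav hvb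
              have hv : v = ASrc o ep := le_antisymm hvb hav
              subst hv; rw [Function.update_self]; exact hu2
            · intro v hv
              have hvne : v ≠ ASrc o ep := by
                intro hc; subst hc; exact hv ⟨le_refl _, le_refl _⟩
              rw [Function.update_of_ne hvne]
            · intro i hai hib
              rw [Fin.le_def] at hai hib
              rw [Fin.coe_castSucc] at hai
              rw [Fin.val_succ] at hib
              omega
            · intro U hU
              rw [Function.update_self]
              exact hu5 U hU
/-- Interval data for a representation. -/
def IsInterval (X : ARep n o) (a b : Fin (n+1)) : Prop :=
  a ≤ b ∧ (∀ v, ¬(a ≤ v ∧ v ≤ b) → ∀ x : X.M v, x = 0) ∧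
  (∀ v, a ≤ v → v ≤ b → finrank ℂ (X.M v) = 1) ∧
  (∀ i : Fin n, a ≤ i.castSucc → i.succ ≤ b → ∃ x, X.f i x ≠ 0)

theorem interval_of_indec (X : ARep n o) (hX : X.Indecomposable) :
    ∃ a b, IsInterval X a b := by
  obtain ⟨⟨v1, x1, hx1⟩, hidem⟩ := hX
  obtain ⟨e, a, b, C1, C2, C3, C4, C5, C6, C7, C8, C9⟩ :=
    KL X (n+1) (0 : Fin (n+1)) (by simp) [] List.Pairwise.nil ⟨v1, Fin.zero_le _, x1, hx1⟩
  have hmem : e ∈ HomSub X X := by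
    intro i
    exact C5 i (by simp)
  rcases hidem e hmem C4 with rfl | rfl
  · exfalso
    have := C6 a (le_refl _) C2
    have h0 : range ((0 : ∀ v, X.M v →ₗ[ℂ] X.M v) a) = ⊥ := LinearMap.range_zero
    rw [h0, finrank_bot] at this
    omega
  · refine ⟨a, b, C2, ?_, ?_, ?_⟩
    · intro v hv x
      have := C7 v hv
      calc x = LinearMap.id (R := ℂ) (M := X.M v) x := rfl
        _ = (0 : X.M v →ₗ[ℂ] X.M v) x := by rw [← this]
        _ = 0 := rfl
    · intro v hav hvb
      have := C6 v hav hvb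
      rwa [LinearMap.range_id, finrank_top] at this
    · intro i hai hib
      obtain ⟨x, -, hx⟩ := C8 i hai hib
      exact ⟨x, hx⟩

theorem hzero_congr {X Y : ARep n o} (h : ∀ v, X.M v →ₗ[ℂ] Y.M v) {u w : Fin (n+1)}
    (e : u = w) : (h u = 0 ↔ h w = 0) := by subst e; exact Iff.rfl

theorem hom_edge (X Y : ARep n o) (h : ∀ v, X.M v →ₗ[ℂ] Y.M v) (hh : h ∈ HomSub X Y)
    (i : Fin n) (hXs : Function.Surjective (X.f i)) (hYi : Function.Injective (Y.f i)) :
    h (ASrc o i) = 0 ↔ h (ATgt o i) = 0 := by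
  have hc := hh i
  constructor
  · intro h0
    ext z
    obtain ⟨y, rfl⟩ := hXs z
    have := congrArg (fun (m : X.M (ASrc o i) →ₗ[ℂ] Y.M (ATgt o i)) => m y) hc
    simp only [LinearMap.comp_apply] at this
    rw [this, h0]
    simp
  · intro h0
    ext y
    have := congrArg (fun (m : X.M (ASrc o i) →ₗ[ℂ] Y.M (ATgt o i)) => m y) hc
    simp only [LinearMap.comp_apply] at this
    rw [h0] at this
    simp only [LinearMap.zero_apply, Pi.zero_apply] at this ⊢
    apply hYi
    rw [← this]
    simp

theorem hom_chain (X Y : ARep n o) (h : ∀ v, X.M v →ₗ[ℂ] Y.M v) (hh : h ∈ HomSub X Y)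
    (p q : Fin (n+1))
    (hbij : ∀ i : Fin n, p ≤ i.castSucc → i.succ ≤ q →
      Function.Surjective (X.f i) ∧ Function.Injective (Y.f i)) :
    ∀ v w : Fin (n+1), p ≤ v → v ≤ q → p ≤ w → w ≤ q → (h v = 0 ↔ h w = 0) := by
  have key : ∀ k (hpk : (p:ℕ) ≤ k) (hk : k ≤ (q:ℕ)),
      (h ⟨k, by have := q.isLt; omega⟩ = 0 ↔ h p = 0) := by
    intro k hpk
    induction k, hpk using Nat.le_induction with
    | base => intro hk; exact Iff.rfl
    | succ k hpk ih =>
      intro hk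
      have hkn : k < n := by have := q.isLt; omega
      set i : Fin n := ⟨k, hkn⟩ with hidef
      have hival : ((i : Fin n) : ℕ) = k := rfl
      have hedge := hom_edge X Y h hh i
        (hbij i (by rw [Fin.le_def, Fin.coe_castSucc]; omega)
        (by rw [Fin.le_def, Fin.val_succ]; omega)).1
        (hbij i (by rw [Fin.le_def, Fin.coe_castSucc]; omega)
        (by rw [Fin.le_def, Fin.val_succ]; omega)).2
      have hstep : (h ⟨k+1, by have := q.isLt; omega⟩ = 0 ↔
          h ⟨k, by have := q.isLt; omega⟩ = 0) := by
        rcases srctgt_val (o := o) i with ⟨hs, ht⟩ | ⟨hs, ht⟩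
        · have h1 : ASrc o i = ⟨k, by have := q.isLt; omega⟩ :=
            Fin.ext (by show _ = k; omega)
          have h2 : ATgt o i = ⟨k+1, by have := q.isLt; omega⟩ :=
            Fin.ext (by show _ = k + 1; omega)
          exact ((hzero_congr h h2).symm.trans (hedge.symm.trans (hzero_congr h h1)))
        · have h1 : ASrc o i = ⟨k+1, by have := q.isLt; omega⟩ :=
            Fin.ext (by show _ = k + 1; omega)
          have h2 : ATgt o i = ⟨k, by have := q.isLt; omega⟩ :=
            Fin.ext (by show _ = k; omega)
          exact ((hzero_congr h h1).symm.trans (hedge.trans (hzero_congr h h2)))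
      exact hstep.trans (ih (by omega))
  intro v w hpv hvq hpw hwq
  rw [Fin.le_def] at hpv hvq hpw hwq
  have hv := key (v:ℕ) hpv hvq
  have hw := key (w:ℕ) hpw hwq
  simp only [Fin.eta] at hv hw
  exact hv.trans hw.symm

theorem interval_indec (Z : ARep n o) (a b : Fin (n+1)) (h : IsInterval Z a b) :
    Z.Indecomposable := by
  obtain ⟨hab, hout, hdim, hedge⟩ := h
  have hbij : ∀ i : Fin n, a ≤ i.castSucc → i.succ ≤ b →
      Function.Surjective (Z.f i) ∧ Function.Injective (Z.f i) := by
    intro i hai hib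
    rw [Fin.le_def, Fin.coe_castSucc] at hai
    rw [Fin.le_def, Fin.val_succ] at hib
    have hds : finrank ℂ (Z.M (ASrc o i)) = 1 := by
      apply hdim <;> rw [Fin.le_def] <;>
        rcases srctgt_val (o := o) i with ⟨hs, -⟩ | ⟨hs, -⟩ <;> omega
    have hdt : finrank ℂ (Z.M (ATgt o i)) = 1 := by
      apply hdim <;> rw [Fin.le_def] <;>
        rcases srctgt_val (o := o) i with ⟨-, ht⟩ | ⟨-, ht⟩ <;> omega
    have := bij1 hds hdt (Z.f i) (hedge i (by rw [Fin.le_def, Fin.coe_castSucc]; omega)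
      (by rw [Fin.le_def, Fin.val_succ]; omega))
    exact ⟨this.2, this.1⟩
  constructor
  · obtain ⟨x, hx⟩ := exists_nonzero_of_finrank_one (hdim a (le_refl _) hab)
    exact ⟨a, x, hx⟩
  · intro e he hid
    have hdich : ∀ v, a ≤ v → v ≤ b → e v = 0 ∨ e v = LinearMap.id := by
      intro v hav hvb
      exact END1 (hdim v hav hvb) (e v) (hid v)
    have hchain := hom_chain Z Z e he a b (fun i h1 h2 => hbij i h1 h2) 
    have hanontriv : ∃ x : Z.M a, x ≠ 0 :=
      exists_nonzero_of_finrank_one (hdim a (le_refl _) hab)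
    rcases hdich a (le_refl _) hab with ha0 | haid
    · left
      funext v
      by_cases hv : a ≤ v ∧ v ≤ b
      · have := (hchain v a hv.1 hv.2 (le_refl _) hab).mpr ha0
        simpa using this
      · ext x
        rw [hout v hv x]
        simp
    · right
      funext v
      by_cases hv : a ≤ v ∧ v ≤ b
      · rcases hdich v hv.1 hv.2 with h0 | hid'
        · exfalso
          obtain ⟨x, hx⟩ := hanontriv
          have : e a = 0 := (hchain v a hv.1 hv.2 (le_refl _) hab).mp h0
          rw [haid] at this
          have := congrArg (fun (m : Z.M a →ₗ[ℂ] Z.M a) => m x) this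
          simpa using hx this
        · exact hid'
      · ext x
        rw [hout v hv x]
        simp
/-- The image of a nonzero homomorphism between indecomposable
representations of a type `A` quiver is indecomposable. -/
theorem imRep_indecomposable {n : ℕ} {o : Fin n → Bool} (L E : ARep n o)
    (hL : L.Indecomposable) (hE : E.Indecomposable)
    (h : ∀ v, L.M v →ₗ[ℂ] E.M v) (hh : h ∈ HomSub L E) (hne : h ≠ 0) :
    (imRep L E h hh).Indecomposable := by
  obtain ⟨a, b, habl, hLout, hLdim, hLedge⟩ := interval_of_indec L hL
  obtain ⟨c, d, hcdl, hEout, hEdim, hEedge⟩ := interval_of_indec E hE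
  set p := a ⊔ c with hpdef
  set q := b ⊓ d with hqdef
  have halpha : ∀ v, ¬(p ≤ v ∧ v ≤ q) → h v = 0 := by
    intro v hv
    by_cases hL' : a ≤ v ∧ v ≤ b
    · by_cases hE' : c ≤ v ∧ v ≤ d
      · exact absurd ⟨sup_le hL'.1 hE'.1, le_inf hL'.2 hE'.2⟩ hv
      · ext x
        have := hEout v hE' (h v x)
        simpa using this
    · ext x
      rw [hLout v hL' x]
      simp
  obtain ⟨v0, hv0⟩ : ∃ v, h v ≠ 0 := by
    by_contra hc
    push_neg at hc
    exact hne (funext hc)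
  have hv0in : p ≤ v0 ∧ v0 ≤ q := by
    by_contra hc
    exact hv0 (halpha v0 hc)
  have hpq : p ≤ q := le_trans hv0in.1 hv0in.2
  have hsubL : ∀ v : Fin (n+1), p ≤ v → v ≤ q → a ≤ v ∧ v ≤ b := fun v h1 h2 =>
    ⟨le_trans le_sup_left h1, le_trans h2 inf_le_left⟩
  have hsubE : ∀ v : Fin (n+1), p ≤ v → v ≤ q → c ≤ v ∧ v ≤ d := fun v h1 h2 =>
    ⟨le_trans le_sup_right h1, le_trans h2 inf_le_right⟩
  have hcsle : ∀ i : Fin n, i.castSucc ≤ i.succ := by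
    intro i
    rw [Fin.le_def, Fin.coe_castSucc, Fin.val_succ]
    omega
  have hsrcin : ∀ i : Fin n, p ≤ i.castSucc → i.succ ≤ q →
      (p ≤ ASrc o i ∧ ASrc o i ≤ q) ∧ (p ≤ ATgt o i ∧ ATgt o i ≤ q) := by
    intro i h1 h2
    have h1' : p ≤ i.succ := le_trans h1 (hcsle i)
    have h2' : i.castSucc ≤ q := le_trans (hcsle i) h2
    rw [Fin.le_def] at h1 h2 h1' h2' ⊢
    rw [Fin.le_def, Fin.le_def, Fin.le_def]
    rw [Fin.coe_castSucc] at h1 h2'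
    rw [Fin.val_succ] at h2 h1'
    rcases srctgt_val (o := o) i with ⟨hs, ht⟩ | ⟨hs, ht⟩ <;>
      exact ⟨⟨by omega, by omega⟩, by omega, by omega⟩
  have hbij : ∀ i : Fin n, p ≤ i.castSucc → i.succ ≤ q →
      (Function.Surjective (L.f i) ∧ Function.Injective (L.f i)) ∧
      (Function.Surjective (E.f i) ∧ Function.Injective (E.f i)) := by
    intro i h1 h2
    obtain ⟨⟨hs1, hs2⟩, ht1, ht2⟩ := hsrcin i h1 h2
    have hLs := hsubL _ hs1 hs2
    have hLt := hsubL _ ht1 ht2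
    have hEs := hsubE _ hs1 hs2
    have hEt := hsubE _ ht1 ht2
    have hLa := hsubL _ h1 (le_trans (hcsle i) h2)
    have hLb := hsubL _ (le_trans h1 (hcsle i)) h2
    have hEa := hsubE _ h1 (le_trans (hcsle i) h2)
    have hEb := hsubE _ (le_trans h1 (hcsle i)) h2
    have hbL := bij1 (hLdim _ hLs.1 hLs.2) (hLdim _ hLt.1 hLt.2) (L.f i)
      (hLedge i hLa.1 hLb.2)
    have hbE := bij1 (hEdim _ hEs.1 hEs.2) (hEdim _ hEt.1 hEt.2) (E.f i)
      (hEedge i hEa.1 hEb.2)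
    exact ⟨⟨hbL.2, hbL.1⟩, hbE.2, hbE.1⟩
  have hall : ∀ v, p ≤ v → v ≤ q → h v ≠ 0 := by
    intro v h1 h2 hc
    exact hv0 ((hom_chain L E h hh p q
      (fun i ha hb => ⟨((hbij i ha hb).1).1, ((hbij i ha hb).2).2⟩)
      v0 v hv0in.1 hv0in.2 h1 h2).mpr hc)
  have hdims : ∀ v, p ≤ v → v ≤ q → finrank ℂ (range (h v)) = 1 := by
    intro v h1 h2
    have hL1 := hsubL v h1 h2
    have hld := hLdim v hL1.1 hL1.2
    have hle : finrank ℂ (range (h v)) ≤ 1 := by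
      have := LinearMap.finrank_range_le (h v)
      omega
    have hpos : 0 < finrank ℂ (range (h v)) := by
      by_contra hc
      push_neg at hc
      have h0 : finrank ℂ (range (h v)) = 0 := by omega
      have := Submodule.finrank_eq_zero.mp h0
      exact hall v h1 h2 (LinearMap.range_eq_bot.mp this)
    omega
  apply interval_indec _ p q
  refine ⟨hpq, ?_, ?_, ?_⟩
  · intro v hv x
    have hz : h v = 0 := halpha v hv
    obtain ⟨y, hy⟩ := x.2
    apply Subtype.ext
    have hzy : h v y = 0 := by rw [hz]; rfl
    rw [← hy, hzy]
    rfl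
  · intro v h1 h2
    exact hdims v h1 h2
  · intro i h1 h2
    obtain ⟨⟨hs1, hs2⟩, -⟩ := hsrcin i h1 h2
    obtain ⟨x, hx⟩ := exists_nonzero_of_finrank_one (hdims (ASrc o i) hs1 hs2)
    refine ⟨x, ?_⟩
    intro hc
    have hcoe : E.f i (x : E.M (ASrc o i)) = 0 := by
      have := congrArg Subtype.val hc
      exact this
    have hEinj : Function.Injective (E.f i) := ((hbij i h1 h2).2).2
    have hx0 : (x : E.M (ASrc o i)) = 0 := hEinj (by rw [hcoe]; simp)
    exact hx (Subtype.ext hx0)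
end ARep
end

section
/- Let Q be a quiver and M, N finite-dimensional representations of Q over ℂ with underlying graded vector space V. If N lies in the closure of the GL-orbit of M in the representation variety, then dim Hom(M,E) ≤ dim Hom(N,E) for every representation E, and dim Ext¹(M,E) ≤ dim Ext¹(N,E) for every representation E. -/
/-!  **Statement 12.**  A finite quiver is encoded by a finite vertex type `ι`, a finite arrow
type `A` and source/target maps `s t : A → ι`.  A representation with dimension vector
`d : ι → ℕ` is a family of matrices `X a : Matrix (Fin (d (t a))) (Fin (d (s a))) ℂ`
(the linear map `ℂ^{d (s a)} → ℂ^{d (t a)}` along the arrow `a`).  The group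
`GL•(V) = ∏ᵢ GL_{dᵢ}(ℂ)` acts by base change.  For two representations `X` (dimension `d`)
and `Y` (dimension `e`), the space `Hom(X,Y)` is the kernel and `Ext¹(X,Y)` the cokernel of
the standard map  `h ↦ (a ↦ Y a * h (s a) - h (t a) * X a)`  (the 2-term complex coming from
the standard projective resolution over the hereditary path algebra). -/

variable {ι A : Type} [Fintype ι] [Fintype A]

/-- The standard 2-term complex differential whose kernel is `Hom(X,Y)` and whose cokernel is
`Ext¹(X,Y)`. -/
noncomputable def quivExtMap (s t : A → ι) (d e : ι → ℕ)
    (X : ∀ a : A, Matrix (Fin (d (t a))) (Fin (d (s a))) ℂ)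
    (Y : ∀ a : A, Matrix (Fin (e (t a))) (Fin (e (s a))) ℂ) :
    (∀ i : ι, Matrix (Fin (e i)) (Fin (d i)) ℂ) →ₗ[ℂ]
      (∀ a : A, Matrix (Fin (e (t a))) (Fin (d (s a))) ℂ) where
  toFun h := fun a => Y a * h (s a) - h (t a) * X a
  map_add' h h' := by
    funext a
    simp [Matrix.mul_add, Matrix.add_mul]
    abel
  map_smul' c h := by
    funext a
    simp [Matrix.mul_smul, Matrix.smul_mul, smul_sub]

/-- `dim Hom(X,Y)`. -/
noncomputable def quivDimHom (s t : A → ι) (d e : ι → ℕ)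
    (X : ∀ a : A, Matrix (Fin (d (t a))) (Fin (d (s a))) ℂ)
    (Y : ∀ a : A, Matrix (Fin (e (t a))) (Fin (e (s a))) ℂ) : ℕ :=
  Module.finrank ℂ (LinearMap.ker (quivExtMap s t d e X Y))

/-- `dim Ext¹(X,Y)`. -/
noncomputable def quivDimExt (s t : A → ι) (d e : ι → ℕ)
    (X : ∀ a : A, Matrix (Fin (d (t a))) (Fin (d (s a))) ℂ)
    (Y : ∀ a : A, Matrix (Fin (e (t a))) (Fin (e (s a))) ℂ) : ℕ :=
  Module.finrank ℂ
    ((∀ a : A, Matrix (Fin (e (t a))) (Fin (d (s a))) ℂ) ⧸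
      LinearMap.range (quivExtMap s t d e X Y))

lemma gl_isUnit_det {n : ℕ} (g : GL (Fin n) ℂ) : IsUnit ((g : Matrix (Fin n) (Fin n) ℂ)).det :=
  (Matrix.isUnit_iff_isUnit_det _).mp g.isUnit

noncomputable def rmulEquiv {m n : ℕ} (g : GL (Fin n) ℂ) :
    Matrix (Fin m) (Fin n) ℂ ≃ₗ[ℂ] Matrix (Fin m) (Fin n) ℂ where
  toFun X := X * (g : Matrix (Fin n) (Fin n) ℂ)
  invFun X := X * ((↑g⁻¹ : Matrix (Fin n) (Fin n) ℂ))
  map_add' X Y := Matrix.add_mul ..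
  map_smul' c X := Matrix.smul_mul ..
  left_inv X := by
    simp [Matrix.mul_assoc, Matrix.mul_nonsing_inv _ (gl_isUnit_det g)]
  right_inv X := by
    simp [Matrix.mul_assoc, Matrix.nonsing_inv_mul _ (gl_isUnit_det g)]

lemma rank_orbit (s t : A → ι) (d e : ι → ℕ)
    (M : ∀ a : A, Matrix (Fin (d (t a))) (Fin (d (s a))) ℂ)
    (E : ∀ a : A, Matrix (Fin (e (t a))) (Fin (e (s a))) ℂ)
    (g : ∀ i : ι, GL (Fin (d i)) ℂ) :
    Module.finrank ℂ (LinearMap.range (quivExtMap s t d e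
      (fun a => (↑(g (t a)) : Matrix (Fin (d (t a))) (Fin (d (t a))) ℂ) * M a * (↑(g (s a))⁻¹ : Matrix (Fin (d (s a))) (Fin (d (s a))) ℂ)) E)) =
    Module.finrank ℂ (LinearMap.range (quivExtMap s t d e M E)) := by
  set Z : ∀ a : A, Matrix (Fin (d (t a))) (Fin (d (s a))) ℂ :=
    fun a => (↑(g (t a)) : Matrix (Fin (d (t a))) (Fin (d (t a))) ℂ) * M a * (↑(g (s a))⁻¹ : Matrix (Fin (d (s a))) (Fin (d (s a))) ℂ) with hZ
  set D : (∀ i : ι, Matrix (Fin (e i)) (Fin (d i)) ℂ) ≃ₗ[ℂ]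
      (∀ i : ι, Matrix (Fin (e i)) (Fin (d i)) ℂ) :=
    LinearEquiv.piCongrRight (fun i => rmulEquiv (g i)) with hD
  set C : (∀ a : A, Matrix (Fin (e (t a))) (Fin (d (s a))) ℂ) ≃ₗ[ℂ]
      (∀ a : A, Matrix (Fin (e (t a))) (Fin (d (s a))) ℂ) :=
    LinearEquiv.piCongrRight (fun a => rmulEquiv (g (s a))) with hC
  have key : (quivExtMap s t d e M E).comp D.toLinearMap
      = C.toLinearMap.comp (quivExtMap s t d e Z E) := by
    apply LinearMap.ext
    intro h
    funext a
    show E a * (h (s a) * (g (s a) : Matrix (Fin (d (s a))) (Fin (d (s a))) ℂ)) - (h (t a) * (g (t a) : Matrix (Fin (d (t a))) (Fin (d (t a))) ℂ)) * M a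
      = (E a * h (s a) - h (t a) * Z a) * (g (s a) : Matrix (Fin (d (s a))) (Fin (d (s a))) ℂ)
    rw [hZ]
    simp only [Matrix.sub_mul, Matrix.mul_assoc, Matrix.coe_units_inv,
      Matrix.nonsing_inv_mul _ (gl_isUnit_det (g (s a))), Matrix.mul_one]
  have h1 : LinearMap.range ((quivExtMap s t d e M E).comp D.toLinearMap)
      = LinearMap.range (quivExtMap s t d e M E) := by
    rw [LinearMap.range_comp]
    simp
  have h2 : LinearMap.range (C.toLinearMap.comp (quivExtMap s t d e Z E))
      = Submodule.map C.toLinearMap (LinearMap.range (quivExtMap s t d e Z E)) :=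
    LinearMap.range_comp _ _
  rw [← h1, key, h2]
  exact (LinearEquiv.finrank_map_eq C _).symm

lemma rank_semicont (s t : A → ι) (d e : ι → ℕ)
    (N : ∀ a : A, Matrix (Fin (d (t a))) (Fin (d (s a))) ℂ)
    (E : ∀ a : A, Matrix (Fin (e (t a))) (Fin (e (s a))) ℂ)
    (S : Set (∀ a : A, Matrix (Fin (d (t a))) (Fin (d (s a))) ℂ))
    (hN : N ∈ closure S) :
    ∃ Z ∈ S, Module.finrank ℂ (LinearMap.range (quivExtMap s t d e N E)) ≤
      Module.finrank ℂ (LinearMap.range (quivExtMap s t d e Z E)) := by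
  classical
  set r := Module.finrank ℂ (LinearMap.range (quivExtMap s t d e N E)) with hr
  let b : Module.Basis (Fin r) ℂ (LinearMap.range (quivExtMap s t d e N E)) :=
    Module.finBasis ℂ _
  have hmem : ∀ j : Fin r, (b j : ∀ a : A, Matrix (Fin (e (t a))) (Fin (d (s a))) ℂ) ∈
      LinearMap.range (quivExtMap s t d e N E) := fun j => (b j).2
  choose u hu using fun j => hmem j
  obtain ⟨π, hπ⟩ := (LinearMap.range (quivExtMap s t d e N E)).subtype.exists_leftInverse_of_injective
    (Submodule.ker_subtype _)
  set f : (∀ a : A, Matrix (Fin (e (t a))) (Fin (d (s a))) ℂ) →ₗ[ℂ] (Fin r → ℂ) :=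
    (b.equivFun.toLinearMap).comp π with hf
  set G : (∀ a : A, Matrix (Fin (d (t a))) (Fin (d (s a))) ℂ) → Matrix (Fin r) (Fin r) ℂ :=
    fun Z => Matrix.of fun i j => f (quivExtMap s t d e Z E (u j)) i with hG
  have hGN : G N = 1 := by
    ext i j
    have h1 : quivExtMap s t d e N E (u j) = ((b j : _)) := hu j
    have h2 : π ((LinearMap.range (quivExtMap s t d e N E)).subtype (b j)) = b j := by
      rw [← LinearMap.comp_apply, hπ]; rfl
    simp only [hG, Matrix.of_apply, h1, hf, LinearMap.comp_apply]
    rw [show ((b j : _)) = (LinearMap.range (quivExtMap s t d e N E)).subtype (b j) from rfl, h2]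
    simp [b.equivFun_self, Matrix.one_apply, eq_comm]
  have hcont : Continuous fun Z => (G Z).det := by
    apply Continuous.matrix_det
    apply continuous_matrix
    intro i j
    have hinner : Continuous fun Z : (∀ a : A, Matrix (Fin (d (t a))) (Fin (d (s a))) ℂ) =>
        quivExtMap s t d e Z E (u j) := by
      apply continuous_pi
      intro a
      exact Continuous.sub continuous_const
        (Continuous.matrix_mul continuous_const (continuous_apply a))
    exact (continuous_apply i).comp (f.continuous_of_finiteDimensional.comp hinner)
  have hopen : IsOpen {Z : (∀ a : A, Matrix (Fin (d (t a))) (Fin (d (s a))) ℂ) |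
      (G Z).det ≠ 0} := isOpen_compl_singleton.preimage hcont
  have hNmem : N ∈ {Z : (∀ a : A, Matrix (Fin (d (t a))) (Fin (d (s a))) ℂ) |
      (G Z).det ≠ 0} := by
    simp [Set.mem_setOf_eq, hGN]
  obtain ⟨Z, hZo, hZS⟩ := mem_closure_iff.mp hN _ hopen hNmem
  refine ⟨Z, hZS, ?_⟩
  set U : (Fin r → ℂ) →ₗ[ℂ] (∀ i : ι, Matrix (Fin (e i)) (Fin (d i)) ℂ) :=
    Fintype.linearCombination ℂ u with hU
  set T : (Fin r → ℂ) →ₗ[ℂ] (Fin r → ℂ) :=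
    f.comp ((quivExtMap s t d e Z E).comp U) with hT
  have hTm : LinearMap.toMatrix' T = G Z := by
    ext i j
    rw [LinearMap.toMatrix'_apply]
    have hUj : U (fun j' => if j' = j then 1 else 0) = u j := by
      simp [hU, Fintype.linearCombination_apply, ite_smul]
    rw [show (Pi.single j 1 : Fin r → ℂ) = fun j' => if j' = j then 1 else 0 from
      funext fun j' => Pi.single_apply j 1 j']
    simp [hT, hUj, hG]
  have hdet : (G Z).det ≠ 0 := hZo
  have hTlin : T = Matrix.toLin' (G Z) := by rw [← hTm, Matrix.toLin'_toMatrix']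
  have hsurj : Function.Surjective T := by
    intro y
    refine ⟨Matrix.toLin' (G Z)⁻¹ y, ?_⟩
    rw [hTlin, ← LinearMap.comp_apply, ← Matrix.toLin'_mul,
      Matrix.mul_nonsing_inv _ (isUnit_iff_ne_zero.mpr hdet), Matrix.toLin'_one,
      LinearMap.id_apply]
  have hrangeT : LinearMap.range T = ⊤ := LinearMap.range_eq_top.mpr hsurj
  have hle : LinearMap.range T ≤
      Submodule.map f (LinearMap.range (quivExtMap s t d e Z E)) := by
    rintro x ⟨y, rfl⟩
    exact ⟨quivExtMap s t d e Z E (U y), ⟨U y, rfl⟩, rfl⟩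
  have h5 : r ≤ Module.finrank ℂ
      (Submodule.map f (LinearMap.range (quivExtMap s t d e Z E))) := by
    have := Submodule.finrank_mono (hrangeT ▸ hle : (⊤ : Submodule ℂ (Fin r → ℂ)) ≤ _)
    rwa [finrank_top, Module.finrank_fin_fun] at this
  exact h5.trans (Submodule.finrank_map_le f _)

theorem hom_ext_le_of_mem_orbit_closure'
    (s t : A → ι) (d : ι → ℕ)
    (M N : ∀ a : A, Matrix (Fin (d (t a))) (Fin (d (s a))) ℂ)
    (hdeg : N ∈ closure {Z : ∀ a : A, Matrix (Fin (d (t a))) (Fin (d (s a))) ℂ |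
        ∃ g : ∀ i : ι, GL (Fin (d i)) ℂ,
          Z = fun a => (↑(g (t a)) : Matrix (Fin (d (t a))) (Fin (d (t a))) ℂ) * M a *
            (↑(g (s a))⁻¹ : Matrix (Fin (d (s a))) (Fin (d (s a))) ℂ)})
    (e : ι → ℕ) (E : ∀ a : A, Matrix (Fin (e (t a))) (Fin (e (s a))) ℂ) :
    Module.finrank ℂ (LinearMap.range (quivExtMap s t d e N E)) ≤
      Module.finrank ℂ (LinearMap.range (quivExtMap s t d e M E)) := by
  obtain ⟨Z, ⟨g, hZ⟩, hle⟩ := rank_semicont s t d e N E _ hdeg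
  rw [hZ] at hle
  exact hle.trans_eq (rank_orbit s t d e M E g)

/-- If `N` lies in the closure of the base-change orbit of `M`, then
`dim Hom(M,E) ≤ dim Hom(N,E)` and `dim Ext¹(M,E) ≤ dim Ext¹(N,E)` for every
representation `E`. -/
theorem hom_ext_le_of_mem_orbit_closure
    (s t : A → ι) (d : ι → ℕ)
    (M N : ∀ a : A, Matrix (Fin (d (t a))) (Fin (d (s a))) ℂ)
    (hdeg : N ∈ closure {Z : ∀ a : A, Matrix (Fin (d (t a))) (Fin (d (s a))) ℂ |
        ∃ g : ∀ i : ι, GL (Fin (d i)) ℂ,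
          Z = fun a => (↑(g (t a)) : Matrix (Fin (d (t a))) (Fin (d (t a))) ℂ) * M a *
            (↑(g (s a))⁻¹ : Matrix (Fin (d (s a))) (Fin (d (s a))) ℂ)})
    (e : ι → ℕ) (E : ∀ a : A, Matrix (Fin (e (t a))) (Fin (e (s a))) ℂ) :
    quivDimHom s t d e M E ≤ quivDimHom s t d e N E ∧
    quivDimExt s t d e M E ≤ quivDimExt s t d e N E := by
  have hrank := hom_ext_le_of_mem_orbit_closure' s t d M N hdeg e E
  have hM := LinearMap.finrank_range_add_finrank_ker (quivExtMap s t d e M E)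
  have hN := LinearMap.finrank_range_add_finrank_ker (quivExtMap s t d e N E)
  have hqM := Submodule.finrank_quotient_add_finrank (LinearMap.range (quivExtMap s t d e M E))
  have hqN := Submodule.finrank_quotient_add_finrank (LinearMap.range (quivExtMap s t d e N E))
  unfold quivDimHom quivDimExt
  omega
end

section
/- Let Q be a quiver without oriented cycles and M a finite-dimensional representation of Q with dimension vector d. Then the GL•-orbit of M is dense (open) in the representation variety R_d if and only if Ext¹(M,M) = 0. -/
/-!  **Statement 14.**  For a finite quiver without oriented cycles and a representation `M`
of dimension vector `d` (encoded by matrices), the base-change orbit of `M` is dense in the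
representation variety `R_d = ∏_a Matrix (Fin (d (t a))) (Fin (d (s a))) ℂ` if and only if
`Ext¹(M,M) = 0`.  Ext¹ is the cokernel of the standard 2-term complex. -/

variable {ι A : Type} [Fintype ι] [Fintype A]

open Matrix Module Set Function Polynomial


section MatrixHelpers

variable {m k : Type} [Fintype m] {n : ℕ}

lemma stardot_eq_zero (v : m → ℂ) (h : star v ⬝ᵥ v = 0) : v = 0 := by
  have hs : (∑ i, Complex.normSq (v i)) = 0 := by
    have : ((∑ i, Complex.normSq (v i) : ℝ) : ℂ) = 0 := by
      rw [Complex.ofReal_sum]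
      rw [dotProduct] at h
      calc (∑ i, ((Complex.normSq (v i) : ℝ) : ℂ))
          = ∑ i, star (v i) * v i := by
            refine Finset.sum_congr rfl fun i _ => ?_
            rw [Complex.star_def, Complex.normSq_eq_conj_mul_self]
        _ = 0 := by simpa [Pi.star_apply] using h
    exact_mod_cast this
  funext i
  have hnn : ∀ i ∈ Finset.univ, (0:ℝ) ≤ Complex.normSq (v i) :=
    fun i _ => Complex.normSq_nonneg _
  have := (Finset.sum_eq_zero_iff_of_nonneg hnn).1 hs i (Finset.mem_univ i)
  simpa using Complex.normSq_eq_zero.1 this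

/-- If `BᴴB x = 0` then `B x = 0` (over `ℂ`). -/
lemma star_dot_vanish (B : Matrix m (Fin n) ℂ) (x : Fin n → ℂ)
    (h : (Bᴴ * B) *ᵥ x = 0) : B *ᵥ x = 0 := by
  have h1 : star (B *ᵥ x) ⬝ᵥ (B *ᵥ x) = 0 := by
    rw [star_mulVec, ← Matrix.dotProduct_mulVec, Matrix.mulVec_mulVec, h,
      dotProduct_zero]
  exact stardot_eq_zero _ h1

lemma gram_det_ne_zero (B : Matrix m (Fin n) ℂ)
    (hinj : ∀ x, B *ᵥ x = 0 → x = 0) : (Bᴴ * B).det ≠ 0 := by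
  have hU : Function.Injective ((Bᴴ * B).mulVec) := by
    intro x y hxy
    have h0 : (Bᴴ * B) *ᵥ (x - y) = 0 := by
      rw [Matrix.mulVec_sub, hxy, sub_self]
    have hB := star_dot_vanish B (x - y) h0
    have := hinj _ hB
    exact sub_eq_zero.1 this
  have : IsUnit (Bᴴ * B) := Matrix.mulVec_injective_iff_isUnit.1 hU
  have := (Matrix.isUnit_iff_isUnit_det _).1 this
  exact this.ne_zero

/-- uniqueness of solutions for a matrix with nonzero determinant -/
lemma det_ne_zero_mulVec_inj {N : Matrix (Fin n) (Fin n) ℂ} (hdet : N.det ≠ 0)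
    {x y : Fin n → ℂ} (h : N *ᵥ x = N *ᵥ y) : x = y :=
  Matrix.mulVec_injective_iff_isUnit.2
    ((Matrix.isUnit_iff_isUnit_det _).2 (isUnit_iff_ne_zero.2 hdet)) h

/-- surjectivity of `mulVecLin B` implies the Gram matrix `B * Bᴴ` has nonzero determinant. -/
lemma surj_gram_det_ne_zero {N' : ℕ} (B : Matrix (Fin N') (Fin n) ℂ)
    (hs : Function.Surjective B.mulVecLin) : (B * Bᴴ).det ≠ 0 := by
  have key : ∀ x, (B * Bᴴ) *ᵥ x = 0 → x = 0 := by
    intro x hx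
    have hBH : Bᴴ *ᵥ x = 0 := by
      apply star_dot_vanish Bᴴ x
      rwa [conjTranspose_conjTranspose]
    obtain ⟨y, hy⟩ := hs x
    have hxy : star x ⬝ᵥ x = 0 := by
      have h1 : star x ᵥ* B = 0 := by
        have h2 : star x ᵥ* Bᴴᴴ = star (Bᴴ *ᵥ x) := (star_mulVec Bᴴ x).symm
        rw [conjTranspose_conjTranspose] at h2
        rw [h2, hBH]
        simp
      calc star x ⬝ᵥ x = star x ⬝ᵥ (B *ᵥ y) := by rw [show B *ᵥ y = x from hy]
        _ = (star x ᵥ* B) ⬝ᵥ y := Matrix.dotProduct_mulVec _ _ _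
        _ = 0 := by rw [h1]; simp
    exact stardot_eq_zero x hxy
  have : ∀ x, ((B * Bᴴ)ᴴ * (B * Bᴴ)) *ᵥ x = 0 → x = 0 := by
    intro x hx
    exact key x (star_dot_vanish (B * Bᴴ) x hx)
  -- direct: injective of (B*Bᴴ)
  have hU : Function.Injective ((B * Bᴴ).mulVec) := by
    intro x y hxy
    have h0 : (B * Bᴴ) *ᵥ (x - y) = 0 := by rw [Matrix.mulVec_sub, hxy, sub_self]
    exact sub_eq_zero.1 (key _ h0)
  exact ((Matrix.isUnit_iff_isUnit_det _).1 (Matrix.mulVec_injective_iff_isUnit.1 hU)).ne_zero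

/-- if `A * Bᴴ` is invertible then `mulVecLin A` is surjective. -/
lemma surj_of_det_mul_ne_zero {N' : ℕ} (A B : Matrix (Fin N') (Fin n) ℂ)
    (hdet : (A * Bᴴ).det ≠ 0) : Function.Surjective A.mulVecLin := by
  intro y
  have hsurj : Function.Surjective ((A * Bᴴ).mulVec) :=
    Matrix.mulVec_surjective_iff_isUnit.2 ((Matrix.isUnit_iff_isUnit_det _).2
      (isUnit_iff_ne_zero.2 hdet))
  obtain ⟨z, hz⟩ := hsurj y
  exact ⟨Bᴴ *ᵥ z, by rw [Matrix.mulVecLin_apply, Matrix.mulVec_mulVec]; exact hz⟩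

/-- determinant polynomial along a pencil of matrices -/
noncomputable def detPoly (P Q : Matrix (Fin n) (Fin n) ℂ) : Polynomial ℂ :=
  Matrix.det (Matrix.of fun i j => Polynomial.C (P i j) + Polynomial.X * Polynomial.C (Q i j))

lemma detPoly_eval (P Q : Matrix (Fin n) (Fin n) ℂ) (z : ℂ) :
    (detPoly P Q).eval z = (P + z • Q).det := by
  have := RingHom.map_det (Polynomial.evalRingHom z)
    (Matrix.of fun i j => Polynomial.C (P i j) + Polynomial.X * Polynomial.C (Q i j))
  rw [detPoly]
  rw [show Polynomial.eval z = (Polynomial.evalRingHom z : Polynomial ℂ → ℂ) from rfl]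
  rw [this]
  congr 1
  ext i j
  show Polynomial.eval z (Polynomial.C (P i j) + Polynomial.X * Polynomial.C (Q i j))
      = P i j + z * Q i j
  simp only [Polynomial.eval_add, Polynomial.eval_C, Polynomial.eval_mul, Polynomial.eval_X]

end MatrixHelpers

section Core

variable {P : Type} [TopologicalSpace P]

/-- **Core continuity lemma.** Given a continuous family of matrices `Afam p` whose kernels all
have dimension at least `e`, where at `p₀` the kernel has a complement witness `Pm` (of size `e`),
any kernel vector `k₀` at `p₀` extends to a continuous family of kernel vectors near `p₀`. -/
lemma core_kernel_family {NR DC e : ℕ}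
    (Afam : P → Matrix (Fin NR) (Fin DC) ℂ) (hA : Continuous Afam)
    (p₀ : P) (k₀ : Fin DC → ℂ) (hk₀ : Afam p₀ *ᵥ k₀ = 0)
    (Pm : Matrix (Fin e) (Fin DC) ℂ)
    (hPm : ∀ x, Afam p₀ *ᵥ x = 0 → Pm *ᵥ x = 0 → x = 0)
    (hdim : ∀ p, e ≤ Module.finrank ℂ (LinearMap.ker (Matrix.mulVecLin (Afam p)))) :
    ∃ U : Set P, IsOpen U ∧ p₀ ∈ U ∧ ∃ h : P → (Fin DC → ℂ),
      ContinuousOn h U ∧ h p₀ = k₀ ∧ ∀ p ∈ U, Afam p *ᵥ h p = 0 := by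
  classical
  set B : P → Matrix (Fin NR ⊕ Fin e) (Fin DC) ℂ := fun p => Matrix.fromRows (Afam p) Pm with hB
  have hBcont : Continuous B := by
    apply continuous_matrix
    rintro (i | i) j
    · exact hA.matrix_elem i j
    · exact continuous_const
  set N : P → Matrix (Fin DC) (Fin DC) ℂ := fun p => (B p)ᴴ * (B p) with hN
  have hNcont : Continuous N := (hBcont.matrix_conjTranspose).matrix_mul hBcont
  have hNdet : Continuous fun p => (N p).det := hNcont.matrix_det
  have hBzero : ∀ p x, B p *ᵥ x = 0 ↔ (Afam p *ᵥ x = 0 ∧ Pm *ᵥ x = 0) := by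
    intro p x
    constructor
    · intro hz
      rw [hB] at hz
      simp only [Matrix.fromRows_mulVec] at hz
      exact ⟨funext fun i => congrFun hz (Sum.inl i), funext fun i => congrFun hz (Sum.inr i)⟩
    · rintro ⟨h1, h2⟩
      rw [hB]
      simp only [Matrix.fromRows_mulVec, h1, h2]
      funext i; cases i <;> rfl
  have hNzero : ∀ p x, (N p).det ≠ 0 → N p *ᵥ x = 0 → x = 0 := by
    intro p x hp hNx
    exact det_ne_zero_mulVec_inj hp (by rw [hNx, Matrix.mulVec_zero])
  have hNB : ∀ p x, N p *ᵥ x = (B p)ᴴ *ᵥ (B p *ᵥ x) := by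
    intro p x
    rw [hN]
    simp only
    rw [← Matrix.mulVec_mulVec]
  have hdet₀ : (N p₀).det ≠ 0 := by
    apply gram_det_ne_zero
    intro x hx
    exact hPm x ((hBzero p₀ x).1 hx).1 ((hBzero p₀ x).1 hx).2
  set y₀ : Fin NR ⊕ Fin e → ℂ := B p₀ *ᵥ k₀ with hy₀
  have hy₀' : y₀ = Sum.elim (0 : Fin NR → ℂ) (Pm *ᵥ k₀) := by
    rw [hy₀, hB]
    simp only [Matrix.fromRows_mulVec, hk₀]
  set h : P → (Fin DC → ℂ) :=
    fun p => ((N p).det)⁻¹ • ((N p).adjugate *ᵥ ((B p)ᴴ *ᵥ y₀)) with hh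
  have hsolve : ∀ p, (N p).det ≠ 0 → N p *ᵥ h p = (B p)ᴴ *ᵥ y₀ := by
    intro p hp
    rw [hh]
    simp only
    rw [Matrix.mulVec_smul, Matrix.mulVec_mulVec, Matrix.mul_adjugate,
      Matrix.smul_mulVec, Matrix.one_mulVec, smul_smul, inv_mul_cancel₀ hp, one_smul]
  have huniq : ∀ p x, (N p).det ≠ 0 → B p *ᵥ x = y₀ → h p = x := by
    intro p x hp hBx
    apply det_ne_zero_mulVec_inj hp
    rw [hsolve p hp, hNB, hBx]
  have hexists : ∀ p, (N p).det ≠ 0 → ∃ x, Afam p *ᵥ x = 0 ∧ Pm *ᵥ x = Pm *ᵥ k₀ := by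
    intro p hp
    set K := LinearMap.ker (Matrix.mulVecLin (Afam p)) with hK
    set φ : K →ₗ[ℂ] (Fin e → ℂ) := (Matrix.mulVecLin Pm).comp K.subtype with hφ
    have hφinj : Function.Injective φ := by
      rw [← LinearMap.ker_eq_bot, LinearMap.ker_eq_bot']
      rintro ⟨x, hx⟩ hφx
      have hx' : Afam p *ᵥ x = 0 := by
        simpa [Matrix.mulVecLin_apply] using (LinearMap.mem_ker.1 hx)
      have hPmx : Pm *ᵥ x = 0 := by
        simpa [hφ, Matrix.mulVecLin_apply] using hφx
      have hBx : B p *ᵥ x = 0 := (hBzero p x).2 ⟨hx', hPmx⟩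
      have hNx : N p *ᵥ x = 0 := by rw [hNB, hBx, Matrix.mulVec_zero]
      exact Subtype.ext (hNzero p x hp hNx)
    have h1 : Module.finrank ℂ (LinearMap.range φ) = Module.finrank ℂ K :=
      LinearMap.finrank_range_of_inj hφinj
    have hfe : Module.finrank ℂ (Fin e → ℂ) = e := by simp
    have h2 : Module.finrank ℂ K ≤ e := by
      have := Submodule.finrank_le (LinearMap.range φ)
      rw [h1, hfe] at this
      exact this
    have hrange : LinearMap.range φ = ⊤ := by
      apply Submodule.eq_top_of_finrank_eq
      rw [h1, le_antisymm h2 (hdim p), hfe]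
    have hmem : (Pm *ᵥ k₀) ∈ LinearMap.range φ := by rw [hrange]; trivial
    obtain ⟨⟨x, hxK⟩, hx⟩ := hmem
    refine ⟨x, ?_, ?_⟩
    · simpa [Matrix.mulVecLin_apply] using (LinearMap.mem_ker.1 hxK)
    · simpa [hφ, Matrix.mulVecLin_apply] using hx
  refine ⟨{p | (N p).det ≠ 0}, ?_, hdet₀, h, ?_, ?_, ?_⟩
  · exact isOpen_compl_singleton.preimage hNdet
  · have hwcont : Continuous fun p => (N p).adjugate *ᵥ ((B p)ᴴ *ᵥ y₀) :=
      (hNcont.matrix_adjugate).matrix_mulVec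
        ((hBcont.matrix_conjTranspose).matrix_mulVec continuous_const)
    exact ((hNdet.continuousOn.inv₀ fun p hp => hp)).smul hwcont.continuousOn
  · exact huniq p₀ k₀ hdet₀ rfl
  · intro p hp
    obtain ⟨x, hx1, hx2⟩ := hexists p hp
    have hBx : B p *ᵥ x = y₀ := by
      rw [hB]
      simp only [Matrix.fromRows_mulVec, hx1, hx2, hy₀']
    rw [huniq p x hp hBx]
    exact hx1

end Core

section QuiverSetup

/-- the space of tuples of square matrices (endomorphism parameter space) -/
abbrev ESp (d : ι → ℕ) : Type := ∀ i : ι, Matrix (Fin (d i)) (Fin (d i)) ℂ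

/-- the representation space -/
abbrev FSp (s t : A → ι) (d : ι → ℕ) : Type :=
  ∀ a : A, Matrix (Fin (d (t a))) (Fin (d (s a))) ℂ

variable (s t : A → ι) (d : ι → ℕ)

lemma quivExtMap_apply (X Y : FSp s t d) (h : ESp d) (a : A) :
    quivExtMap s t d d X Y h a = Y a * h (s a) - h (t a) * X a := rfl

/-- `Z ↦ quivExtMap Z Z` as a linear map. -/
noncomputable def TQ : FSp s t d →ₗ[ℂ] (ESp d →ₗ[ℂ] FSp s t d) where
  toFun Z := quivExtMap s t d d Z Z
  map_add' Z W := by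
    apply LinearMap.ext; intro h; funext a
    simp only [quivExtMap_apply, LinearMap.add_apply, Pi.add_apply, Matrix.add_mul,
      Matrix.mul_add]
    abel
  map_smul' c Z := by
    apply LinearMap.ext; intro h; funext a
    simp only [quivExtMap_apply, LinearMap.smul_apply, Pi.smul_apply, Matrix.smul_mul,
      Matrix.mul_smul, RingHom.id_apply, smul_sub]

/-- `Y ↦ (h ↦ (a ↦ Y a * h (s a)))` as a linear map. -/
noncomputable def TY : FSp s t d →ₗ[ℂ] (ESp d →ₗ[ℂ] FSp s t d) where
  toFun Y :=
    { toFun := fun h => fun a => Y a * h (s a)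
      map_add' := fun h h' => by funext a; simp [Matrix.mul_add]
      map_smul' := fun c h => by funext a; simp [Matrix.mul_smul] }
  map_add' Y Y' := by
    apply LinearMap.ext; intro h; funext a
    simp [Matrix.add_mul]
  map_smul' c Y := by
    apply LinearMap.ext; intro h; funext a
    simp [Matrix.smul_mul]

/-- `h ↦ (a ↦ h (t a) * X a)` as a linear map, for fixed `X`. -/
noncomputable def CXl (X : FSp s t d) : ESp d →ₗ[ℂ] FSp s t d where
  toFun h := fun a => h (t a) * X a
  map_add' h h' := by funext a; simp [Matrix.add_mul]
  map_smul' c h := by funext a; simp [Matrix.smul_mul]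

lemma L_decomp (X Y : FSp s t d) :
    quivExtMap s t d d X Y = TY s t d Y - CXl s t d X := rfl

/-- a fixed basis of `ESp d` -/
noncomputable def bE : Basis (Fin (finrank ℂ (ESp d))) ℂ (ESp d) := Module.finBasis ℂ _

/-- a fixed basis of `FSp s t d` -/
noncomputable def bF : Basis (Fin (finrank ℂ (FSp s t d))) ℂ (FSp s t d) := Module.finBasis ℂ _

/-- matrices of linear maps `ESp d →ₗ FSp s t d` w.r.t. the fixed bases -/
noncomputable def toMx : (ESp d →ₗ[ℂ] FSp s t d) ≃ₗ[ℂ]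
    Matrix (Fin (finrank ℂ (FSp s t d))) (Fin (finrank ℂ (ESp d))) ℂ :=
  LinearMap.toMatrix (bE d) (bF s t d)

lemma mulVec_toMx (f : ESp d →ₗ[ℂ] FSp s t d) (x : ESp d) :
    (toMx s t d f) *ᵥ ((bE d).equivFun x) = (bF s t d).equivFun (f x) := by
  have := LinearMap.toMatrix_mulVec_repr (bE d) (bF s t d) f x
  simpa [Basis.equivFun_apply, toMx] using this

lemma zero_iff_toMx (f : ESp d →ₗ[ℂ] FSp s t d) (x : ESp d) :
    f x = 0 ↔ (toMx s t d f) *ᵥ ((bE d).equivFun x) = 0 := by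
  rw [mulVec_toMx]
  constructor
  · intro h; rw [h]; simp
  · intro h
    have := (bF s t d).equivFun.map_eq_zero_iff.1 h
    exact this

lemma ker_toMx_map (f : ESp d →ₗ[ℂ] FSp s t d) :
    LinearMap.ker (Matrix.mulVecLin (toMx s t d f)) =
      Submodule.map ((bE d).equivFun : ESp d ≃ₗ[ℂ] _).toLinearMap (LinearMap.ker f) := by
  ext v
  constructor
  · intro hv
    refine ⟨(bE d).equivFun.symm v, ?_, (bE d).equivFun.apply_symm_apply v⟩
    rw [SetLike.mem_coe, LinearMap.mem_ker]
    rw [zero_iff_toMx s t d f]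
    rw [LinearEquiv.apply_symm_apply]
    simpa [Matrix.mulVecLin_apply] using (LinearMap.mem_ker.1 hv)
  · rintro ⟨x, hx, rfl⟩
    rw [LinearMap.mem_ker, Matrix.mulVecLin_apply]
    exact (zero_iff_toMx s t d f x).1 hx

lemma finrank_ker_toMx (f : ESp d →ₗ[ℂ] FSp s t d) :
    finrank ℂ (LinearMap.ker (Matrix.mulVecLin (toMx s t d f))) =
      finrank ℂ (LinearMap.ker f) := by
  rw [ker_toMx_map]
  exact LinearEquiv.finrank_map_eq (bE d).equivFun (LinearMap.ker f)

lemma surj_iff_toMx (f : ESp d →ₗ[ℂ] FSp s t d) :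
    Surjective (Matrix.mulVecLin (toMx s t d f)) ↔ Surjective f := by
  constructor
  · intro hs y
    obtain ⟨v, hv⟩ := hs ((bF s t d).equivFun y)
    refine ⟨(bE d).equivFun.symm v, ?_⟩
    have := mulVec_toMx s t d f ((bE d).equivFun.symm v)
    rw [LinearEquiv.apply_symm_apply] at this
    rw [Matrix.mulVecLin_apply] at hv
    rw [this] at hv
    exact (bF s t d).equivFun.injective (by rw [hv])
  · intro hs w
    obtain ⟨x, hx⟩ := hs ((bF s t d).equivFun.symm w)
    refine ⟨(bE d).equivFun x, ?_⟩
    rw [Matrix.mulVecLin_apply, mulVec_toMx, hx]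
    exact (bF s t d).equivFun.apply_symm_apply w

/-- star-basis projection matrix witnessing the kernel of a fixed matrix -/
lemma exists_Pm {NR DC : ℕ} (Amat : Matrix (Fin NR) (Fin DC) ℂ) :
    ∃ Pm : Matrix (Fin (finrank ℂ (LinearMap.ker Amat.mulVecLin))) (Fin DC) ℂ,
      ∀ x, Amat *ᵥ x = 0 → Pm *ᵥ x = 0 → x = 0 := by
  classical
  set K := LinearMap.ker Amat.mulVecLin with hK
  let bK := Module.finBasis ℂ K
  refine ⟨Matrix.of (fun j l => star (((bK j : K) : Fin DC → ℂ) l)), ?_⟩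
  intro x hx hPmx
  set xe : K := ⟨x, by rw [hK, LinearMap.mem_ker, Matrix.mulVecLin_apply]; exact hx⟩ with hxe
  have hxsum : x = ∑ j, (bK.repr xe j) • (((bK j : K)) : Fin DC → ℂ) := by
    have h1 := bK.sum_repr xe
    have h2 := congrArg (Subtype.val) h1
    simp only [AddSubmonoidClass.coe_finset_sum, SetLike.val_smul] at h2
    exact h2.symm
  have hzero : star x ⬝ᵥ x = 0 := by
    have hstar : star x = ∑ j, star (bK.repr xe j) • star ((((bK j : K)) : Fin DC → ℂ)) := by
      rw [hxsum]
      rw [star_sum]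
      refine Finset.sum_congr rfl fun j _ => ?_
      rw [star_smul]
    let ψ : (Fin DC → ℂ) →ₗ[ℂ] ℂ :=
      { toFun := fun v => v ⬝ᵥ x
        map_add' := fun u v => add_dotProduct u v x
        map_smul' := fun c v => smul_dotProduct c v x }
    have hψ : star x ⬝ᵥ x = ψ (star x) := rfl
    rw [hψ, hstar, map_sum]
    refine Finset.sum_eq_zero fun j _ => ?_
    rw [_root_.map_smul]
    have hj : ψ (star (((bK j : K)) : Fin DC → ℂ)) = 0 := by
      show star (((bK j : K)) : Fin DC → ℂ) ⬝ᵥ x = 0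
      have := congrFun hPmx j
      simpa [Matrix.mulVec, dotProduct, Pi.star_apply] using this
    rw [hj, smul_zero]
  have := stardot_eq_zero x hzero
  exact this

end QuiverSetup

section Orbits

variable (s t : A → ι) (d : ι → ℕ)

/-- the base-change action on the representation space -/
noncomputable def qAct (g : ∀ i : ι, GL (Fin (d i)) ℂ) (M : FSp s t d) : FSp s t d :=
  fun a => (↑(g (t a)) : Matrix (Fin (d (t a))) (Fin (d (t a))) ℂ) * M a *
    (↑(g (s a))⁻¹ : Matrix (Fin (d (s a))) (Fin (d (s a))) ℂ)

/-- the orbit of `M` under the base-change action -/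
noncomputable def qOrb (M : FSp s t d) : Set (FSp s t d) :=
  {Z | ∃ g : ∀ i : ι, GL (Fin (d i)) ℂ, Z = qAct s t d g M}

lemma qAct_one (M : FSp s t d) : qAct s t d 1 M = M := by
  funext a
  simp [qAct]

lemma qAct_mul (g h : ∀ i : ι, GL (Fin (d i)) ℂ) (M : FSp s t d) :
    qAct s t d g (qAct s t d h M) = qAct s t d (g * h) M := by
  funext a
  simp only [qAct, Pi.mul_apply, Units.val_mul, _root_.mul_inv_rev]
  simp only [Matrix.mul_assoc]

lemma self_mem_qOrb (M : FSp s t d) : M ∈ qOrb s t d M :=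
  ⟨1, (qAct_one s t d M).symm⟩

lemma qOrb_eq_of_mem {M Z : FSp s t d} (h : Z ∈ qOrb s t d M) :
    qOrb s t d Z = qOrb s t d M := by
  obtain ⟨g, rfl⟩ := h
  have hM : M = qAct s t d g⁻¹ (qAct s t d g M) := by
    rw [qAct_mul, inv_mul_cancel, qAct_one]
  ext W
  constructor
  · rintro ⟨k, rfl⟩
    exact ⟨k * g, (qAct_mul s t d k g M)⟩
  · rintro ⟨k, rfl⟩
    refine ⟨k * g⁻¹, ?_⟩
    rw [qAct_mul, mul_assoc, inv_mul_cancel, mul_one]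

end Orbits

section Analysis

set_option linter.unusedSectionVars false

variable (s t : A → ι) (d : ι → ℕ)

lemma GLinv_mul {n : ℕ} (u : GL (Fin n) ℂ) :
    (↑u⁻¹ : Matrix (Fin n) (Fin n) ℂ) * (↑u : Matrix (Fin n) (Fin n) ℂ) = 1 := Units.inv_mul u

lemma GLmul_inv {n : ℕ} (u : GL (Fin n) ℂ) :
    (↑u : Matrix (Fin n) (Fin n) ℂ) * (↑u⁻¹ : Matrix (Fin n) (Fin n) ℂ) = 1 := Units.mul_inv u

lemma matLf_cont (X : FSp s t d) :
    Continuous fun Y : FSp s t d => toMx s t d (quivExtMap s t d d X Y) := by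
  have h1 : Continuous fun Y : FSp s t d =>
      ((toMx s t d).toLinearMap.comp (TY s t d)) Y :=
    LinearMap.continuous_of_finiteDimensional _
  have h2 : (fun Y : FSp s t d => toMx s t d (quivExtMap s t d d X Y))
      = fun Y => ((toMx s t d).toLinearMap.comp (TY s t d)) Y
        - toMx s t d (CXl s t d X) := by
    funext Y
    rw [L_decomp s t d X Y]
    rw [map_sub]
    rfl
  rw [h2]
  exact h1.sub continuous_const

/-- left multiplication by a family of invertible matrices, on `ESp` -/
noncomputable def lmulE (u : ∀ i : ι, GL (Fin (d i)) ℂ) : ESp d →ₗ[ℂ] ESp d where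
  toFun h := fun i => (↑(u i) : Matrix _ _ ℂ) * h i
  map_add' h h' := by funext i; simp [Matrix.mul_add]
  map_smul' c h := by funext i; simp [Matrix.mul_smul]

/-- left multiplication by a family of invertible matrices, on `FSp` -/
noncomputable def lmulF (u : ∀ i : ι, GL (Fin (d i)) ℂ) : FSp s t d →ₗ[ℂ] FSp s t d where
  toFun v := fun a => (↑(u (t a)) : Matrix (Fin (d (t a))) (Fin (d (t a))) ℂ) * v a
  map_add' v v' := by funext a; simp [Matrix.mul_add]
  map_smul' c v := by funext a; simp [Matrix.mul_smul]

lemma lmulE_inj (u : ∀ i : ι, GL (Fin (d i)) ℂ) {h : ESp d} (hz : lmulE d u h = 0) :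
    h = 0 := by
  funext i
  have hthis := congrFun hz i
  simp only [lmulE, LinearMap.coe_mk, AddHom.coe_mk, Pi.zero_apply] at hthis
  show h i = 0
  calc h i = ((↑(u i)⁻¹ : Matrix _ _ ℂ) * ↑(u i)) * h i := by
        rw [GLinv_mul, Matrix.one_mul]
    _ = (↑(u i)⁻¹ : Matrix _ _ ℂ) * ((↑(u i) : Matrix _ _ ℂ) * h i) := by
        rw [Matrix.mul_assoc]
    _ = 0 := by rw [hthis, Matrix.mul_zero]

lemma lmulF_inj (u : ∀ i : ι, GL (Fin (d i)) ℂ) {v : FSp s t d} (hz : lmulF s t d u v = 0) :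
    v = 0 := by
  funext a
  have hthis := congrFun hz a
  simp only [lmulF, LinearMap.coe_mk, AddHom.coe_mk, Pi.zero_apply] at hthis
  show v a = 0
  calc v a = ((↑(u (t a))⁻¹ : Matrix (Fin (d (t a))) (Fin (d (t a))) ℂ)
          * (↑(u (t a)) : Matrix (Fin (d (t a))) (Fin (d (t a))) ℂ)) * v a := by
        rw [GLinv_mul, Matrix.one_mul]
    _ = (↑(u (t a))⁻¹ : Matrix (Fin (d (t a))) (Fin (d (t a))) ℂ)
          * ((↑(u (t a)) : Matrix (Fin (d (t a))) (Fin (d (t a))) ℂ) * v a) := by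
        rw [Matrix.mul_assoc]
    _ = 0 := by rw [hthis, Matrix.mul_zero]

lemma quiv_comp_eq (M : FSp s t d) (g : ∀ i : ι, GL (Fin (d i)) ℂ) :
    (quivExtMap s t d d M (qAct s t d g M)).comp (lmulE d g)
      = (lmulF s t d g).comp (quivExtMap s t d d M M) := by
  apply LinearMap.ext; intro h; funext a
  simp only [LinearMap.coe_comp, Function.comp_apply, quivExtMap_apply, lmulE, lmulF, qAct,
    LinearMap.coe_mk, AddHom.coe_mk, Matrix.mul_sub, Matrix.mul_assoc]
  congr 2
  rw [← Matrix.mul_assoc ((↑(g (s a))⁻¹ : Matrix (Fin (d (s a))) (Fin (d (s a))) ℂ))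
    ((↑(g (s a)) : Matrix (Fin (d (s a))) (Fin (d (s a))) ℂ)) (h (s a)),
    GLinv_mul, Matrix.one_mul]

lemma finrank_ker_qAct (M : FSp s t d) (g : ∀ i : ι, GL (Fin (d i)) ℂ) :
    finrank ℂ (LinearMap.ker (quivExtMap s t d d M (qAct s t d g M))) =
      finrank ℂ (LinearMap.ker (quivExtMap s t d d M M)) := by
  have key : ∀ (u : ∀ i : ι, GL (Fin (d i)) ℂ) (x : ESp d),
      x ∈ LinearMap.ker (quivExtMap s t d d M M) →
      lmulE d u x ∈ LinearMap.ker (quivExtMap s t d d M (qAct s t d u M)) := by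
    intro u x hx
    rw [LinearMap.mem_ker]
    have := congrArg (fun (f : ESp d →ₗ[ℂ] FSp s t d) => f x) (quiv_comp_eq s t d M u)
    simp only [LinearMap.coe_comp, Function.comp_apply] at this
    rw [this, LinearMap.mem_ker.1 hx, map_zero]
  have key2 : ∀ (x : ESp d),
      x ∈ LinearMap.ker (quivExtMap s t d d M (qAct s t d g M)) →
      lmulE d g⁻¹ x ∈ LinearMap.ker (quivExtMap s t d d M M) := by
    intro x hx
    rw [LinearMap.mem_ker]
    have hgg : lmulE d g (lmulE d g⁻¹ x) = x := by
      funext i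
      simp only [lmulE, LinearMap.coe_mk, AddHom.coe_mk, Pi.inv_apply]
      rw [← Matrix.mul_assoc, GLmul_inv, Matrix.one_mul]
    have := congrArg (fun (f : ESp d →ₗ[ℂ] FSp s t d) => f (lmulE d g⁻¹ x))
      (quiv_comp_eq s t d M g)
    simp only [LinearMap.coe_comp, Function.comp_apply] at this
    rw [hgg] at this
    rw [LinearMap.mem_ker.1 hx] at this
    apply lmulF_inj s t d g
    exact this.symm
  apply le_antisymm
  · exact LinearMap.finrank_le_finrank_of_injective
      (f := (lmulE d g⁻¹).restrict key2)
      (fun x y hxy => Subtype.ext (by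
        have h0 : lmulE d g⁻¹ (x.1 - y.1) = 0 := by
          rw [map_sub, sub_eq_zero]
          exact congrArg Subtype.val hxy
        have := lmulE_inj d g⁻¹ h0
        exact sub_eq_zero.1 this))
  · exact LinearMap.finrank_le_finrank_of_injective
      (f := (lmulE d g).restrict (key g))
      (fun x y hxy => Subtype.ext (by
        have h0 : lmulE d g (x.1 - y.1) = 0 := by
          rw [map_sub, sub_eq_zero]
          exact congrArg Subtype.val hxy
        have := lmulE_inj d g h0
        exact sub_eq_zero.1 this))

end Analysis

section Analysis2

set_option linter.unusedSectionVars false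

variable (s t : A → ι) (d : ι → ℕ)

lemma dim_ge_of_dense {M : FSp s t d} (hdense : Dense (qOrb s t d M)) (W : FSp s t d) :
    finrank ℂ (LinearMap.ker (quivExtMap s t d d M M)) ≤
      finrank ℂ (LinearMap.ker (quivExtMap s t d d M W)) := by
  classical
  obtain ⟨Pm, hPm⟩ := exists_Pm (toMx s t d (quivExtMap s t d d M W))
  set AW : FSp s t d → Matrix (Fin (finrank ℂ (FSp s t d))) (Fin (finrank ℂ (ESp d))) ℂ :=
    fun W' => toMx s t d (quivExtMap s t d d M W') with hAW
  set B := fun W' => Matrix.fromRows (AW W') Pm with hB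
  have hBcont : Continuous B := by
    apply continuous_matrix
    rintro (i | i) j
    · exact (matLf_cont s t d M).matrix_elem i j
    · exact continuous_const
  set N := fun W' => (B W')ᴴ * (B W') with hN
  have hNdet : Continuous fun W' => (N W').det :=
    ((hBcont.matrix_conjTranspose).matrix_mul hBcont).matrix_det
  have hBzero : ∀ W' x, B W' *ᵥ x = 0 ↔ (AW W' *ᵥ x = 0 ∧ Pm *ᵥ x = 0) := by
    intro W' x
    constructor
    · intro hz
      rw [hB] at hz
      simp only [Matrix.fromRows_mulVec] at hz
      exact ⟨funext fun i => congrFun hz (Sum.inl i), funext fun i => congrFun hz (Sum.inr i)⟩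
    · rintro ⟨h1, h2⟩
      rw [hB]
      simp only [Matrix.fromRows_mulVec, h1, h2]
      funext i; cases i <;> rfl
  have hdetW : (N W).det ≠ 0 := by
    apply gram_det_ne_zero
    intro x hx
    exact hPm x ((hBzero W x).1 hx).1 ((hBzero W x).1 hx).2
  have hUopen : IsOpen {W' | (N W').det ≠ 0} := isOpen_compl_singleton.preimage hNdet
  obtain ⟨Z, hZorb, hZU⟩ := hdense.exists_mem_open hUopen ⟨W, hdetW⟩
  have hinj0 : ∀ x, AW Z *ᵥ x = 0 → Pm *ᵥ x = 0 → x = 0 := by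
    intro x h1 h2
    have hBx : B Z *ᵥ x = 0 := (hBzero Z x).2 ⟨h1, h2⟩
    have hNx : N Z *ᵥ x = 0 := by
      rw [hN]
      simp only
      rw [← Matrix.mulVec_mulVec, hBx, Matrix.mulVec_zero]
    exact det_ne_zero_mulVec_inj hZU (by rw [hNx, Matrix.mulVec_zero])
  set φ : LinearMap.ker ((AW Z).mulVecLin) →ₗ[ℂ]
      (Fin (finrank ℂ (LinearMap.ker ((toMx s t d (quivExtMap s t d d M W)).mulVecLin))) → ℂ) :=
    (Matrix.mulVecLin Pm).comp (LinearMap.ker ((AW Z).mulVecLin)).subtype with hφ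
  have hφinj : Function.Injective φ := by
    rw [← LinearMap.ker_eq_bot, LinearMap.ker_eq_bot']
    rintro ⟨x, hx⟩ hφx
    have hx1 : AW Z *ᵥ x = 0 := by
      simpa [Matrix.mulVecLin_apply] using (LinearMap.mem_ker.1 hx)
    have hx2 : Pm *ᵥ x = 0 := by
      simpa [hφ, Matrix.mulVecLin_apply] using hφx
    exact Subtype.ext (hinj0 x hx1 hx2)
  have hle := LinearMap.finrank_le_finrank_of_injective hφinj
  rw [Module.finrank_pi, Fintype.card_fin] at hle
  obtain ⟨g, rfl⟩ := hZorb
  calc finrank ℂ (LinearMap.ker (quivExtMap s t d d M M))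
      = finrank ℂ (LinearMap.ker (quivExtMap s t d d M (qAct s t d g M))) :=
        (finrank_ker_qAct s t d M g).symm
    _ = finrank ℂ (LinearMap.ker ((AW (qAct s t d g M)).mulVecLin)) :=
        (finrank_ker_toMx s t d _).symm
    _ ≤ finrank ℂ (LinearMap.ker ((toMx s t d (quivExtMap s t d d M W)).mulVecLin)) := hle
    _ = finrank ℂ (LinearMap.ker (quivExtMap s t d d M W)) := finrank_ker_toMx s t d _

lemma quivExtMap_one (V : FSp s t d) : quivExtMap s t d d V V 1 = 0 := by
  funext a
  rw [quivExtMap_apply]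
  show V a * 1 - 1 * V a = 0
  rw [Matrix.mul_one, Matrix.one_mul, sub_self]

lemma dim_ge_rigid (V : FSp s t d) (hs : Surjective (quivExtMap s t d d V V)) (W : FSp s t d) :
    finrank ℂ (LinearMap.ker (quivExtMap s t d d V V)) ≤
      finrank ℂ (LinearMap.ker (quivExtMap s t d d V W)) := by
  have h1 := LinearMap.finrank_range_add_finrank_ker (quivExtMap s t d d V V)
  have h2 := LinearMap.finrank_range_add_finrank_ker (quivExtMap s t d d V W)
  have hVtop : finrank ℂ (LinearMap.range (quivExtMap s t d d V V)) =
      finrank ℂ (FSp s t d) := by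
    rw [LinearMap.range_eq_top.2 hs]
    exact finrank_top ℂ _
  have h3 : finrank ℂ (LinearMap.range (quivExtMap s t d d V W)) ≤ finrank ℂ (FSp s t d) :=
    Submodule.finrank_le _
  rw [hVtop] at h1
  omega

lemma orbit_nbhd (V : FSp s t d) (hs : Surjective (quivExtMap s t d d V V)) :
    ∃ U : Set (FSp s t d), IsOpen U ∧ V ∈ U ∧ U ⊆ qOrb s t d V := by
  classical
  obtain ⟨Pm, hPm0⟩ := exists_Pm (toMx s t d (quivExtMap s t d d V V))
  have hdim : ∀ W, finrank ℂ (LinearMap.ker ((toMx s t d (quivExtMap s t d d V V)).mulVecLin)) ≤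
      finrank ℂ (LinearMap.ker ((toMx s t d (quivExtMap s t d d V W)).mulVecLin)) := by
    intro W
    rw [finrank_ker_toMx, finrank_ker_toMx]
    exact dim_ge_rigid s t d V hs W
  have hk₀ : toMx s t d (quivExtMap s t d d V V) *ᵥ ((bE d).equivFun 1) = 0 := by
    rw [mulVec_toMx, quivExtMap_one, map_zero]
  obtain ⟨U₀, hU₀open, hU₀mem, h, hhcont, hh0, hhker⟩ :=
    core_kernel_family (fun W => toMx s t d (quivExtMap s t d d V W)) (matLf_cont s t d V)
      V ((bE d).equivFun 1) hk₀ Pm hPm0 hdim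
  set Hf : FSp s t d → ESp d := fun W => (bE d).equivFun.symm (h W) with hHf
  have hHfcont : ContinuousOn Hf U₀ :=
    (LinearMap.continuous_of_finiteDimensional
      ((bE d).equivFun.symm.toLinearMap)).comp_continuousOn hhcont
  have hHfV : Hf V = 1 := by
    rw [hHf]
    simp only
    rw [hh0]
    exact (bE d).equivFun.symm_apply_apply 1
  have hrel : ∀ W ∈ U₀, quivExtMap s t d d V W (Hf W) = 0 := by
    intro W hW
    rw [zero_iff_toMx, hHf]
    simp only
    rw [(bE d).equivFun.apply_symm_apply]
    exact hhker W hW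
  set U : Set (FSp s t d) :=
    U₀ ∩ ⋂ i : ι, (U₀ ∩ (fun W => ((Hf W) i).det) ⁻¹' ({(0:ℂ)}ᶜ)) with hU
  have hdetcont : ∀ i : ι, ContinuousOn (fun W => ((Hf W) i).det) U₀ := by
    intro i
    exact ((continuous_id.matrix_det).comp (continuous_apply i)).comp_continuousOn hHfcont
  have hUopen : IsOpen U := by
    apply hU₀open.inter
    apply isOpen_iInter_of_finite
    intro i
    exact (hdetcont i).isOpen_inter_preimage hU₀open isOpen_compl_singleton
  have hUmem : V ∈ U := by
    rw [hU]
    refine ⟨hU₀mem, ?_⟩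
    rw [Set.mem_iInter]
    intro i
    refine ⟨hU₀mem, ?_⟩
    simp only [Set.mem_preimage, Set.mem_compl_iff, Set.mem_singleton_iff, hHfV]
    rw [Pi.one_apply, Matrix.det_one]
    exact one_ne_zero
  refine ⟨U, hUopen, hUmem, ?_⟩
  intro W hW
  have hWU₀ : W ∈ U₀ := hW.1
  have hdets : ∀ i : ι, ((Hf W) i).det ≠ 0 := by
    intro i
    have := (Set.mem_iInter.1 hW.2) i
    exact this.2
  set g : ∀ i : ι, GL (Fin (d i)) ℂ :=
    fun i => Matrix.GeneralLinearGroup.mkOfDetNeZero ((Hf W) i) (hdets i) with hg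
  have hcoe : ∀ i, (↑(g i) : Matrix (Fin (d i)) (Fin (d i)) ℂ) = (Hf W) i := fun i => rfl
  have hcoeinv : ∀ i, (↑((g i)⁻¹) : Matrix (Fin (d i)) (Fin (d i)) ℂ) = ((Hf W) i)⁻¹ := by
    intro i
    rw [Matrix.coe_units_inv, hcoe]
  refine ⟨g, ?_⟩
  funext a
  show W a = (↑(g (t a)) : Matrix (Fin (d (t a))) (Fin (d (t a))) ℂ) * V a *
    (↑(g (s a))⁻¹ : Matrix (Fin (d (s a))) (Fin (d (s a))) ℂ)
  rw [hcoe, hcoeinv]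
  have h0 := congrFun (hrel W hWU₀) a
  rw [quivExtMap_apply] at h0
  rw [Pi.zero_apply] at h0
  have hrelW' : (Hf W) (t a) * V a = W a * (Hf W) (s a) := (sub_eq_zero.1 h0).symm
  rw [hrelW', Matrix.mul_assoc,
    Matrix.mul_nonsing_inv _ (isUnit_iff_ne_zero.2 (hdets (s a))), Matrix.mul_one]

end Analysis2

section Final

set_option linter.unusedSectionVars false

variable (s t : A → ι) (d : ι → ℕ)

/-- `Z ↦ toMx (quivExtMap Z Z)` as a linear map -/
noncomputable def matQl : FSp s t d →ₗ[ℂ]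
    Matrix (Fin (finrank ℂ (FSp s t d))) (Fin (finrank ℂ (ESp d))) ℂ :=
  (toMx s t d).toLinearMap.comp (TQ s t d)

lemma matQl_apply (Z : FSp s t d) :
    matQl s t d Z = toMx s t d (quivExtMap s t d d Z Z) := rfl

lemma surj_of_dense {M : FSp s t d} (hdense : Dense (qOrb s t d M)) :
    Surjective (quivExtMap s t d d M M) := by
  classical
  rw [← LinearMap.range_eq_top]
  rw [Submodule.eq_top_iff']
  intro c
  obtain ⟨Pm, hPm0⟩ := exists_Pm (toMx s t d (quivExtMap s t d d M M))
  set Afam : ℂ → Matrix (Fin (finrank ℂ (FSp s t d))) (Fin (finrank ℂ (ESp d))) ℂ :=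
    fun τ => toMx s t d (quivExtMap s t d d M (M + τ • c)) with hAfam
  have hline : Continuous fun τ : ℂ => M + τ • c :=
    continuous_const.add (continuous_id.smul continuous_const)
  have hAcont : Continuous Afam := (matLf_cont s t d M).comp hline
  have hA0 : Afam 0 = toMx s t d (quivExtMap s t d d M M) := by
    rw [hAfam]
    simp only
    rw [show M + (0:ℂ) • c = M by rw [zero_smul, add_zero]]
  have hk₀ : Afam 0 *ᵥ ((bE d).equivFun 1) = 0 := by
    rw [hA0, mulVec_toMx, quivExtMap_one, map_zero]
  have hPm : ∀ x, Afam 0 *ᵥ x = 0 → Pm *ᵥ x = 0 → x = 0 := by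
    intro x h1 h2
    exact hPm0 x (by rwa [hA0] at h1) h2
  have hdim : ∀ τ : ℂ,
      finrank ℂ (LinearMap.ker ((toMx s t d (quivExtMap s t d d M M)).mulVecLin)) ≤
      finrank ℂ (LinearMap.ker ((Afam τ).mulVecLin)) := by
    intro τ
    rw [hAfam]
    simp only
    rw [finrank_ker_toMx, finrank_ker_toMx]
    exact dim_ge_of_dense s t d hdense _
  obtain ⟨U, hUopen, hU0, h, hhcont, hh0, hhker⟩ :=
    core_kernel_family Afam hAcont 0 ((bE d).equivFun 1) hk₀ Pm hPm
      hdim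
  set Hf : ℂ → ESp d := fun τ => (bE d).equivFun.symm (h τ) with hHf
  have hHfcont : ContinuousOn Hf U :=
    (LinearMap.continuous_of_finiteDimensional
      ((bE d).equivFun.symm.toLinearMap)).comp_continuousOn hhcont
  have hHf0 : Hf 0 = 1 := by
    rw [hHf]
    simp only
    rw [hh0]
    exact (bE d).equivFun.symm_apply_apply 1
  have hrel : ∀ τ ∈ U, quivExtMap s t d d M (M + τ • c) (Hf τ) = 0 := by
    intro τ hτ
    rw [zero_iff_toMx, hHf]
    simp only
    rw [(bE d).equivFun.apply_symm_apply]
    exact hhker τ hτ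
  set mulC : ESp d →ₗ[ℂ] FSp s t d :=
    { toFun := fun H => fun a => c a * H (s a)
      map_add' := fun H H' => by funext a; simp [Matrix.mul_add]
      map_smul' := fun r H => by funext a; simp [Matrix.mul_smul] } with hmulC
  have hdecomp : ∀ (τ : ℂ) (H : ESp d), quivExtMap s t d d M (M + τ • c) H
      = quivExtMap s t d d M M H + τ • (mulC H) := by
    intro τ H
    funext a
    simp only [quivExtMap_apply, Pi.add_apply, Pi.smul_apply, hmulC, LinearMap.coe_mk,
      AddHom.coe_mk, Matrix.add_mul, Matrix.smul_mul]
    abel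
  have hmem : ∀ τ ∈ U, τ ≠ 0 →
      mulC (Hf τ) ∈ LinearMap.range (quivExtMap s t d d M M) := by
    intro τ hτ hτ0
    refine ⟨(-τ⁻¹) • Hf τ, ?_⟩
    rw [_root_.map_smul]
    have h1 : quivExtMap s t d d M M (Hf τ) + τ • (mulC (Hf τ)) = 0 := by
      rw [← hdecomp]
      exact hrel τ hτ
    have h2 : quivExtMap s t d d M M (Hf τ) = -(τ • mulC (Hf τ)) :=
      eq_neg_of_add_eq_zero_left h1
    rw [h2, smul_neg, smul_smul, neg_mul, inv_mul_cancel₀ hτ0, neg_smul, one_smul, neg_neg]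
  have hclosed : IsClosed ((LinearMap.range (quivExtMap s t d d M M) : Set (FSp s t d))) :=
    Submodule.closed_of_finiteDimensional _
  have hvcont : ContinuousOn (fun τ => mulC (Hf τ)) U :=
    (LinearMap.continuous_of_finiteDimensional mulC).comp_continuousOn hHfcont
  have hUnhds : U ∈ nhds (0:ℂ) := hUopen.mem_nhds hU0
  have hv0 : mulC (Hf 0) = c := by
    rw [hHf0]
    funext a
    show c a * (1 : ESp d) (s a) = c a
    rw [Pi.one_apply, Matrix.mul_one]
  have htendU : Filter.Tendsto (fun τ => mulC (Hf τ)) (nhdsWithin 0 U) (nhds c) := by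
    have h1 := (hvcont 0 hU0).tendsto
    rwa [hv0] at h1
  have htend : Filter.Tendsto (fun τ => mulC (Hf τ)) (nhdsWithin 0 (U \ {0})) (nhds c) :=
    htendU.mono_left (nhdsWithin_mono 0 Set.diff_subset)
  have hnebot : (nhdsWithin (0:ℂ) (U \ {0})).NeBot := by
    have heq : U \ {0} = U ∩ {(0:ℂ)}ᶜ := Set.diff_eq U {0}
    rw [heq]
    rw [nhdsWithin_inter_of_mem (mem_nhdsWithin_of_mem_nhds hUnhds)]
    exact Filter.NeBot.mono inferInstance (le_refl _)
  have hmemc : c ∈ closure ((LinearMap.range (quivExtMap s t d d M M) : Set (FSp s t d))) := by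
    apply mem_closure_of_tendsto htend
    filter_upwards [self_mem_nhdsWithin] with τ hτ
    exact hmem τ hτ.1 (by simpa using hτ.2)
  rw [hclosed.closure_eq] at hmemc
  exact hmemc

lemma exists_rigid_near {M : FSp s t d} (hs : Surjective (quivExtMap s t d d M M))
    {U₁ : Set (FSp s t d)} (hU₁ : IsOpen U₁) {T : FSp s t d} (hT : T ∈ U₁) :
    ∃ W ∈ U₁, Surjective (quivExtMap s t d d W W) := by
  classical
  have hB0surj : Surjective ((matQl s t d M).mulVecLin) := by
    rw [matQl_apply]
    exact (surj_iff_toMx s t d _).2 hs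
  have hdet0 : ((matQl s t d M) * (matQl s t d M)ᴴ).det ≠ 0 :=
    surj_gram_det_ne_zero _ hB0surj
  set p := detPoly ((matQl s t d T) * (matQl s t d M)ᴴ)
    ((matQl s t d (M - T)) * (matQl s t d M)ᴴ) with hp
  have heval : ∀ τ : ℂ, p.eval τ = ((matQl s t d (T + τ • (M - T))) * (matQl s t d M)ᴴ).det := by
    intro τ
    rw [hp, detPoly_eval]
    rw [map_add, _root_.map_smul, Matrix.add_mul, Matrix.smul_mul]
  have hp1 : p.eval 1 ≠ 0 := by
    rw [heval]
    rw [show T + (1:ℂ) • (M - T) = M by rw [one_smul]; abel]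
    exact hdet0
  have hpne : p ≠ 0 := fun h => hp1 (by rw [h]; simp)
  have hroots : {τ : ℂ | p.IsRoot τ}.Finite := Polynomial.finite_setOf_isRoot hpne
  set V := {τ : ℂ | T + τ • (M - T) ∈ U₁} with hV
  have hVopen : IsOpen V :=
    hU₁.preimage (continuous_const.add (continuous_id.smul continuous_const))
  have hV0 : (0:ℂ) ∈ V := by
    rw [hV]
    show T + (0:ℂ) • (M - T) ∈ U₁
    rw [zero_smul, add_zero]
    exact hT
  -- find τ ∈ V avoiding the roots
  have hF' : IsClosed ({τ : ℂ | p.IsRoot τ} \ {0}) := (hroots.diff).isClosed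
  have hN : V ∩ ({τ : ℂ | p.IsRoot τ} \ {0})ᶜ ∈ nhds (0:ℂ) := by
    apply Filter.inter_mem (hVopen.mem_nhds hV0)
    apply hF'.isOpen_compl.mem_nhds
    simp
  have hnonempty : ((V ∩ ({τ : ℂ | p.IsRoot τ} \ {0})ᶜ) ∩ {(0:ℂ)}ᶜ).Nonempty := by
    have : (V ∩ ({τ : ℂ | p.IsRoot τ} \ {0})ᶜ) ∩ {(0:ℂ)}ᶜ ∈ nhdsWithin (0:ℂ) {(0:ℂ)}ᶜ :=
      Filter.inter_mem (mem_nhdsWithin_of_mem_nhds hN) self_mem_nhdsWithin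
    exact Filter.nonempty_of_mem this
  obtain ⟨τ, ⟨hτV, hτF⟩, hτ0⟩ := hnonempty
  have hτ0' : τ ≠ 0 := by simpa using hτ0
  have hτnotroot : ¬ p.IsRoot τ := by
    intro hcon
    exact hτF ⟨hcon, by simpa using hτ0'⟩
  refine ⟨T + τ • (M - T), hτV, ?_⟩
  rw [← surj_iff_toMx]
  have : (toMx s t d) (quivExtMap s t d d (T + τ • (M - T)) (T + τ • (M - T)))
      = matQl s t d (T + τ • (M - T)) := rfl
  rw [this]
  apply surj_of_det_mul_ne_zero _ (matQl s t d M)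
  rw [← heval]
  exact hτnotroot

lemma mem_orb_of_rigid {M W₀ : FSp s t d} (hM : Surjective (quivExtMap s t d d M M))
    (hW : Surjective (quivExtMap s t d d W₀ W₀)) : W₀ ∈ qOrb s t d M := by
  classical
  set Lline : ℂ → FSp s t d := fun τ => M + τ • (W₀ - M) with hLl
  have hLlcont : Continuous Lline := continuous_const.add (continuous_id.smul continuous_const)
  have hLl0 : Lline 0 = M := by rw [hLl]; simp only; rw [zero_smul, add_zero]
  have hLl1 : Lline 1 = W₀ := by rw [hLl]; simp only; rw [one_smul]; abel
  have hmat : ∀ τ, matQl s t d (Lline τ)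
      = matQl s t d M + τ • matQl s t d (W₀ - M) := by
    intro τ
    rw [hLl]
    simp only
    rw [map_add, _root_.map_smul]
  have hdet0 : ((matQl s t d M) * (matQl s t d M)ᴴ).det ≠ 0 :=
    surj_gram_det_ne_zero _ (by rw [matQl_apply]; exact (surj_iff_toMx s t d _).2 hM)
  have hdet1 : ((matQl s t d W₀) * (matQl s t d W₀)ᴴ).det ≠ 0 :=
    surj_gram_det_ne_zero _ (by rw [matQl_apply]; exact (surj_iff_toMx s t d _).2 hW)
  set p0 := detPoly ((matQl s t d M) * (matQl s t d M)ᴴ)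
    ((matQl s t d (W₀ - M)) * (matQl s t d M)ᴴ) with hp0
  set p1 := detPoly ((matQl s t d M) * (matQl s t d W₀)ᴴ)
    ((matQl s t d (W₀ - M)) * (matQl s t d W₀)ᴴ) with hp1
  have heval0 : ∀ τ, p0.eval τ = ((matQl s t d (Lline τ)) * (matQl s t d M)ᴴ).det := by
    intro τ
    rw [hp0, detPoly_eval, hmat, Matrix.add_mul, Matrix.smul_mul]
  have heval1 : ∀ τ, p1.eval τ = ((matQl s t d (Lline τ)) * (matQl s t d W₀)ᴴ).det := by
    intro τ
    rw [hp1, detPoly_eval, hmat, Matrix.add_mul, Matrix.smul_mul]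
  have hp0ne : p0 ≠ 0 := by
    intro h
    have := heval0 0
    rw [h] at this
    simp only [Polynomial.eval_zero] at this
    rw [hLl0] at this
    exact hdet0 this.symm
  set Λ := {τ : ℂ | p0.eval τ ≠ 0} ∪ {τ : ℂ | p1.eval τ ≠ 0} with hΛ
  have hΛopen : IsOpen Λ :=
    (isOpen_compl_singleton.preimage p0.continuous).union
      (isOpen_compl_singleton.preimage p1.continuous)
  have h0Λ : (0:ℂ) ∈ Λ := by
    left
    show p0.eval 0 ≠ 0
    rw [heval0, hLl0]
    exact hdet0
  have h1Λ : (1:ℂ) ∈ Λ := by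
    right
    show p1.eval 1 ≠ 0
    rw [heval1, hLl1]
    exact hdet1
  have hrigid : ∀ τ ∈ Λ, Surjective (quivExtMap s t d d (Lline τ) (Lline τ)) := by
    intro τ hτ
    rw [← surj_iff_toMx]
    have hid : (toMx s t d) (quivExtMap s t d d (Lline τ) (Lline τ)) = matQl s t d (Lline τ) :=
      rfl
    rw [hid]
    rcases hτ with hτ | hτ
    · apply surj_of_det_mul_ne_zero _ (matQl s t d M)
      rw [← heval0]
      exact hτ
    · apply surj_of_det_mul_ne_zero _ (matQl s t d W₀)
      rw [← heval1]
      exact hτ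
  have hΛconn : IsPreconnected Λ := by
    have hsub : Λᶜ ⊆ {τ : ℂ | p0.IsRoot τ} := by
      intro τ hτ
      rw [hΛ] at hτ
      simp only [Set.mem_union, Set.mem_setOf_eq, not_or, not_not, Set.mem_compl_iff] at hτ
      exact hτ.1
    have hcount : (Λᶜ).Countable :=
      ((Polynomial.finite_setOf_isRoot hp0ne).subset hsub).countable
    have hpath : IsPathConnected ((Λᶜ)ᶜ) := by
      apply hcount.isPathConnected_compl_of_one_lt_rank
      rw [Complex.rank_real_complex]
      norm_num
    rw [compl_compl] at hpath
    exact hpath.isConnected.isPreconnected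
  set As := {τ : ℂ | τ ∈ Λ ∧ Lline τ ∈ qOrb s t d M} with hAs
  set Bs := {τ : ℂ | τ ∈ Λ ∧ Lline τ ∉ qOrb s t d M} with hBs
  have hAopen : IsOpen As := by
    rw [isOpen_iff_forall_mem_open]
    rintro τ₀ ⟨hτΛ, hτOrb⟩
    obtain ⟨U, hUo, hUmem, hUsub⟩ := orbit_nbhd s t d (Lline τ₀) (hrigid τ₀ hτΛ)
    have horb : qOrb s t d (Lline τ₀) = qOrb s t d M := qOrb_eq_of_mem s t d hτOrb
    refine ⟨Λ ∩ Lline ⁻¹' U, ?_, hΛopen.inter (hUo.preimage hLlcont), hτΛ, hUmem⟩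
    rintro τ ⟨h1, h2⟩
    exact ⟨h1, horb ▸ hUsub h2⟩
  have hBopen : IsOpen Bs := by
    rw [isOpen_iff_forall_mem_open]
    rintro τ₀ ⟨hτΛ, hτOrb⟩
    obtain ⟨U, hUo, hUmem, hUsub⟩ := orbit_nbhd s t d (Lline τ₀) (hrigid τ₀ hτΛ)
    refine ⟨Λ ∩ Lline ⁻¹' U, ?_, hΛopen.inter (hUo.preimage hLlcont), hτΛ, hUmem⟩
    rintro τ ⟨h1, h2⟩
    refine ⟨h1, fun hcon => hτOrb ?_⟩
    have h3 : Lline τ ∈ qOrb s t d (Lline τ₀) := hUsub h2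
    have h4 : qOrb s t d (Lline τ) = qOrb s t d (Lline τ₀) := qOrb_eq_of_mem s t d h3
    have h5 : qOrb s t d (Lline τ) = qOrb s t d M := qOrb_eq_of_mem s t d hcon
    rw [← h5, h4]
    exact self_mem_qOrb s t d _
  by_contra hW₀orb
  have h0A : (0:ℂ) ∈ As := ⟨h0Λ, by rw [hLl0]; exact self_mem_qOrb s t d M⟩
  have h1B : (1:ℂ) ∈ Bs := ⟨h1Λ, by rwa [hLl1]⟩
  have hcover : Λ ⊆ As ∪ Bs := by
    intro τ hτ
    by_cases hc : Lline τ ∈ qOrb s t d M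
    · exact Or.inl ⟨hτ, hc⟩
    · exact Or.inr ⟨hτ, hc⟩
  obtain ⟨τ, hτΛ, hτA, hτB⟩ :=
    hΛconn As Bs hAopen hBopen hcover ⟨0, h0Λ, h0A⟩ ⟨1, h1Λ, h1B⟩
  exact hτB.2 hτA.2

lemma ext_zero_iff_surj (M : FSp s t d) :
    quivDimExt s t d d M M = 0 ↔ Surjective (quivExtMap s t d d M M) := by
  rw [quivDimExt, ← LinearMap.range_eq_top]
  constructor
  · intro h
    exact Submodule.Quotient.subsingleton_iff.1 (Module.finrank_zero_iff.1 h)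
  · intro h
    haveI : Subsingleton
        ((∀ a : A, Matrix (Fin (d (t a))) (Fin (d (s a))) ℂ) ⧸
          LinearMap.range (quivExtMap s t d d M M)) :=
      Submodule.Quotient.subsingleton_iff.2 h
    exact Module.finrank_zero_iff.2 this

end Final


/-- The orbit of `M` is dense in the representation variety iff `Ext¹(M,M) = 0`. -/
theorem orbit_dense_iff_ext_self_zero
    (s t : A → ι)
    (hacyclic : ∀ i : ι, ¬ Relation.TransGen (fun i j : ι => ∃ a : A, s a = i ∧ t a = j) i i)
    (d : ι → ℕ)
    (M : ∀ a : A, Matrix (Fin (d (t a))) (Fin (d (s a))) ℂ) :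
    Dense {Z : ∀ a : A, Matrix (Fin (d (t a))) (Fin (d (s a))) ℂ |
        ∃ g : ∀ i : ι, GL (Fin (d i)) ℂ,
          Z = fun a => (↑(g (t a)) : Matrix (Fin (d (t a))) (Fin (d (t a))) ℂ) * M a *
            (↑(g (s a))⁻¹ : Matrix (Fin (d (s a))) (Fin (d (s a))) ℂ)} ↔
      quivDimExt s t d d M M = 0 := by
  have hset : {Z : ∀ a : A, Matrix (Fin (d (t a))) (Fin (d (s a))) ℂ |
      ∃ g : ∀ i : ι, GL (Fin (d i)) ℂ,
        Z = fun a => (↑(g (t a)) : Matrix (Fin (d (t a))) (Fin (d (t a))) ℂ) * M a *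
            (↑(g (s a))⁻¹ : Matrix (Fin (d (s a))) (Fin (d (s a))) ℂ)}
      = qOrb s t d M := rfl
  rw [hset, ext_zero_iff_surj s t d M]
  constructor
  · exact fun hdense => surj_of_dense s t d hdense
  · intro hs
    rw [dense_iff_inter_open]
    intro U hU hUne
    obtain ⟨T, hT⟩ := hUne
    obtain ⟨W, hWU, hWrig⟩ := exists_rigid_near s t d hs hU hT
    exact ⟨W, hWU, mem_orb_of_rigid s t d hs hWrig⟩
end
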